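/- arXiv:2403.05947 — 7 statements merged into one kernel-verified Lean document; each statement's English description precedes it below -/
import Mathlib

section
/- Let a, b > 0 with b ≤ a, let 0 ≤ x < b/2 and y ≥ 0, and set R = [−a/2, a/2] × [−b/2, b/2] and R̃ = [−a/2 + x, a/2 − x] × [−b/2 − y, b/2 + y]. Then ∫_{R̃ △ R} d_∞(z, ∂R) dz = y²(a − 2x) + (4/3)x³ + x²(b − 2x). -/
open MeasureTheory Set

/-- `d_∞(z, ∂F)`: sup-norm distance from `z` to the topological boundary of `F`
(the product distance on `ℝ × ℝ` is the sup distance). -/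
noncomputable def dinfty (z : ℝ × ℝ) (F : Set (ℝ × ℝ)) : ℝ :=
  Metric.infDist z (frontier F)

/-- The rectangle `[-a/2, a/2] × [-b/2, b/2]`. -/
def rect (a b : ℝ) : Set (ℝ × ℝ) :=
  Set.Icc (-(a / 2)) (a / 2) ×ˢ Set.Icc (-(b / 2)) (b / 2)

section Helpers
open Metric

lemma my_le_infDist {α : Type*} [MetricSpace α] {s : Set α} {x : α} {c : ℝ}
    (hs : s.Nonempty) (h : ∀ y ∈ s, c ≤ dist x y) : c ≤ infDist x s := by
  by_contra hlt
  push_neg at hlt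
  rcases (infDist_lt_iff hs).1 hlt with ⟨y, hy, hd⟩
  exact absurd (h y hy) (by linarith)

lemma infDist_union_min {α : Type*} [MetricSpace α] {s t : Set α} (x : α)
    (hs : s.Nonempty) (ht : t.Nonempty) :
    infDist x (s ∪ t) = min (infDist x s) (infDist x t) := by
  refine le_antisymm (le_min (infDist_le_infDist_of_subset subset_union_left hs)
    (infDist_le_infDist_of_subset subset_union_right ht)) ?_
  refine my_le_infDist (hs.mono subset_union_left) fun y hy => ?_
  rcases hy with hy | hy
  · exact le_trans (min_le_left _ _) (infDist_le_dist_of_mem hy)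
  · exact le_trans (min_le_right _ _) (infDist_le_dist_of_mem hy)

lemma infDist_prod {s t : Set ℝ} (hs : s.Nonempty) (ht : t.Nonempty) (x y : ℝ) :
    infDist (⟨x, y⟩ : ℝ × ℝ) (s ×ˢ t) = max (infDist x s) (infDist y t) := by
  refine le_antisymm ?_ ?_
  · refine le_of_forall_pos_le_add fun ε hε => ?_
    obtain ⟨u, hu, hdu⟩ := (infDist_lt_iff hs).1
      (lt_add_of_pos_right (infDist x s) hε)
    obtain ⟨v, hv, hdv⟩ := (infDist_lt_iff ht).1
      (lt_add_of_pos_right (infDist y t) hε)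
    refine le_trans (infDist_le_dist_of_mem (show (u,v) ∈ s ×ˢ t from ⟨hu, hv⟩)) ?_
    rw [Prod.dist_eq]
    exact max_le (by linarith [le_max_left (infDist x s) (infDist y t)])
      (by linarith [le_max_right (infDist x s) (infDist y t)])
  · refine my_le_infDist (hs.prod ht) fun w hw => ?_
    rw [Prod.dist_eq]
    exact max_le_max (infDist_le_dist_of_mem hw.1) (infDist_le_dist_of_mem hw.2)

lemma infDist_Icc_real {c d v : ℝ} (h : c ≤ d) :
    infDist v (Icc c d) = max 0 (max (c - v) (v - d)) := by
  refine le_antisymm ?_ ?_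
  · rcases lt_or_ge v c with hv | hv
    · have h1 : infDist v (Icc c d) ≤ c - v := by
        have := infDist_le_dist_of_mem (x := v) (show c ∈ Icc c d from ⟨le_refl c, h⟩)
        rwa [Real.dist_eq, abs_of_nonpos (by linarith : v - c ≤ 0), neg_sub] at this
      exact le_trans h1 (le_max_of_le_right (le_max_left _ _))
    · rcases le_or_gt v d with hv2 | hv2
      · rw [infDist_zero_of_mem (show v ∈ Icc c d from ⟨hv, hv2⟩)]
        exact le_max_left _ _
      · have h1 : infDist v (Icc c d) ≤ v - d := by
          have := infDist_le_dist_of_mem (x := v) (show d ∈ Icc c d from ⟨h, le_refl d⟩)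
          rwa [Real.dist_eq, abs_of_nonneg (by linarith : (0:ℝ) ≤ v - d)] at this
        exact le_trans h1 (le_max_of_le_right (le_max_right _ _))
  · refine my_le_infDist (nonempty_Icc.2 h) fun w hw => ?_
    rw [Real.dist_eq]
    refine max_le (abs_nonneg _) (max_le ?_ ?_)
    · calc c - v ≤ w - v := by linarith [hw.1]
        _ ≤ |v - w| := by rw [abs_sub_comm]; exact le_abs_self _
    · calc v - d ≤ v - w := by linarith [hw.2]
        _ ≤ |v - w| := le_abs_self _

lemma dinfty_eq {a b : ℝ} (ha : 0 < a) (hb : 0 < b) (u v : ℝ) :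
    dinfty (u, v) (rect a b) =
      min (max (max 0 (max (-(a/2) - u) (u - a/2))) (min |v - (-(b/2))| |v - b/2|))
          (max (min |u - (-(a/2))| |u - a/2|) (max 0 (max (-(b/2) - v) (v - b/2)))) := by
  have hIa : (Icc (-(a/2)) (a/2)).Nonempty := nonempty_Icc.2 (by linarith)
  have hIb : (Icc (-(b/2)) (b/2)).Nonempty := nonempty_Icc.2 (by linarith)
  unfold dinfty rect
  rw [frontier_prod_eq, closure_Icc, closure_Icc,
    frontier_Icc (by linarith : -(a/2) ≤ a/2), frontier_Icc (by linarith : -(b/2) ≤ b/2),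
    infDist_union_min _ (hIa.prod (insert_nonempty _ _)) ((insert_nonempty _ _).prod hIb),
    infDist_prod hIa (insert_nonempty _ _), infDist_prod (insert_nonempty _ _) hIb,
    show ({-(b/2), b/2} : Set ℝ) = {-(b/2)} ∪ {b/2} from rfl,
    show ({-(a/2), a/2} : Set ℝ) = {-(a/2)} ∪ {a/2} from rfl,
    infDist_union_min _ (singleton_nonempty _) (singleton_nonempty _),
    infDist_union_min _ (singleton_nonempty _) (singleton_nonempty _),
    infDist_singleton, infDist_singleton, infDist_singleton, infDist_singleton,
    infDist_Icc_real (by linarith : -(a/2) ≤ a/2), infDist_Icc_real (by linarith : -(b/2) ≤ b/2),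
    Real.dist_eq, Real.dist_eq, Real.dist_eq, Real.dist_eq]

lemma dinfty_top {a b u v : ℝ} (ha : 0 < a) (hb : 0 < b)
    (hu1 : -(a/2) ≤ u) (hu2 : u ≤ a/2) (hv : b/2 ≤ v) :
    dinfty (u, v) (rect a b) = v - b/2 := by
  rw [dinfty_eq ha hb,
    abs_of_nonneg (by linarith : (0:ℝ) ≤ v - -(b/2)), abs_of_nonneg (by linarith : (0:ℝ) ≤ v - b/2),
    abs_of_nonneg (by linarith : (0:ℝ) ≤ u - -(a/2)), abs_of_nonpos (by linarith : u - a/2 ≤ 0)]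
  rw [min_eq_right (by linarith : v - b/2 ≤ v - -(b/2)),
    max_eq_left (show max (-(a/2) - u) (u - a/2) ≤ 0 from max_le (by linarith) (by linarith)),
    max_eq_right (by linarith : -(b/2) - v ≤ v - b/2),
    max_eq_right (by linarith : (0:ℝ) ≤ v - b/2),
    min_eq_left (le_max_right _ _)]

lemma dinfty_bot {a b u v : ℝ} (ha : 0 < a) (hb : 0 < b)
    (hu1 : -(a/2) ≤ u) (hu2 : u ≤ a/2) (hv : v ≤ -(b/2)) :
    dinfty (u, v) (rect a b) = -(b/2) - v := by
  rw [dinfty_eq ha hb,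
    abs_of_nonpos (by linarith : v - -(b/2) ≤ 0), abs_of_nonpos (by linarith : v - b/2 ≤ 0),
    abs_of_nonneg (by linarith : (0:ℝ) ≤ u - -(a/2)), abs_of_nonpos (by linarith : u - a/2 ≤ 0)]
  rw [show -(v - -(b/2)) = -(b/2) - v from by ring,
    min_eq_left (by linarith : -(b/2) - v ≤ -(v - b/2)),
    max_eq_left (show max (-(a/2) - u) (u - a/2) ≤ 0 from max_le (by linarith) (by linarith)),
    max_eq_left (by linarith : v - b/2 ≤ -(b/2) - v),
    max_eq_right (by linarith : (0:ℝ) ≤ -(b/2) - v),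
    min_eq_left (le_max_right _ _)]

lemma dinfty_left {a b u v : ℝ} (hb : 0 < b) (hba : b ≤ a)
    (hu1 : -(a/2) ≤ u) (hu2 : u ≤ -(a/2) + b/2) (hv1 : -(b/2) ≤ v) (hv2 : v ≤ b/2) :
    dinfty (u, v) (rect a b) = min (u + a/2) (min (b/2 - v) (b/2 + v)) := by
  rw [dinfty_eq (by linarith) hb,
    abs_of_nonneg (by linarith : (0:ℝ) ≤ v - -(b/2)), abs_of_nonpos (by linarith : v - b/2 ≤ 0),
    abs_of_nonneg (by linarith : (0:ℝ) ≤ u - -(a/2)), abs_of_nonpos (by linarith : u - a/2 ≤ 0)]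
  rw [show v - -(b/2) = b/2 + v from by ring, show -(v - b/2) = b/2 - v from by ring,
    show u - -(a/2) = u + a/2 from by ring, show -(u - a/2) = a/2 - u from by ring,
    max_eq_left (show max (-(a/2) - u) (u - a/2) ≤ 0 from max_le (by linarith) (by linarith)),
    max_eq_left (show max (-(b/2) - v) (v - b/2) ≤ 0 from max_le (by linarith) (by linarith)),
    max_eq_right (show (0:ℝ) ≤ min (b/2 + v) (b/2 - v) from le_min (by linarith) (by linarith)),
    min_eq_left (by linarith : u + a/2 ≤ a/2 - u),
    max_eq_left (by linarith : (0:ℝ) ≤ u + a/2),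
    min_comm (b/2 + v) (b/2 - v), min_comm _ (u + a/2)]

lemma dinfty_right {a b u v : ℝ} (hb : 0 < b) (hba : b ≤ a)
    (hu1 : a/2 - b/2 ≤ u) (hu2 : u ≤ a/2) (hv1 : -(b/2) ≤ v) (hv2 : v ≤ b/2) :
    dinfty (u, v) (rect a b) = min (a/2 - u) (min (b/2 - v) (b/2 + v)) := by
  rw [dinfty_eq (by linarith) hb,
    abs_of_nonneg (by linarith : (0:ℝ) ≤ v - -(b/2)), abs_of_nonpos (by linarith : v - b/2 ≤ 0),
    abs_of_nonneg (by linarith : (0:ℝ) ≤ u - -(a/2)), abs_of_nonpos (by linarith : u - a/2 ≤ 0)]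
  rw [show v - -(b/2) = b/2 + v from by ring, show -(v - b/2) = b/2 - v from by ring,
    show u - -(a/2) = u + a/2 from by ring, show -(u - a/2) = a/2 - u from by ring,
    max_eq_left (show max (-(a/2) - u) (u - a/2) ≤ 0 from max_le (by linarith) (by linarith)),
    max_eq_left (show max (-(b/2) - v) (v - b/2) ≤ 0 from max_le (by linarith) (by linarith)),
    max_eq_right (show (0:ℝ) ≤ min (b/2 + v) (b/2 - v) from le_min (by linarith) (by linarith)),
    min_eq_right (by linarith : a/2 - u ≤ u + a/2),
    max_eq_left (by linarith : (0:ℝ) ≤ a/2 - u),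
    min_comm (b/2 + v) (b/2 - v), min_comm _ (a/2 - u)]

lemma Icc_diff_Icc' {p q r s : ℝ} (h1 : p ≤ r) (h2 : r ≤ s) (h3 : s ≤ q) :
    Icc p q \ Icc r s = Ico p r ∪ Ioc s q := by
  ext w
  simp only [mem_diff, mem_Icc, mem_union, mem_Ico, mem_Ioc, not_and, not_le]
  constructor
  · rintro ⟨⟨h4, h5⟩, h6⟩
    rcases lt_or_ge w r with h7 | h7
    · exact Or.inl ⟨h4, h7⟩
    · exact Or.inr ⟨h6 h7, h5⟩
  · rintro (⟨h4, h5⟩ | ⟨h4, h5⟩)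
    · exact ⟨⟨h4, by linarith⟩, fun h => absurd h (not_le.2 h5)⟩
    · exact ⟨⟨by linarith, h5⟩, fun _ => h4⟩

lemma symmDiff_rect_eq {a b x y : ℝ} (hb : 0 < b) (hba : b ≤ a) (hx0 : 0 ≤ x)
    (hx : x < b/2) (hy : 0 ≤ y) :
    symmDiff (rect (a - 2*x) (b + 2*y)) (rect a b) =
      ((Icc (-(a/2)+x) (a/2-x) ×ˢ Ico (-(b/2)-y) (-(b/2))) ∪
       (Icc (-(a/2)+x) (a/2-x) ×ˢ Ioc (b/2) (b/2+y))) ∪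
      ((Ico (-(a/2)) (-(a/2)+x) ×ˢ Icc (-(b/2)) (b/2)) ∪
       (Ioc (a/2-x) (a/2) ×ˢ Icc (-(b/2)) (b/2))) := by
  rw [Set.symmDiff_def]
  unfold rect
  rw [show -((a-2*x)/2) = -(a/2)+x from by ring, show (a-2*x)/2 = a/2 - x from by ring,
      show -((b+2*y)/2) = -(b/2)-y from by ring, show (b+2*y)/2 = b/2+y from by ring,
      prod_diff_prod, prod_diff_prod,
      show Icc (-(a/2)+x) (a/2-x) \ Icc (-(a/2)) (a/2) = ∅ from
        diff_eq_empty.2 (Icc_subset_Icc (by linarith) (by linarith)),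
      show Icc (-(b/2)) (b/2) \ Icc (-(b/2)-y) (b/2+y) = ∅ from
        diff_eq_empty.2 (Icc_subset_Icc (by linarith) (by linarith)),
      Icc_diff_Icc' (by linarith) (by linarith) (by linarith),
      Icc_diff_Icc' (by linarith) (by linarith) (by linarith),
      empty_prod, prod_empty, union_empty, empty_union, prod_union, union_prod]

lemma inner_min_integral {s c : ℝ} (h0 : 0 ≤ s) (hs : s ≤ c) :
    ∫ v in Icc (-c) c, min s (min (c - v) (c + v)) = s*(2*c) - s^2 := by
  have hi : ∀ p q : ℝ, IntervalIntegrable (fun v => min s (min (c - v) (c + v))) volume p q :=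
    fun p q => (continuous_const.min ((continuous_const.sub continuous_id).min
      (continuous_const.add continuous_id))).intervalIntegrable p q
  rw [MeasureTheory.integral_Icc_eq_integral_Ioc,
      ← intervalIntegral.integral_of_le (by linarith : -c ≤ c),
      ← intervalIntegral.integral_add_adjacent_intervals (hi (-c) (-c+s)) (hi (-c+s) c),
      ← intervalIntegral.integral_add_adjacent_intervals (hi (-c+s) (c-s)) (hi (c-s) c)]
  have e1 : (∫ v in (-c)..(-c+s), min s (min (c - v) (c + v))) = ∫ v in (-c)..(-c+s), (v + c) := by
    apply intervalIntegral.integral_congr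
    intro v hv
    rw [uIcc_of_le (by linarith : -c ≤ -c+s)] at hv
    obtain ⟨h1, h2⟩ := hv
    show min s (min (c - v) (c + v)) = v + c
    rw [min_eq_right (by linarith : c + v ≤ c - v), min_eq_right (by linarith : c + v ≤ s)]
    ring
  have e2 : (∫ v in (-c+s)..(c-s), min s (min (c - v) (c + v))) = ∫ _ in (-c+s)..(c-s), s := by
    apply intervalIntegral.integral_congr
    intro v hv
    rw [uIcc_of_le (by linarith : -c+s ≤ c-s)] at hv
    obtain ⟨h1, h2⟩ := hv
    show min s (min (c - v) (c + v)) = s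
    rw [min_eq_left (le_min (by linarith : s ≤ c - v) (by linarith : s ≤ c + v))]
  have e3 : (∫ v in (c-s)..c, min s (min (c - v) (c + v))) = ∫ v in (c-s)..c, (c - v) := by
    apply intervalIntegral.integral_congr
    intro v hv
    rw [uIcc_of_le (by linarith : c-s ≤ c)] at hv
    obtain ⟨h1, h2⟩ := hv
    show min s (min (c - v) (c + v)) = c - v
    rw [min_eq_left (by linarith : c - v ≤ c + v), min_eq_right (by linarith : c - v ≤ s)]
  rw [e1, e2, e3, intervalIntegral.integral_comp_add_right (fun w => w) c,
      intervalIntegral.integral_comp_sub_left (fun w => w) c,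
      intervalIntegral.integral_const,
      show -c + c = (0:ℝ) from by ring, show -c + s + c = s from by ring,
      show c - c = (0:ℝ) from by ring, show c - (c - s) = s from by ring,
      integral_id]
  simp only [smul_eq_mul]
  ring

lemma poly_int (p x B : ℝ) :
    ∫ u in p..(p+x), ((u - p) * B - (u - p)^2) = B*x^2/2 - x^3/3 := by
  have hD : ∀ u ∈ uIcc p (p+x),
      HasDerivAt (fun w => B/2 * (w - p)^2 - 1/3 * (w - p)^3) ((u - p) * B - (u - p)^2) u := by
    intro u _
    have h := ((((hasDerivAt_id u).sub_const p).pow 2).const_mul (B/2)).sub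
      ((((hasDerivAt_id u).sub_const p).pow 3).const_mul (1/3 : ℝ))
    refine h.congr_deriv ?_
    try simp only [id_eq]
    try push_cast
    ring
  rw [intervalIntegral.integral_eq_sub_of_hasDerivAt hD
    (Continuous.intervalIntegrable (by continuity) _ _)]
  ring

lemma poly_int' (q x B : ℝ) :
    ∫ u in (q-x)..q, ((q - u) * B - (q - u)^2) = B*x^2/2 - x^3/3 := by
  have h1 : ∀ u : ℝ, HasDerivAt (fun w : ℝ => q - w) (0 - 1) u :=
    fun u => (hasDerivAt_const u q).sub (hasDerivAt_id u)
  have hD : ∀ u ∈ uIcc (q-x) q,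
      HasDerivAt (fun w => -(B/2) * (q - w)^2 + 1/3 * (q - w)^3) ((q - u) * B - (q - u)^2) u := by
    intro u _
    have h := (((h1 u).pow 2).const_mul (-(B/2))).add (((h1 u).pow 3).const_mul (1/3 : ℝ))
    refine h.congr_deriv ?_
    try simp only [id_eq]
    try push_cast
    ring
  rw [intervalIntegral.integral_eq_sub_of_hasDerivAt hD
    (Continuous.intervalIntegrable (by continuity) _ _)]
  ring


end Helpers

theorem statement5 (a b x y : ℝ) (hb : 0 < b) (hba : b ≤ a)
    (hx0 : 0 ≤ x) (hx : x < b / 2) (hy : 0 ≤ y) :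
    ∫ z in symmDiff (rect (a - 2 * x) (b + 2 * y)) (rect a b),
        dinfty z (rect a b) =
      y ^ 2 * (a - 2 * x) + (4 / 3) * x ^ 3 + x ^ 2 * (b - 2 * x) := by
  have ha : 0 < a := by linarith
  have hxa : x < a / 2 := by linarith
  set f : ℝ × ℝ → ℝ := fun z => dinfty z (rect a b) with hfdef
  set SB := Icc (-(a/2)+x) (a/2-x) ×ˢ Ico (-(b/2)-y) (-(b/2)) with hSB
  set ST := Icc (-(a/2)+x) (a/2-x) ×ˢ Ioc (b/2) (b/2+y) with hST
  set SL := Ico (-(a/2)) (-(a/2)+x) ×ˢ Icc (-(b/2)) (b/2) with hSL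
  set SR := Ioc (a/2-x) (a/2) ×ˢ Icc (-(b/2)) (b/2) with hSR
  have mB : MeasurableSet SB := measurableSet_Icc.prod measurableSet_Ico
  have mT : MeasurableSet ST := measurableSet_Icc.prod measurableSet_Ioc
  have mL : MeasurableSet SL := measurableSet_Ico.prod measurableSet_Icc
  have mR : MeasurableSet SR := measurableSet_Ioc.prod measurableSet_Icc
  have hcont : Continuous f := Metric.continuous_infDist_pt _
  have hKint : IntegrableOn f (Icc (-(a/2)) (a/2) ×ˢ Icc (-(b/2)-y) (b/2+y)) :=
    hcont.continuousOn.integrableOn_compact (isCompact_Icc.prod isCompact_Icc)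
  have iB : IntegrableOn f SB :=
    hKint.mono_set (prod_mono (Icc_subset_Icc (by linarith) (by linarith))
      (Ico_subset_Icc_self.trans (Icc_subset_Icc le_rfl (by linarith))))
  have iT : IntegrableOn f ST :=
    hKint.mono_set (prod_mono (Icc_subset_Icc (by linarith) (by linarith))
      (Ioc_subset_Icc_self.trans (Icc_subset_Icc (by linarith) le_rfl)))
  have iL : IntegrableOn f SL :=
    hKint.mono_set (prod_mono (Ico_subset_Icc_self.trans (Icc_subset_Icc le_rfl (by linarith)))
      (Icc_subset_Icc (by linarith) (by linarith)))
  have iR : IntegrableOn f SR :=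
    hKint.mono_set (prod_mono (Ioc_subset_Icc_self.trans (Icc_subset_Icc (by linarith) le_rfl))
      (Icc_subset_Icc (by linarith) (by linarith)))
  have dBT : Disjoint SB ST :=
    Disjoint.set_prod_right (Set.disjoint_left.mpr fun w hw hw' => by
      simp only [mem_Ico, mem_Ioc] at hw hw'; linarith [hw.2, hw'.1]) _ _
  have dLR : Disjoint SL SR :=
    Disjoint.set_prod_left (Set.disjoint_left.mpr fun w hw hw' => by
      simp only [mem_Ico, mem_Ioc] at hw hw'; linarith [hw.2, hw'.1]) _ _
  have dBL : Disjoint SB SL :=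
    Disjoint.set_prod_right (Set.disjoint_left.mpr fun w hw hw' => by
      simp only [mem_Ico, mem_Icc] at hw hw'; linarith [hw.2, hw'.1]) _ _
  have dBR : Disjoint SB SR :=
    Disjoint.set_prod_right (Set.disjoint_left.mpr fun w hw hw' => by
      simp only [mem_Ico, mem_Icc] at hw hw'; linarith [hw.2, hw'.1]) _ _
  have dTL : Disjoint ST SL :=
    Disjoint.set_prod_right (Set.disjoint_left.mpr fun w hw hw' => by
      simp only [mem_Ioc, mem_Icc] at hw hw'; linarith [hw.1, hw'.2]) _ _
  have dTR : Disjoint ST SR :=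
    Disjoint.set_prod_right (Set.disjoint_left.mpr fun w hw hw' => by
      simp only [mem_Ioc, mem_Icc] at hw hw'; linarith [hw.1, hw'.2]) _ _
  have pB : ∫ z in SB, f z = (a - 2*x) * (y^2/2) := by
    have hEq : EqOn f (fun z => -(b/2) - z.2) SB := by
      rintro ⟨u, v⟩ ⟨hu, hv⟩
      simp only [mem_Icc, mem_Ico] at hu hv
      exact dinfty_bot ha hb (by linarith [hu.1]) (by linarith [hu.2]) (le_of_lt hv.2)
    rw [setIntegral_congr_fun mB hEq, hSB, Measure.volume_eq_prod,
      setIntegral_prod _ (by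
        rw [← Measure.volume_eq_prod]
        exact (iB.congr_fun hEq mB))]
    have hin : (∫ v in Ico (-(b/2)-y) (-(b/2)), (-(b/2) - v)) = y^2/2 := by
      rw [MeasureTheory.integral_Ico_eq_integral_Ioo, ← MeasureTheory.integral_Ioc_eq_integral_Ioo,
        ← intervalIntegral.integral_of_le (by linarith : -(b/2)-y ≤ -(b/2)),
        intervalIntegral.integral_sub (intervalIntegrable_const) intervalIntegral.intervalIntegrable_id,
        integral_id, intervalIntegral.integral_const]
      simp only [smul_eq_mul]
      ring
    rw [show (∫ u in Icc (-(a/2)+x) (a/2-x), ∫ v in Ico (-(b/2)-y) (-(b/2)),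
          ((fun z : ℝ × ℝ => -(b/2) - z.2) (u, v))) =
        ∫ _ in Icc (-(a/2)+x) (a/2-x), (y^2/2 : ℝ) from
      setIntegral_congr_fun measurableSet_Icc (fun u _ => hin),
      setIntegral_const, Real.volume_real_Icc, smul_eq_mul,
      show a/2 - x - (-(a/2)+x) = a - 2*x from by ring,
      max_eq_left (by linarith : (0:ℝ) ≤ a - 2*x)]
  have pT : ∫ z in ST, f z = (a - 2*x) * (y^2/2) := by
    have hEq : EqOn f (fun z => z.2 - b/2) ST := by
      rintro ⟨u, v⟩ ⟨hu, hv⟩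
      simp only [mem_Icc, mem_Ioc] at hu hv
      exact dinfty_top ha hb (by linarith [hu.1]) (by linarith [hu.2]) (le_of_lt hv.1)
    rw [setIntegral_congr_fun mT hEq, hST, Measure.volume_eq_prod,
      setIntegral_prod _ (by
        rw [← Measure.volume_eq_prod]
        exact (iT.congr_fun hEq mT))]
    have hin : (∫ v in Ioc (b/2) (b/2+y), (v - b/2)) = y^2/2 := by
      rw [← intervalIntegral.integral_of_le (by linarith : b/2 ≤ b/2+y),
        intervalIntegral.integral_sub intervalIntegral.intervalIntegrable_id (intervalIntegrable_const),
        integral_id, intervalIntegral.integral_const]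
      simp only [smul_eq_mul]
      ring
    rw [show (∫ u in Icc (-(a/2)+x) (a/2-x), ∫ v in Ioc (b/2) (b/2+y),
          ((fun z : ℝ × ℝ => z.2 - b/2) (u, v))) =
        ∫ _ in Icc (-(a/2)+x) (a/2-x), (y^2/2 : ℝ) from
      setIntegral_congr_fun measurableSet_Icc (fun u _ => hin),
      setIntegral_const, Real.volume_real_Icc, smul_eq_mul,
      show a/2 - x - (-(a/2)+x) = a - 2*x from by ring,
      max_eq_left (by linarith : (0:ℝ) ≤ a - 2*x)]
  have pL : ∫ z in SL, f z = b*x^2/2 - x^3/3 := by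
    have hEq : EqOn f (fun z => min (z.1 + a/2) (min (b/2 - z.2) (b/2 + z.2))) SL := by
      rintro ⟨u, v⟩ ⟨hu, hv⟩
      simp only [mem_Ico, mem_Icc] at hu hv
      exact dinfty_left hb hba hu.1 (by linarith [hu.2]) hv.1 hv.2
    rw [setIntegral_congr_fun mL hEq, hSL, Measure.volume_eq_prod,
      setIntegral_prod _ (by
        rw [← Measure.volume_eq_prod]
        exact (iL.congr_fun hEq mL))]
    have hin : ∀ u ∈ Ico (-(a/2)) (-(a/2)+x),
        (∫ v in Icc (-(b/2)) (b/2),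
          ((fun z : ℝ × ℝ => min (z.1 + a/2) (min (b/2 - z.2) (b/2 + z.2))) (u, v))) =
        (u - (-(a/2))) * b - (u - (-(a/2)))^2 := by
      intro u hu
      simp only [mem_Ico] at hu
      have h := inner_min_integral (s := u + a/2) (c := b/2) (by linarith [hu.1]) (by linarith [hu.2])
      rw [show -(b/2) = -(b/2) from rfl] at h
      calc (∫ v in Icc (-(b/2)) (b/2),
              ((fun z : ℝ × ℝ => min (z.1 + a/2) (min (b/2 - z.2) (b/2 + z.2))) (u, v)))
          = ∫ v in Icc (-(b/2)) (b/2), min (u + a/2) (min (b/2 - v) (b/2 + v)) := rfl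
        _ = (u + a/2)*(2*(b/2)) - (u + a/2)^2 := h
        _ = (u - (-(a/2))) * b - (u - (-(a/2)))^2 := by ring
    rw [setIntegral_congr_fun measurableSet_Ico hin,
      MeasureTheory.integral_Ico_eq_integral_Ioo, ← MeasureTheory.integral_Ioc_eq_integral_Ioo,
      ← intervalIntegral.integral_of_le (by linarith : -(a/2) ≤ -(a/2)+x),
      poly_int (-(a/2)) x b]
  have pR : ∫ z in SR, f z = b*x^2/2 - x^3/3 := by
    have hEq : EqOn f (fun z => min (a/2 - z.1) (min (b/2 - z.2) (b/2 + z.2))) SR := by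
      rintro ⟨u, v⟩ ⟨hu, hv⟩
      simp only [mem_Ioc, mem_Icc] at hu hv
      exact dinfty_right hb hba (by linarith [hu.1]) hu.2 hv.1 hv.2
    rw [setIntegral_congr_fun mR hEq, hSR, Measure.volume_eq_prod,
      setIntegral_prod _ (by
        rw [← Measure.volume_eq_prod]
        exact (iR.congr_fun hEq mR))]
    have hin : ∀ u ∈ Ioc (a/2-x) (a/2),
        (∫ v in Icc (-(b/2)) (b/2),
          ((fun z : ℝ × ℝ => min (a/2 - z.1) (min (b/2 - z.2) (b/2 + z.2))) (u, v))) =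
        (a/2 - u) * b - (a/2 - u)^2 := by
      intro u hu
      simp only [mem_Ioc] at hu
      have h := inner_min_integral (s := a/2 - u) (c := b/2) (by linarith [hu.2]) (by linarith [hu.1])
      calc (∫ v in Icc (-(b/2)) (b/2),
              ((fun z : ℝ × ℝ => min (a/2 - z.1) (min (b/2 - z.2) (b/2 + z.2))) (u, v)))
          = ∫ v in Icc (-(b/2)) (b/2), min (a/2 - u) (min (b/2 - v) (b/2 + v)) := rfl
        _ = (a/2 - u)*(2*(b/2)) - (a/2 - u)^2 := h
        _ = (a/2 - u) * b - (a/2 - u)^2 := by ring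
    rw [setIntegral_congr_fun measurableSet_Ioc hin,
      ← intervalIntegral.integral_of_le (by linarith : a/2-x ≤ a/2),
      show a/2 - x = a/2 - x from rfl]
    have := poly_int' (a/2) x b
    rw [this]
  rw [symmDiff_rect_eq hb hba hx0 hx hy, ← hSB, ← hST, ← hSL, ← hSR,
    setIntegral_union (Disjoint.union_left (dBL.union_right dBR) (dTL.union_right dTR))
      (mL.union mR) (iB.union iT) (iL.union iR),
    setIntegral_union dBT mT iB iT, setIntegral_union dLR mR iL iR,
    pB, pT, pL, pR]
  ring
end

section
/- Let a, b > 0, let b/2 ≤ x < a/2 and y ≥ 0, and set R = [−a/2, a/2] × [−b/2, b/2] and R̃ = [−a/2 + x, a/2 − x] × [−b/2 − y, b/2 + y]. Then ∫_{R̃ △ R} d_∞(z, ∂R) dz = y²(a − 2x) − b³/12 + x b²/2. -/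
open MeasureTheory Set
open intervalIntegral

lemma le_infDist'' {α : Type*} [MetricSpace α] {s : Set α} (hs : s.Nonempty) {x : α} {r : ℝ}
    (h : ∀ y ∈ s, r ≤ dist x y) : r ≤ Metric.infDist x s := by
  by_contra hlt
  push_neg at hlt
  obtain ⟨z, hz, hd⟩ := (Metric.infDist_lt_iff hs).1 hlt
  exact (h z hz).not_gt hd

lemma mem_frontier_rect {a b : ℝ} (ha : 0 < a) (hb : 0 < b) {z : ℝ × ℝ} :
    z ∈ frontier (rect a b) ↔ (|z.1| ≤ a / 2 ∧ |z.2| ≤ b / 2) ∧ (|z.1| = a / 2 ∨ |z.2| = b / 2) := by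
  have hcl : IsClosed (rect a b) := (isClosed_Icc).prod isClosed_Icc
  rw [hcl.frontier_eq, rect, interior_prod_eq, interior_Icc, interior_Icc]
  simp only [mem_diff, mem_prod, mem_Icc, mem_Ioo]
  constructor
  · rintro ⟨⟨⟨h1, h2⟩, h3, h4⟩, h5⟩
    refine ⟨⟨abs_le.2 ⟨h1, h2⟩, abs_le.2 ⟨h3, h4⟩⟩, ?_⟩
    by_contra hcon
    push_neg at hcon
    obtain ⟨hc1, hc2⟩ := hcon
    have hu := abs_lt.1 (lt_of_le_of_ne (abs_le.2 ⟨h1, h2⟩) hc1)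
    have hv := abs_lt.1 (lt_of_le_of_ne (abs_le.2 ⟨h3, h4⟩) hc2)
    exact h5 ⟨⟨hu.1, hu.2⟩, hv.1, hv.2⟩
  · rintro ⟨⟨hu, hv⟩, hor⟩
    refine ⟨⟨⟨(abs_le.1 hu).1, (abs_le.1 hu).2⟩, (abs_le.1 hv).1, (abs_le.1 hv).2⟩, ?_⟩
    rintro ⟨⟨g1, g2⟩, g3, g4⟩
    rcases hor with h | h
    · exact absurd h (ne_of_lt (abs_lt.2 ⟨g1, g2⟩))
    · exact absurd h (ne_of_lt (abs_lt.2 ⟨g3, g4⟩))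

lemma frontier_rect_nonempty {a b : ℝ} (ha : 0 < a) (hb : 0 < b) :
    (frontier (rect a b)).Nonempty := by
  refine ⟨(a / 2, 0), (mem_frontier_rect ha hb).2 ⟨⟨?_, ?_⟩, Or.inl ?_⟩⟩
  · rw [abs_of_nonneg (by linarith)]
  · rw [abs_of_nonneg le_rfl]; linarith
  · rw [abs_of_nonneg (by linarith)]

lemma dinf_in {a b : ℝ} (ha : 0 < a) (hb : 0 < b) {u v : ℝ}
    (hu : |u| ≤ a / 2) (hv : |v| ≤ b / 2) :
    dinfty (u, v) (rect a b) = min (a / 2 - |u|) (b / 2 - |v|) := by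
  have hne := frontier_rect_nonempty ha hb
  apply le_antisymm
  · rcases le_total (a / 2 - |u|) (b / 2 - |v|) with hmin | hmin
    · rw [min_eq_left hmin]
      set c : ℝ := if 0 ≤ u then a / 2 else -(a / 2) with hc
      have hcabs : |c| = a / 2 := by
        rw [hc]; split_ifs
        · exact abs_of_nonneg (by linarith)
        · rw [abs_neg]; exact abs_of_nonneg (by linarith)
      have hw : (c, v) ∈ frontier (rect a b) :=
        (mem_frontier_rect ha hb).2 ⟨⟨le_of_eq hcabs, hv⟩, Or.inl hcabs⟩
      have hd : dist (u, v) (c, v) = a / 2 - |u| := by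
        rw [Prod.dist_eq]
        simp only [Real.dist_eq, sub_self, abs_zero]
        rw [hc]
        have hu2 : u ≤ a / 2 := (abs_le.1 hu).2
        split_ifs with h
        · rw [abs_of_nonneg h, abs_of_nonpos (by linarith : u - a/2 ≤ 0),
            max_eq_left (by linarith)]
          ring
        · push_neg at h
          rw [abs_of_neg h]
          have h1 : -(a/2) ≤ u := (abs_le.1 hu).1
          rw [sub_neg_eq_add, abs_of_nonneg (by linarith : (0:ℝ) ≤ u + a/2)]
          rw [max_eq_left (by linarith)]
          ring
      calc dinfty (u, v) (rect a b) ≤ dist (u, v) (c, v) := Metric.infDist_le_dist_of_mem hw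
        _ = a / 2 - |u| := hd
    · rw [min_eq_right hmin]
      set c : ℝ := if 0 ≤ v then b / 2 else -(b / 2) with hc
      have hcabs : |c| = b / 2 := by
        rw [hc]; split_ifs
        · exact abs_of_nonneg (by linarith)
        · rw [abs_neg]; exact abs_of_nonneg (by linarith)
      have hw : (u, c) ∈ frontier (rect a b) :=
        (mem_frontier_rect ha hb).2 ⟨⟨hu, le_of_eq hcabs⟩, Or.inr hcabs⟩
      have hd : dist (u, v) (u, c) = b / 2 - |v| := by
        rw [Prod.dist_eq]
        simp only [Real.dist_eq, sub_self, abs_zero]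
        rw [hc]
        have hv2 : v ≤ b / 2 := (abs_le.1 hv).2
        split_ifs with h
        · rw [abs_of_nonneg h, abs_of_nonpos (by linarith : v - b/2 ≤ 0),
            max_eq_right (by linarith)]
          ring
        · push_neg at h
          rw [abs_of_neg h]
          have h1 : -(b/2) ≤ v := (abs_le.1 hv).1
          rw [sub_neg_eq_add, abs_of_nonneg (by linarith : (0:ℝ) ≤ v + b/2)]
          rw [max_eq_right (by linarith)]
          ring
      calc dinfty (u, v) (rect a b) ≤ dist (u, v) (u, c) := Metric.infDist_le_dist_of_mem hw
        _ = b / 2 - |v| := hd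
  · apply le_infDist'' hne
    intro w hw
    obtain ⟨⟨hw1, hw2⟩, hor⟩ := (mem_frontier_rect ha hb).1 hw
    rw [Prod.dist_eq]
    rcases hor with h | h
    · calc min (a / 2 - |u|) (b / 2 - |v|) ≤ a / 2 - |u| := min_le_left _ _
        _ = |w.1| - |u| := by rw [h]
        _ ≤ |w.1 - u| := abs_sub_abs_le_abs_sub _ _
        _ = |u - w.1| := abs_sub_comm _ _
        _ ≤ max (dist u w.1) (dist v w.2) := by rw [Real.dist_eq]; exact le_max_left _ _
        _ = dist u w.1 ⊔ dist v w.2 := rfl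
    · calc min (a / 2 - |u|) (b / 2 - |v|) ≤ b / 2 - |v| := min_le_right _ _
        _ = |w.2| - |v| := by rw [h]
        _ ≤ |w.2 - v| := abs_sub_abs_le_abs_sub _ _
        _ = |v - w.2| := abs_sub_comm _ _
        _ ≤ max (dist u w.1) (dist v w.2) := by rw [Real.dist_eq]; exact le_max_right _ _
        _ = dist u w.1 ⊔ dist v w.2 := rfl

lemma dinf_out {a b : ℝ} (ha : 0 < a) (hb : 0 < b) {u v : ℝ}
    (hu : |u| ≤ a / 2) (hv : b / 2 ≤ |v|) :
    dinfty (u, v) (rect a b) = |v| - b / 2 := by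
  have hne := frontier_rect_nonempty ha hb
  apply le_antisymm
  · set c : ℝ := if 0 ≤ v then b / 2 else -(b / 2) with hc
    have hcabs : |c| = b / 2 := by
      rw [hc]; split_ifs
      · exact abs_of_nonneg (by linarith)
      · rw [abs_neg]; exact abs_of_nonneg (by linarith)
    have hw : (u, c) ∈ frontier (rect a b) :=
      (mem_frontier_rect ha hb).2 ⟨⟨hu, le_of_eq hcabs⟩, Or.inr hcabs⟩
    have hd : dist (u, v) (u, c) = |v| - b / 2 := by
      rw [Prod.dist_eq]
      simp only [Real.dist_eq, sub_self, abs_zero]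
      rw [hc]
      split_ifs with h
      · have hv2 : b / 2 ≤ v := by rwa [abs_of_nonneg h] at hv
        rw [abs_of_nonneg h, abs_of_nonneg (by linarith : (0:ℝ) ≤ v - b/2),
          max_eq_right (by linarith)]
      · push_neg at h
        have hv2 : b / 2 ≤ -v := by rwa [abs_of_neg h] at hv
        rw [abs_of_neg h, sub_neg_eq_add, abs_of_nonpos (by linarith : v + b/2 ≤ 0),
          max_eq_right (by linarith)]
        ring
    calc dinfty (u, v) (rect a b) ≤ dist (u, v) (u, c) := Metric.infDist_le_dist_of_mem hw
      _ = |v| - b / 2 := hd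
  · apply le_infDist'' hne
    intro w hw
    obtain ⟨⟨hw1, hw2⟩, _⟩ := (mem_frontier_rect ha hb).1 hw
    rw [Prod.dist_eq]
    calc |v| - b / 2 ≤ |v| - |w.2| := by linarith
      _ ≤ |v - w.2| := abs_sub_abs_le_abs_sub _ _
      _ ≤ max (dist u w.1) (dist v w.2) := by rw [Real.dist_eq]; exact le_max_right _ _
      _ = dist u w.1 ⊔ dist v w.2 := rfl

lemma int_quad (c d p q r : ℝ) :
    ∫ v in c..d, (p + q * v + r * v ^ 2) =
      p * (d - c) + q * (d ^ 2 - c ^ 2) / 2 + r * (d ^ 3 - c ^ 3) / 3 := by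
  have i1 : IntervalIntegrable (fun _ : ℝ => p) volume c d := intervalIntegrable_const
  have i2 : IntervalIntegrable (fun v : ℝ => q * v) volume c d :=
    (continuous_const.mul continuous_id).intervalIntegrable _ _
  have i3 : IntervalIntegrable (fun v : ℝ => r * v ^ 2) volume c d :=
    (continuous_const.mul (continuous_pow 2)).intervalIntegrable _ _
  rw [integral_add (i1.add i2) i3, integral_add i1 i2, intervalIntegral.integral_const,
    intervalIntegral.integral_const_mul, intervalIntegral.integral_const_mul, integral_id, integral_pow, smul_eq_mul]
  push_cast
  ring

lemma int_min {s b : ℝ} (h0 : 0 ≤ s) (hsb : s ≤ b / 2) :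
    ∫ v in (-(b/2))..(b/2), min s (b / 2 - |v|) = s * b - s ^ 2 := by
  have hc : Continuous fun v : ℝ => min s (b / 2 - |v|) :=
    continuous_const.min (continuous_const.sub continuous_abs)
  have h1 : -(b/2) ≤ -(b/2 - s) := by linarith
  have h2 : -(b/2 - s) ≤ b/2 - s := by linarith
  have h3 : b/2 - s ≤ b/2 := by linarith
  rw [← integral_add_adjacent_intervals (a := -(b/2)) (b := -(b/2-s)) (c := b/2)
      (hc.intervalIntegrable _ _) (hc.intervalIntegrable _ _),
    ← integral_add_adjacent_intervals (a := -(b/2-s)) (b := b/2-s) (c := b/2)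
      (hc.intervalIntegrable _ _) (hc.intervalIntegrable _ _)]
  have e1 : ∫ v in (-(b/2))..(-(b/2-s)), min s (b / 2 - |v|)
      = ∫ v in (-(b/2))..(-(b/2-s)), (b/2 + 1 * v + 0 * v ^ 2) := by
    apply integral_congr
    intro v hv
    rw [uIcc_of_le h1] at hv
    obtain ⟨hl, hr⟩ := hv
    dsimp only
    have hv0 : v ≤ 0 := by linarith
    rw [abs_of_nonpos hv0, min_eq_right (by linarith)]
    ring
  have e2 : ∫ v in (-(b/2-s))..(b/2-s), min s (b / 2 - |v|)
      = ∫ v in (-(b/2-s))..(b/2-s), (s + 0 * v + 0 * v ^ 2) := by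
    apply integral_congr
    intro v hv
    rw [uIcc_of_le h2] at hv
    obtain ⟨hl, hr⟩ := hv
    dsimp only
    have : |v| ≤ b/2 - s := abs_le.2 ⟨hl, hr⟩
    rw [min_eq_left (by linarith)]
    ring
  have e3 : ∫ v in (b/2-s)..(b/2), min s (b / 2 - |v|)
      = ∫ v in (b/2-s)..(b/2), (b/2 + (-1) * v + 0 * v ^ 2) := by
    apply integral_congr
    intro v hv
    rw [uIcc_of_le h3] at hv
    obtain ⟨hl, hr⟩ := hv
    dsimp only
    have hv0 : 0 ≤ v := by linarith
    rw [abs_of_nonneg hv0, min_eq_right (by linarith)]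
    ring
  rw [e1, e2, e3, int_quad, int_quad, int_quad]
  ring

lemma Icc_diff_Icc'_s6 {c d : ℝ} (h0 : 0 ≤ c) (hcd : c ≤ d) :
    Icc (-d) d \ Icc (-c) c = Ico (-d) (-c) ∪ Ioc c d := by
  ext t
  simp only [mem_diff, mem_Icc, mem_Ico, mem_Ioc, mem_union, not_and, not_le]
  constructor
  · rintro ⟨⟨h1, h2⟩, h3⟩
    rcases lt_or_ge t (-c) with hc | hc
    · exact Or.inl ⟨h1, hc⟩
    · exact Or.inr ⟨h3 hc, h2⟩
  · rintro (⟨h1, h2⟩ | ⟨h1, h2⟩)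
    · exact ⟨⟨h1, by linarith⟩, fun hc => by linarith⟩
    · exact ⟨⟨by linarith, h2⟩, fun _ => h1⟩


set_option maxHeartbeats 1000000 in
open intervalIntegral in
theorem statement6 (a b x y : ℝ) (ha : 0 < a) (hb : 0 < b)
    (hx0 : b / 2 ≤ x) (hx : x < a / 2) (hy : 0 ≤ y) :
    ∫ z in symmDiff (rect (a - 2 * x) (b + 2 * y)) (rect a b),
        dinfty z (rect a b) =
      y ^ 2 * (a - 2 * x) - b ^ 3 / 12 + x * b ^ 2 / 2 := by
  have hba : b < a := by linarith
  have hp0 : (0:ℝ) < a / 2 - x := by linarith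
  -- set decomposition
  have hA : rect (a - 2 * x) (b + 2 * y)
      = Icc (-(a / 2 - x)) (a / 2 - x) ×ˢ Icc (-(b / 2 + y)) (b / 2 + y) := by
    rw [rect, show (a - 2 * x) / 2 = a / 2 - x by ring, show (b + 2 * y) / 2 = b / 2 + y by ring]
  have he1 : Icc (-(a / 2 - x)) (a / 2 - x) \ Icc (-(a / 2)) (a / 2) = ∅ :=
    diff_eq_empty.2 (Icc_subset_Icc (by linarith) (by linarith))
  have he2 : Icc (-(b / 2)) (b / 2) \ Icc (-(b / 2 + y)) (b / 2 + y) = ∅ :=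
    diff_eq_empty.2 (Icc_subset_Icc (by linarith) (by linarith))
  have hd1 : Icc (-(b / 2 + y)) (b / 2 + y) \ Icc (-(b / 2)) (b / 2)
      = Ico (-(b / 2 + y)) (-(b / 2)) ∪ Ioc (b / 2) (b / 2 + y) :=
    Icc_diff_Icc'_s6 (by linarith) (by linarith)
  have hd2 : Icc (-(a / 2)) (a / 2) \ Icc (-(a / 2 - x)) (a / 2 - x)
      = Ico (-(a / 2)) (-(a / 2 - x)) ∪ Ioc (a / 2 - x) (a / 2) :=
    Icc_diff_Icc'_s6 (by linarith) (by linarith)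
  have hS : symmDiff (rect (a - 2 * x) (b + 2 * y)) (rect a b)
      = (Icc (-(a / 2 - x)) (a / 2 - x) ×ˢ Ico (-(b / 2 + y)) (-(b / 2))
          ∪ Icc (-(a / 2 - x)) (a / 2 - x) ×ˢ Ioc (b / 2) (b / 2 + y))
        ∪ ((Ico (-(a / 2)) (b / 2 - a / 2) ×ˢ Icc (-(b / 2)) (b / 2)
            ∪ Ico (b / 2 - a / 2) (-(a / 2 - x)) ×ˢ Icc (-(b / 2)) (b / 2))
          ∪ (Ioc (a / 2 - x) (a / 2 - b / 2) ×ˢ Icc (-(b / 2)) (b / 2)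
            ∪ Ioc (a / 2 - b / 2) (a / 2) ×ˢ Icc (-(b / 2)) (b / 2))) := by
    rw [Set.symmDiff_def, hA]
    simp only [rect]
    rw [Set.prod_diff_prod, Set.prod_diff_prod, he1, he2, hd1, hd2,
      Set.empty_prod, Set.prod_empty, Set.union_empty, Set.empty_union,
      Set.prod_union,
      ← Set.Ico_union_Ico_eq_Ico (show -(a / 2) ≤ b / 2 - a / 2 by linarith)
        (show b / 2 - a / 2 ≤ -(a / 2 - x) by linarith),
      ← Set.Ioc_union_Ioc_eq_Ioc (show a / 2 - x ≤ a / 2 - b / 2 by linarith)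
        (show a / 2 - b / 2 ≤ a / 2 by linarith),
      Set.union_prod, Set.union_prod, Set.union_prod]
  -- continuity and integrability
  have hcont : Continuous (fun z : ℝ × ℝ => dinfty z (rect a b)) := Metric.continuous_infDist_pt _
  have hK : IsCompact (Icc (-(a / 2)) (a / 2) ×ˢ Icc (-(b / 2 + y)) (b / 2 + y)) :=
    isCompact_Icc.prod isCompact_Icc
  have hsub1 : Icc (-(a / 2 - x)) (a / 2 - x) ×ˢ Ico (-(b / 2 + y)) (-(b / 2))
      ⊆ Icc (-(a / 2)) (a / 2) ×ˢ Icc (-(b / 2 + y)) (b / 2 + y) :=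
    prod_mono (Icc_subset_Icc (by linarith) (by linarith))
      (Ico_subset_Icc_self.trans (Icc_subset_Icc le_rfl (by linarith)))
  have hsub2 : Icc (-(a / 2 - x)) (a / 2 - x) ×ˢ Ioc (b / 2) (b / 2 + y)
      ⊆ Icc (-(a / 2)) (a / 2) ×ˢ Icc (-(b / 2 + y)) (b / 2 + y) :=
    prod_mono (Icc_subset_Icc (by linarith) (by linarith))
      (Ioc_subset_Icc_self.trans (Icc_subset_Icc (by linarith) le_rfl))
  have hsub3 : Ico (-(a / 2)) (b / 2 - a / 2) ×ˢ Icc (-(b / 2)) (b / 2)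
      ⊆ Icc (-(a / 2)) (a / 2) ×ˢ Icc (-(b / 2 + y)) (b / 2 + y) :=
    prod_mono (Ico_subset_Icc_self.trans (Icc_subset_Icc le_rfl (by linarith)))
      (Icc_subset_Icc (by linarith) (by linarith))
  have hsub4 : Ico (b / 2 - a / 2) (-(a / 2 - x)) ×ˢ Icc (-(b / 2)) (b / 2)
      ⊆ Icc (-(a / 2)) (a / 2) ×ˢ Icc (-(b / 2 + y)) (b / 2 + y) :=
    prod_mono (Ico_subset_Icc_self.trans (Icc_subset_Icc (by linarith) (by linarith)))
      (Icc_subset_Icc (by linarith) (by linarith))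
  have hsub5 : Ioc (a / 2 - x) (a / 2 - b / 2) ×ˢ Icc (-(b / 2)) (b / 2)
      ⊆ Icc (-(a / 2)) (a / 2) ×ˢ Icc (-(b / 2 + y)) (b / 2 + y) :=
    prod_mono (Ioc_subset_Icc_self.trans (Icc_subset_Icc (by linarith) (by linarith)))
      (Icc_subset_Icc (by linarith) (by linarith))
  have hsub6 : Ioc (a / 2 - b / 2) (a / 2) ×ˢ Icc (-(b / 2)) (b / 2)
      ⊆ Icc (-(a / 2)) (a / 2) ×ˢ Icc (-(b / 2 + y)) (b / 2 + y) :=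
    prod_mono (Ioc_subset_Icc_self.trans (Icc_subset_Icc (by linarith) le_rfl))
      (Icc_subset_Icc (by linarith) (by linarith))
  have hIntK : IntegrableOn (fun z : ℝ × ℝ => dinfty z (rect a b))
      (Icc (-(a / 2)) (a / 2) ×ˢ Icc (-(b / 2 + y)) (b / 2 + y)) :=
    hcont.continuousOn.integrableOn_compact hK
  have hi1 := hIntK.mono_set hsub1
  have hi2 := hIntK.mono_set hsub2
  have hi3 := hIntK.mono_set hsub3
  have hi4 := hIntK.mono_set hsub4
  have hi5 := hIntK.mono_set hsub5
  have hi6 := hIntK.mono_set hsub6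
  -- inner integral of the "tent" function
  have hinb : (∫ v in Icc (-(b / 2)) (b / 2), (b / 2 - |v|)) = b ^ 2 / 4 := by
    rw [integral_Icc_eq_integral_Ioc, ← intervalIntegral.integral_of_le (by linarith)]
    have hcg : (∫ v in (-(b / 2))..(b / 2), (b / 2 - |v|))
        = ∫ v in (-(b / 2))..(b / 2), min (b / 2) (b / 2 - |v|) :=
      intervalIntegral.integral_congr fun v _ => (min_eq_right (by linarith [abs_nonneg v])).symm
    rw [hcg, int_min (by linarith) le_rfl]
    ring
  -- piece B (bottom)
  have hB : (∫ z in Icc (-(a / 2 - x)) (a / 2 - x) ×ˢ Ico (-(b / 2 + y)) (-(b / 2)),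
      dinfty z (rect a b)) = (a - 2 * x) * (y ^ 2 / 2) := by
    have hmeas : MeasurableSet (Icc (-(a / 2 - x)) (a / 2 - x) ×ˢ Ico (-(b / 2 + y)) (-(b / 2))) :=
      measurableSet_Icc.prod measurableSet_Ico
    have heq : EqOn (fun z : ℝ × ℝ => dinfty z (rect a b)) (fun z : ℝ × ℝ => -z.2 - b / 2)
        (Icc (-(a / 2 - x)) (a / 2 - x) ×ˢ Ico (-(b / 2 + y)) (-(b / 2))) := by
      rintro ⟨u, v⟩ ⟨hu, hv⟩
      simp only [mem_Icc, mem_Ico] at hu hv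
      have h1 : |u| ≤ a / 2 := abs_le.2 ⟨by linarith, by linarith⟩
      have h2 : |v| = -v := abs_of_neg (by linarith)
      show dinfty (u, v) (rect a b) = -v - b / 2
      rw [dinf_out ha hb h1 (by rw [h2]; linarith), h2]
    rw [setIntegral_congr_fun hmeas heq,
      show (volume : Measure (ℝ × ℝ)) = (volume : Measure ℝ).prod volume from rfl,
      setIntegral_prod (fun z : ℝ × ℝ => -z.2 - b / 2) (((continuous_snd.neg.sub continuous_const).continuousOn.integrableOn_compact
        hK).mono_set hsub1)]
    dsimp only
    have hin : (∫ v in Ico (-(b / 2 + y)) (-(b / 2)), (-v - b / 2)) = y ^ 2 / 2 := by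
      rw [integral_Ico_eq_integral_Ioo, ← integral_Ioc_eq_integral_Ioo,
        ← intervalIntegral.integral_of_le (by linarith)]
      have hcg : (∫ v in (-(b / 2 + y))..(-(b / 2)), (-v - b / 2))
          = ∫ v in (-(b / 2 + y))..(-(b / 2)), (-(b / 2) + (-1) * v + 0 * v ^ 2) :=
        intervalIntegral.integral_congr fun v _ => by ring
      rw [hcg, int_quad]
      ring
    simp only [hin]
    rw [setIntegral_const, Real.volume_real_Icc_of_le (by linarith), smul_eq_mul]
    ring
  -- piece T (top)
  have hT : (∫ z in Icc (-(a / 2 - x)) (a / 2 - x) ×ˢ Ioc (b / 2) (b / 2 + y),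
      dinfty z (rect a b)) = (a - 2 * x) * (y ^ 2 / 2) := by
    have hmeas : MeasurableSet (Icc (-(a / 2 - x)) (a / 2 - x) ×ˢ Ioc (b / 2) (b / 2 + y)) :=
      measurableSet_Icc.prod measurableSet_Ioc
    have heq : EqOn (fun z : ℝ × ℝ => dinfty z (rect a b)) (fun z : ℝ × ℝ => z.2 - b / 2)
        (Icc (-(a / 2 - x)) (a / 2 - x) ×ˢ Ioc (b / 2) (b / 2 + y)) := by
      rintro ⟨u, v⟩ ⟨hu, hv⟩
      simp only [mem_Icc, mem_Ioc] at hu hv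
      have h1 : |u| ≤ a / 2 := abs_le.2 ⟨by linarith, by linarith⟩
      have h2 : |v| = v := abs_of_nonneg (by linarith)
      show dinfty (u, v) (rect a b) = v - b / 2
      rw [dinf_out ha hb h1 (by rw [h2]; linarith), h2]
    rw [setIntegral_congr_fun hmeas heq,
      show (volume : Measure (ℝ × ℝ)) = (volume : Measure ℝ).prod volume from rfl,
      setIntegral_prod (fun z : ℝ × ℝ => z.2 - b / 2) (((continuous_snd.sub continuous_const).continuousOn.integrableOn_compact
        hK).mono_set hsub2)]
    dsimp only
    have hin : (∫ v in Ioc (b / 2) (b / 2 + y), (v - b / 2)) = y ^ 2 / 2 := by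
      rw [← intervalIntegral.integral_of_le (by linarith)]
      have hcg : (∫ v in (b / 2)..(b / 2 + y), (v - b / 2))
          = ∫ v in (b / 2)..(b / 2 + y), (-(b / 2) + 1 * v + 0 * v ^ 2) :=
        intervalIntegral.integral_congr fun v _ => by ring
      rw [hcg, int_quad]
      ring
    simp only [hin]
    rw [setIntegral_const, Real.volume_real_Icc_of_le (by linarith), smul_eq_mul]
    ring
  -- piece L1 (left, near edge)
  have hL1 : (∫ z in Ico (-(a / 2)) (b / 2 - a / 2) ×ˢ Icc (-(b / 2)) (b / 2),
      dinfty z (rect a b)) = b ^ 3 / 12 := by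
    have hmeas : MeasurableSet (Ico (-(a / 2)) (b / 2 - a / 2) ×ˢ Icc (-(b / 2)) (b / 2)) :=
      measurableSet_Ico.prod measurableSet_Icc
    have heq : EqOn (fun z : ℝ × ℝ => dinfty z (rect a b))
        (fun z : ℝ × ℝ => min (a / 2 + z.1) (b / 2 - |z.2|))
        (Ico (-(a / 2)) (b / 2 - a / 2) ×ˢ Icc (-(b / 2)) (b / 2)) := by
      rintro ⟨u, v⟩ ⟨hu, hv⟩
      simp only [mem_Ico, mem_Icc] at hu hv
      have h3 : |u| = -u := abs_of_neg (by linarith)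
      have h1 : |u| ≤ a / 2 := by rw [h3]; linarith
      have h2 : |v| ≤ b / 2 := abs_le.2 ⟨by linarith, by linarith⟩
      show dinfty (u, v) (rect a b) = min (a / 2 + u) (b / 2 - |v|)
      rw [dinf_in ha hb h1 h2, h3, sub_neg_eq_add]
    have hgc : Continuous (fun z : ℝ × ℝ => min (a / 2 + z.1) (b / 2 - |z.2|)) :=
      (continuous_const.add continuous_fst).min (continuous_const.sub (continuous_abs.comp continuous_snd))
    rw [setIntegral_congr_fun hmeas heq,
      show (volume : Measure (ℝ × ℝ)) = (volume : Measure ℝ).prod volume from rfl,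
      setIntegral_prod _ ((hgc.continuousOn.integrableOn_compact hK).mono_set hsub3)]
    dsimp only
    have hout : EqOn (fun u : ℝ => ∫ v in Icc (-(b / 2)) (b / 2), min (a / 2 + u) (b / 2 - |v|))
        (fun u : ℝ => (a * b / 2 - a ^ 2 / 4) + (b - a) * u + (-1) * u ^ 2)
        (Ico (-(a / 2)) (b / 2 - a / 2)) := by
      intro u hu
      simp only [mem_Ico] at hu
      dsimp only
      rw [integral_Icc_eq_integral_Ioc, ← intervalIntegral.integral_of_le (by linarith)]
      rw [int_min (by linarith) (by linarith)]
      ring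
    rw [setIntegral_congr_fun measurableSet_Ico hout, integral_Ico_eq_integral_Ioo,
      ← integral_Ioc_eq_integral_Ioo, ← intervalIntegral.integral_of_le (by linarith), int_quad]
    ring
  -- piece L2 (left, inner part)
  have hL2 : (∫ z in Ico (b / 2 - a / 2) (-(a / 2 - x)) ×ˢ Icc (-(b / 2)) (b / 2),
      dinfty z (rect a b)) = (x - b / 2) * (b ^ 2 / 4) := by
    have hmeas : MeasurableSet (Ico (b / 2 - a / 2) (-(a / 2 - x)) ×ˢ Icc (-(b / 2)) (b / 2)) :=
      measurableSet_Ico.prod measurableSet_Icc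
    have heq : EqOn (fun z : ℝ × ℝ => dinfty z (rect a b)) (fun z : ℝ × ℝ => b / 2 - |z.2|)
        (Ico (b / 2 - a / 2) (-(a / 2 - x)) ×ˢ Icc (-(b / 2)) (b / 2)) := by
      rintro ⟨u, v⟩ ⟨hu, hv⟩
      simp only [mem_Ico, mem_Icc] at hu hv
      have h3 : |u| = -u := abs_of_neg (by linarith)
      have h1 : |u| ≤ a / 2 := by rw [h3]; linarith
      have h2 : |v| ≤ b / 2 := abs_le.2 ⟨by linarith, by linarith⟩
      show dinfty (u, v) (rect a b) = b / 2 - |v|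
      rw [dinf_in ha hb h1 h2, h3, min_eq_right (by linarith [abs_nonneg v])]
    have hgc : Continuous (fun z : ℝ × ℝ => b / 2 - |z.2|) :=
      continuous_const.sub (continuous_abs.comp continuous_snd)
    rw [setIntegral_congr_fun hmeas heq,
      show (volume : Measure (ℝ × ℝ)) = (volume : Measure ℝ).prod volume from rfl,
      setIntegral_prod _ ((hgc.continuousOn.integrableOn_compact hK).mono_set hsub4)]
    dsimp only
    simp only [hinb]
    rw [setIntegral_const, Real.volume_real_Ico_of_le (by linarith), smul_eq_mul]
    ring
  -- piece R1 (right, inner part)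
  have hR1 : (∫ z in Ioc (a / 2 - x) (a / 2 - b / 2) ×ˢ Icc (-(b / 2)) (b / 2),
      dinfty z (rect a b)) = (x - b / 2) * (b ^ 2 / 4) := by
    have hmeas : MeasurableSet (Ioc (a / 2 - x) (a / 2 - b / 2) ×ˢ Icc (-(b / 2)) (b / 2)) :=
      measurableSet_Ioc.prod measurableSet_Icc
    have heq : EqOn (fun z : ℝ × ℝ => dinfty z (rect a b)) (fun z : ℝ × ℝ => b / 2 - |z.2|)
        (Ioc (a / 2 - x) (a / 2 - b / 2) ×ˢ Icc (-(b / 2)) (b / 2)) := by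
      rintro ⟨u, v⟩ ⟨hu, hv⟩
      simp only [mem_Ioc, mem_Icc] at hu hv
      have h3 : |u| = u := abs_of_nonneg (by linarith)
      have h1 : |u| ≤ a / 2 := by rw [h3]; linarith
      have h2 : |v| ≤ b / 2 := abs_le.2 ⟨by linarith, by linarith⟩
      show dinfty (u, v) (rect a b) = b / 2 - |v|
      rw [dinf_in ha hb h1 h2, h3, min_eq_right (by linarith [abs_nonneg v])]
    have hgc : Continuous (fun z : ℝ × ℝ => b / 2 - |z.2|) :=
      continuous_const.sub (continuous_abs.comp continuous_snd)
    rw [setIntegral_congr_fun hmeas heq,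
      show (volume : Measure (ℝ × ℝ)) = (volume : Measure ℝ).prod volume from rfl,
      setIntegral_prod _ ((hgc.continuousOn.integrableOn_compact hK).mono_set hsub5)]
    dsimp only
    simp only [hinb]
    rw [setIntegral_const, Real.volume_real_Ioc_of_le (by linarith), smul_eq_mul]
    ring
  -- piece R2 (right, near edge)
  have hR2 : (∫ z in Ioc (a / 2 - b / 2) (a / 2) ×ˢ Icc (-(b / 2)) (b / 2),
      dinfty z (rect a b)) = b ^ 3 / 12 := by
    have hmeas : MeasurableSet (Ioc (a / 2 - b / 2) (a / 2) ×ˢ Icc (-(b / 2)) (b / 2)) :=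
      measurableSet_Ioc.prod measurableSet_Icc
    have heq : EqOn (fun z : ℝ × ℝ => dinfty z (rect a b))
        (fun z : ℝ × ℝ => min (a / 2 - z.1) (b / 2 - |z.2|))
        (Ioc (a / 2 - b / 2) (a / 2) ×ˢ Icc (-(b / 2)) (b / 2)) := by
      rintro ⟨u, v⟩ ⟨hu, hv⟩
      simp only [mem_Ioc, mem_Icc] at hu hv
      have h3 : |u| = u := abs_of_nonneg (by linarith)
      have h1 : |u| ≤ a / 2 := by rw [h3]; linarith
      have h2 : |v| ≤ b / 2 := abs_le.2 ⟨by linarith, by linarith⟩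
      show dinfty (u, v) (rect a b) = min (a / 2 - u) (b / 2 - |v|)
      rw [dinf_in ha hb h1 h2, h3]
    have hgc : Continuous (fun z : ℝ × ℝ => min (a / 2 - z.1) (b / 2 - |z.2|)) :=
      (continuous_const.sub continuous_fst).min (continuous_const.sub (continuous_abs.comp continuous_snd))
    rw [setIntegral_congr_fun hmeas heq,
      show (volume : Measure (ℝ × ℝ)) = (volume : Measure ℝ).prod volume from rfl,
      setIntegral_prod _ ((hgc.continuousOn.integrableOn_compact hK).mono_set hsub6)]
    dsimp only
    have hout : EqOn (fun u : ℝ => ∫ v in Icc (-(b / 2)) (b / 2), min (a / 2 - u) (b / 2 - |v|))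
        (fun u : ℝ => (a * b / 2 - a ^ 2 / 4) + (a - b) * u + (-1) * u ^ 2)
        (Ioc (a / 2 - b / 2) (a / 2)) := by
      intro u hu
      simp only [mem_Ioc] at hu
      dsimp only
      rw [integral_Icc_eq_integral_Ioc, ← intervalIntegral.integral_of_le (by linarith)]
      rw [int_min (by linarith) (by linarith)]
      ring
    rw [setIntegral_congr_fun measurableSet_Ioc hout,
      ← intervalIntegral.integral_of_le (by linarith), int_quad]
    ring
  -- disjointness
  have hD1 : Disjoint
      (Icc (-(a / 2 - x)) (a / 2 - x) ×ˢ Ico (-(b / 2 + y)) (-(b / 2))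
        ∪ Icc (-(a / 2 - x)) (a / 2 - x) ×ˢ Ioc (b / 2) (b / 2 + y))
      ((Ico (-(a / 2)) (b / 2 - a / 2) ×ˢ Icc (-(b / 2)) (b / 2)
          ∪ Ico (b / 2 - a / 2) (-(a / 2 - x)) ×ˢ Icc (-(b / 2)) (b / 2))
        ∪ (Ioc (a / 2 - x) (a / 2 - b / 2) ×ˢ Icc (-(b / 2)) (b / 2)
          ∪ Ioc (a / 2 - b / 2) (a / 2) ×ˢ Icc (-(b / 2)) (b / 2))) := by
    rw [Set.disjoint_left]
    rintro ⟨u, v⟩ hz hz'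
    simp only [mem_union, mem_prod, mem_Icc, mem_Ico, mem_Ioc] at hz hz'
    rcases hz with ⟨_, g1, g2⟩ | ⟨_, g1, g2⟩ <;>
      rcases hz' with (⟨_, f1, f2⟩ | ⟨_, f1, f2⟩) | (⟨_, f1, f2⟩ | ⟨_, f1, f2⟩) <;> linarith
  have hD2 : Disjoint (Icc (-(a / 2 - x)) (a / 2 - x) ×ˢ Ico (-(b / 2 + y)) (-(b / 2)))
      (Icc (-(a / 2 - x)) (a / 2 - x) ×ˢ Ioc (b / 2) (b / 2 + y)) := by
    rw [Set.disjoint_left]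
    rintro ⟨u, v⟩ ⟨_, g1, g2⟩ ⟨_, f1, f2⟩
    simp only [mem_Ico] at g1 g2
    simp only [mem_Ioc] at f1 f2
    linarith
  have hD3 : Disjoint
      (Ico (-(a / 2)) (b / 2 - a / 2) ×ˢ Icc (-(b / 2)) (b / 2)
        ∪ Ico (b / 2 - a / 2) (-(a / 2 - x)) ×ˢ Icc (-(b / 2)) (b / 2))
      (Ioc (a / 2 - x) (a / 2 - b / 2) ×ˢ Icc (-(b / 2)) (b / 2)
        ∪ Ioc (a / 2 - b / 2) (a / 2) ×ˢ Icc (-(b / 2)) (b / 2)) := by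
    rw [Set.disjoint_left]
    rintro ⟨u, v⟩ hz hz'
    simp only [mem_union, mem_prod, mem_Icc, mem_Ico, mem_Ioc] at hz hz'
    rcases hz with ⟨g1, _⟩ | ⟨g1, _⟩ <;> rcases hz' with ⟨f1, _⟩ | ⟨f1, _⟩ <;>
      · obtain ⟨g2, g3⟩ := g1
        obtain ⟨f2, f3⟩ := f1
        linarith
  have hD4 : Disjoint (Ico (-(a / 2)) (b / 2 - a / 2) ×ˢ Icc (-(b / 2)) (b / 2))
      (Ico (b / 2 - a / 2) (-(a / 2 - x)) ×ˢ Icc (-(b / 2)) (b / 2)) := by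
    rw [Set.disjoint_left]
    rintro ⟨u, v⟩ ⟨g1, _⟩ ⟨f1, _⟩
    simp only [mem_Ico] at g1 f1
    obtain ⟨g2, g3⟩ := g1
    obtain ⟨f2, f3⟩ := f1
    linarith
  have hD5 : Disjoint (Ioc (a / 2 - x) (a / 2 - b / 2) ×ˢ Icc (-(b / 2)) (b / 2))
      (Ioc (a / 2 - b / 2) (a / 2) ×ˢ Icc (-(b / 2)) (b / 2)) := by
    rw [Set.disjoint_left]
    rintro ⟨u, v⟩ ⟨g1, _⟩ ⟨f1, _⟩
    simp only [mem_Ioc] at g1 f1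
    obtain ⟨g2, g3⟩ := g1
    obtain ⟨f2, f3⟩ := f1
    linarith
  -- assemble
  rw [hS,
    setIntegral_union hD1
      (((measurableSet_Ico.prod measurableSet_Icc).union
        (measurableSet_Ico.prod measurableSet_Icc)).union
        ((measurableSet_Ioc.prod measurableSet_Icc).union
        (measurableSet_Ioc.prod measurableSet_Icc)))
      (hi1.union hi2) ((hi3.union hi4).union (hi5.union hi6)),
    setIntegral_union hD2 (measurableSet_Icc.prod measurableSet_Ioc) hi1 hi2,
    setIntegral_union hD3
      ((measurableSet_Ioc.prod measurableSet_Icc).union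
        (measurableSet_Ioc.prod measurableSet_Icc))
      (hi3.union hi4) (hi5.union hi6),
    setIntegral_union hD4 (measurableSet_Ico.prod measurableSet_Icc) hi3 hi4,
    setIntegral_union hD5 (measurableSet_Ioc.prod measurableSet_Icc) hi5 hi6,
    hB, hT, hL1, hL2, hR1, hR2]
  ring
end

section
/- Let a₀ ≥ b₀ > 0 with a₀ b₀ = 1. Then there exists a unique pair of continuously differentiable functions ã, b̃ : [0, ∞) → (0, ∞) with ã(0) = a₀, b̃(0) = b₀ satisfying for all t ≥ 0 the ODE system dã/dt = −4/b̃ + 8/(ã + b̃), db̃/dt = −4/ã + 8/(ã + b̃). Moreover ã(t) b̃(t) = 1 and ã(t) ≥ b̃(t) for all t ≥ 0, and t ↦ ã(t) + b̃(t) is nonincreasing. -/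
open Set

/-- `(A, B)` is a solution on `[0, ∞)` of the ODE system
`dA/dt = -4/B + 8/(A+B)`, `dB/dt = -4/A + 8/(A+B)` with positive values and
initial data `(a₀, b₀)`. -/
def IsODESol (a₀ b₀ : ℝ) (A B : ℝ → ℝ) : Prop :=
  A 0 = a₀ ∧ B 0 = b₀ ∧
  (∀ t ∈ Set.Ici (0 : ℝ), 0 < A t ∧ 0 < B t) ∧
  (∀ t ∈ Set.Ici (0 : ℝ),
    HasDerivWithinAt A (-4 / B t + 8 / (A t + B t)) (Set.Ici 0) t ∧
    HasDerivWithinAt B (-4 / A t + 8 / (A t + B t)) (Set.Ici 0) t)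

/-! ### Auxiliary: the explicit solution -/

noncomputable def odeD (c : ℝ) (t : ℝ) : ℝ := c * Real.exp (-4 * t)
noncomputable def odeS (c : ℝ) (t : ℝ) : ℝ := Real.sqrt (4 + odeD c t ^ 2)
noncomputable def odeA (c : ℝ) (t : ℝ) : ℝ := (odeS c t + odeD c t) / 2
noncomputable def odeB (c : ℝ) (t : ℝ) : ℝ := (odeS c t - odeD c t) / 2

lemma odeS_sq (c t : ℝ) : odeS c t ^ 2 = 4 + odeD c t ^ 2 := by
  have h : (0:ℝ) ≤ 4 + odeD c t ^ 2 := by positivity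
  simpa [odeS] using Real.sq_sqrt h

lemma odeS_pos (c t : ℝ) : 0 < odeS c t := by
  have : (0:ℝ) < 4 + odeD c t ^ 2 := by positivity
  exact Real.sqrt_pos.2 this

lemma odeD_nonneg {c : ℝ} (hc : 0 ≤ c) (t : ℝ) : 0 ≤ odeD c t := by
  have := Real.exp_pos (-4 * t); unfold odeD; positivity

lemma odeD_lt_odeS {c : ℝ} (hc : 0 ≤ c) (t : ℝ) : odeD c t < odeS c t := by
  have h2 : odeD c t ^ 2 < odeS c t ^ 2 := by
    rw [odeS_sq]; linarith
  exact lt_of_pow_lt_pow_left₀ 2 (odeS_pos c t).le h2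

lemma odeB_pos {c : ℝ} (hc : 0 ≤ c) (t : ℝ) : 0 < odeB c t := by
  have := odeD_lt_odeS hc t; unfold odeB; linarith

lemma odeA_pos {c : ℝ} (hc : 0 ≤ c) (t : ℝ) : 0 < odeA c t := by
  have h1 := odeS_pos c t; have h2 := odeD_nonneg hc t; unfold odeA; linarith

lemma odeA_mul_odeB {c : ℝ} (t : ℝ) : odeA c t * odeB c t = 1 := by
  have h := odeS_sq c t
  unfold odeA odeB
  nlinarith [h]

lemma odeD_hasDerivAt (c t : ℝ) : HasDerivAt (odeD c) (-4 * odeD c t) t := by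
  have h : HasDerivAt (fun x : ℝ => c * Real.exp (-4 * x))
      (c * (Real.exp (-4 * t) * (-4 * 1))) t :=
    (((hasDerivAt_id t).const_mul (-4)).exp).const_mul c
  convert h using 1
  · rfl
  unfold odeD; ring

lemma odeS_hasDerivAt (c t : ℝ) :
    HasDerivAt (odeS c) (-4 * odeD c t ^ 2 / odeS c t) t := by
  have hD := odeD_hasDerivAt c t
  have hpos : (0:ℝ) < 4 + odeD c t ^ 2 := by positivity
  have hinner : HasDerivAt (fun x => 4 + odeD c x ^ 2)
      ((2 : ℕ) * odeD c t ^ (2 - 1) * (-4 * odeD c t)) t := ((hD.pow 2).const_add 4)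
  have h := hinner.sqrt hpos.ne'
  convert h using 1
  · rfl
  have hSpos := odeS_pos c t
  have : Real.sqrt (4 + odeD c t ^ 2) = odeS c t := rfl
  rw [this]
  field_simp
  ring

lemma odeA_add_odeB (c t : ℝ) : odeA c t + odeB c t = odeS c t := by
  unfold odeA odeB; ring

lemma odeA_hasDerivAt {c : ℝ} (hc : 0 ≤ c) (t : ℝ) :
    HasDerivAt (odeA c) (-4 / odeB c t + 8 / (odeA c t + odeB c t)) t := by
  have h : HasDerivAt (odeA c)
      ((-4 * odeD c t ^ 2 / odeS c t + -4 * odeD c t) / 2) t :=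
    ((odeS_hasDerivAt c t).add (odeD_hasDerivAt c t)).div_const 2
  convert h using 1
  rw [odeA_add_odeB]
  have hS := odeS_pos c t
  have hB := odeB_pos hc t
  have hsq := odeS_sq c t
  have hBeq : odeB c t = (odeS c t - odeD c t) / 2 := rfl
  rw [hBeq]
  rw [hBeq] at hB
  have hSD : odeS c t - odeD c t ≠ 0 := by intro h0; rw [h0] at hB; norm_num at hB
  field_simp
  linear_combination (4 * odeD c t) * hsq

lemma odeB_hasDerivAt {c : ℝ} (hc : 0 ≤ c) (t : ℝ) :
    HasDerivAt (odeB c) (-4 / odeA c t + 8 / (odeA c t + odeB c t)) t := by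
  have h : HasDerivAt (odeB c)
      ((-4 * odeD c t ^ 2 / odeS c t - -4 * odeD c t) / 2) t :=
    ((odeS_hasDerivAt c t).sub (odeD_hasDerivAt c t)).div_const 2
  convert h using 1
  rw [odeA_add_odeB]
  have hS := odeS_pos c t
  have hA := odeA_pos hc t
  have hsq := odeS_sq c t
  have hAeq : odeA c t = (odeS c t + odeD c t) / 2 := rfl
  rw [hAeq]
  rw [hAeq] at hA
  have hSD : odeS c t + odeD c t ≠ 0 := by intro h0; rw [h0] at hA; norm_num at hA
  field_simp
  linear_combination (-4 * odeD c t) * hsq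

lemma odeS_zero {a₀ b₀ : ℝ} (hb : 0 < b₀) (hba : b₀ ≤ a₀) (hab : a₀ * b₀ = 1) :
    odeS (a₀ - b₀) 0 = a₀ + b₀ := by
  have h1 : odeD (a₀ - b₀) 0 = a₀ - b₀ := by simp [odeD]
  have h2 : 4 + (a₀ - b₀) ^ 2 = (a₀ + b₀) ^ 2 := by linear_combination (-4) * hab
  have h3 : 0 ≤ a₀ + b₀ := by linarith
  rw [odeS, h1, h2, Real.sqrt_sq h3]

lemma odeA_zero {a₀ b₀ : ℝ} (hb : 0 < b₀) (hba : b₀ ≤ a₀) (hab : a₀ * b₀ = 1) :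
    odeA (a₀ - b₀) 0 = a₀ := by
  have h1 : odeD (a₀ - b₀) 0 = a₀ - b₀ := by simp [odeD]
  rw [odeA, odeS_zero hb hba hab, h1]; ring

lemma odeB_zero {a₀ b₀ : ℝ} (hb : 0 < b₀) (hba : b₀ ≤ a₀) (hab : a₀ * b₀ = 1) :
    odeB (a₀ - b₀) 0 = b₀ := by
  have h1 : odeD (a₀ - b₀) 0 = a₀ - b₀ := by simp [odeD]
  rw [odeB, odeS_zero hb hba hab, h1]; ring

lemma ode_isODESol {a₀ b₀ : ℝ} (hb : 0 < b₀) (hba : b₀ ≤ a₀) (hab : a₀ * b₀ = 1) :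
    IsODESol a₀ b₀ (odeA (a₀ - b₀)) (odeB (a₀ - b₀)) := by
  have hc : (0:ℝ) ≤ a₀ - b₀ := by linarith
  refine ⟨odeA_zero hb hba hab, odeB_zero hb hba hab, fun t _ => ⟨odeA_pos hc t, odeB_pos hc t⟩,
    fun t _ => ⟨(odeA_hasDerivAt hc t).hasDerivWithinAt, (odeB_hasDerivAt hc t).hasDerivWithinAt⟩⟩

lemma odeB_le_odeA {c : ℝ} (hc : 0 ≤ c) (t : ℝ) : odeB c t ≤ odeA c t := by
  have := odeD_nonneg hc t; unfold odeA odeB; linarith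

lemma ode_antitone {c : ℝ} (hc : 0 ≤ c) :
    AntitoneOn (fun t => odeA c t + odeB c t) (Set.Ici 0) := by
  intro x _ y _ hxy
  simp only [odeA_add_odeB]
  apply Real.sqrt_le_sqrt
  have h1 : odeD c y ≤ odeD c x := by
    unfold odeD
    exact mul_le_mul_of_nonneg_left (Real.exp_le_exp.2 (by linarith)) hc
  have h2 : 0 ≤ odeD c y := odeD_nonneg hc y
  nlinarith

/-! ### Auxiliary: uniqueness -/

/-- The vector field of the ODE system. -/
noncomputable def odeV : ℝ × ℝ → ℝ × ℝ :=
  fun p => (-4 / p.2 + 8 / (p.1 + p.2), -4 / p.1 + 8 / (p.1 + p.2))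

lemma odeV_contDiffOn :
    ContDiffOn ℝ 1 odeV {p : ℝ × ℝ | 0 < p.1 ∧ 0 < p.2} := by
  have h1 : ContDiffOn ℝ 1 (fun p : ℝ × ℝ => -4 / p.2 + 8 / (p.1 + p.2))
      {p : ℝ × ℝ | 0 < p.1 ∧ 0 < p.2} := by
    apply ContDiffOn.add
    · exact contDiffOn_const.div contDiff_snd.contDiffOn (fun p hp => hp.2.ne')
    · exact contDiffOn_const.div (contDiff_fst.add contDiff_snd).contDiffOn
        (fun p hp => by have := hp.1; have := hp.2; positivity)
  have h2 : ContDiffOn ℝ 1 (fun p : ℝ × ℝ => -4 / p.1 + 8 / (p.1 + p.2))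
      {p : ℝ × ℝ | 0 < p.1 ∧ 0 < p.2} := by
    apply ContDiffOn.add
    · exact contDiffOn_const.div contDiff_fst.contDiffOn (fun p hp => hp.1.ne')
    · exact contDiffOn_const.div (contDiff_fst.add contDiff_snd).contDiffOn
        (fun p hp => by have := hp.1; have := hp.2; positivity)
  exact h1.prodMk h2

lemma odeV_lipschitz {ε M : ℝ} (hε : 0 < ε) :
    ∃ K : NNReal, LipschitzOnWith K odeV (Set.Icc ε M ×ˢ Set.Icc ε M) := by
  set U : Set (ℝ × ℝ) := {p : ℝ × ℝ | 0 < p.1 ∧ 0 < p.2} with hU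
  have hUopen : IsOpen U :=
    (isOpen_lt continuous_const continuous_fst).inter
      (isOpen_lt continuous_const continuous_snd)
  set s : Set (ℝ × ℝ) := Set.Icc ε M ×ˢ Set.Icc ε M with hs
  have hsub : s ⊆ U := by
    rintro ⟨x, y⟩ ⟨hx, hy⟩
    exact ⟨lt_of_lt_of_le hε hx.1, lt_of_lt_of_le hε hy.1⟩
  have hcompact : IsCompact s := (isCompact_Icc).prod isCompact_Icc
  have hconv : Convex ℝ s := (convex_Icc _ _).prod (convex_Icc _ _)
  have hfd : ContinuousOn (fderiv ℝ odeV) U :=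
    odeV_contDiffOn.continuousOn_fderiv_of_isOpen hUopen le_rfl
  obtain ⟨C, hC⟩ := hcompact.exists_bound_of_continuousOn (hfd.mono hsub)
  refine ⟨C.toNNReal, ?_⟩
  apply hconv.lipschitzOnWith_of_nnnorm_hasFDerivWithin_le
    (f' := fun x => fderiv ℝ odeV x)
  · intro x hx
    exact (((odeV_contDiffOn.contDiffAt (hUopen.mem_nhds (hsub hx))).differentiableAt
      one_ne_zero).hasFDerivAt).hasFDerivWithinAt
  · intro x hx
    have : ‖fderiv ℝ odeV x‖ ≤ C := hC x hx
    rw [← norm_toNNReal]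
    exact Real.toNNReal_mono this

lemma ode_unique {a₀ b₀ : ℝ} {A B A' B' : ℝ → ℝ} (h : IsODESol a₀ b₀ A B)
    (h' : IsODESol a₀ b₀ A' B') :
    ∀ t ∈ Set.Ici (0:ℝ), A' t = A t ∧ B' t = B t := by
  intro T hT
  obtain ⟨hA0, hB0, hpos, hder⟩ := h
  obtain ⟨hA0', hB0', hpos', hder'⟩ := h'
  have hT0 : (0:ℝ) ≤ T := hT
  have hAc : ContinuousOn A (Icc 0 T) := fun τ hτ =>
    ((hder τ hτ.1).1.continuousWithinAt).mono Icc_subset_Ici_self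
  have hBc : ContinuousOn B (Icc 0 T) := fun τ hτ =>
    ((hder τ hτ.1).2.continuousWithinAt).mono Icc_subset_Ici_self
  have hAc' : ContinuousOn A' (Icc 0 T) := fun τ hτ =>
    ((hder' τ hτ.1).1.continuousWithinAt).mono Icc_subset_Ici_self
  have hBc' : ContinuousOn B' (Icc 0 T) := fun τ hτ =>
    ((hder' τ hτ.1).2.continuousWithinAt).mono Icc_subset_Ici_self
  set m : ℝ → ℝ := fun τ => min (min (A τ) (B τ)) (min (A' τ) (B' τ)) with hm
  set q : ℝ → ℝ := fun τ => max (max (A τ) (B τ)) (max (A' τ) (B' τ)) with hq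
  have hmc : ContinuousOn m (Icc 0 T) := (hAc.inf hBc).inf (hAc'.inf hBc')
  have hqc : ContinuousOn q (Icc 0 T) := (hAc.sup hBc).sup (hAc'.sup hBc')
  have hne : (Icc (0:ℝ) T).Nonempty := nonempty_Icc.2 hT0
  obtain ⟨τ₀, hτ₀, hmin⟩ := isCompact_Icc.exists_isMinOn hne hmc
  obtain ⟨τ₁, hτ₁, hmax⟩ := isCompact_Icc.exists_isMaxOn hne hqc
  set ε := m τ₀ with hε
  set M := q τ₁ with hM
  have hεpos : 0 < ε := by
    have h1 := hpos τ₀ hτ₀.1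
    have h2 := hpos' τ₀ hτ₀.1
    exact lt_min (lt_min h1.1 h1.2) (lt_min h2.1 h2.2)
  obtain ⟨K, hK⟩ := odeV_lipschitz (M := M) hεpos
  have bounds : ∀ f : ℝ → ℝ, (∀ τ, m τ ≤ f τ ∧ f τ ≤ q τ) →
      ∀ τ ∈ Icc (0:ℝ) T, f τ ∈ Icc ε M := by
    intro f hf τ hτ
    exact ⟨le_trans (hmin hτ) (hf τ).1, le_trans (hf τ).2 (hmax hτ)⟩
  have hbA : ∀ τ ∈ Icc (0:ℝ) T, A τ ∈ Icc ε M :=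
    bounds A (fun τ => ⟨le_trans (min_le_left _ _) (min_le_left _ _),
      le_trans (le_max_left _ _) (le_max_left _ _)⟩)
  have hbB : ∀ τ ∈ Icc (0:ℝ) T, B τ ∈ Icc ε M :=
    bounds B (fun τ => ⟨le_trans (min_le_left _ _) (min_le_right _ _),
      le_trans (le_max_right _ _) (le_max_left _ _)⟩)
  have hbA' : ∀ τ ∈ Icc (0:ℝ) T, A' τ ∈ Icc ε M :=
    bounds A' (fun τ => ⟨le_trans (min_le_right _ _) (min_le_left _ _),
      le_trans (le_max_left _ _) (le_max_right _ _)⟩)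
  have hbB' : ∀ τ ∈ Icc (0:ℝ) T, B' τ ∈ Icc ε M :=
    bounds B' (fun τ => ⟨le_trans (min_le_right _ _) (min_le_right _ _),
      le_trans (le_max_right _ _) (le_max_right _ _)⟩)
  have key : EqOn (fun τ => (A' τ, B' τ)) (fun τ => (A τ, B τ)) (Icc 0 T) := by
    apply ODE_solution_unique_of_mem_Icc_right
      (v := fun _ => odeV) (s := fun _ => Set.Icc ε M ×ˢ Set.Icc ε M) (K := K)
    · exact fun _ _ => hK
    · exact hAc'.prodMk hBc'
    · intro τ hτ
      exact ((hder' τ hτ.1).1.mono (Ici_subset_Ici.2 hτ.1)).prodMk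
        ((hder' τ hτ.1).2.mono (Ici_subset_Ici.2 hτ.1))
    · intro τ hτ
      exact ⟨hbA' τ (Ico_subset_Icc_self hτ), hbB' τ (Ico_subset_Icc_self hτ)⟩
    · exact hAc.prodMk hBc
    · intro τ hτ
      exact ((hder τ hτ.1).1.mono (Ici_subset_Ici.2 hτ.1)).prodMk
        ((hder τ hτ.1).2.mono (Ici_subset_Ici.2 hτ.1))
    · intro τ hτ
      exact ⟨hbA τ (Ico_subset_Icc_self hτ), hbB τ (Ico_subset_Icc_self hτ)⟩
    · simp only [hA0, hB0, hA0', hB0']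
  have hTT := key (right_mem_Icc.2 hT0)
  exact ⟨congrArg Prod.fst hTT, congrArg Prod.snd hTT⟩

theorem statement8 (a₀ b₀ : ℝ) (hb : 0 < b₀) (hba : b₀ ≤ a₀)
    (hab : a₀ * b₀ = 1) :
    ∃ A B : ℝ → ℝ, IsODESol a₀ b₀ A B ∧
      (∀ A' B' : ℝ → ℝ, IsODESol a₀ b₀ A' B' →
        ∀ t ∈ Set.Ici (0 : ℝ), A' t = A t ∧ B' t = B t) ∧
      (∀ t ∈ Set.Ici (0 : ℝ), A t * B t = 1 ∧ B t ≤ A t) ∧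
      AntitoneOn (fun t => A t + B t) (Set.Ici 0) := by
  have hc : (0:ℝ) ≤ a₀ - b₀ := by linarith
  exact ⟨odeA (a₀ - b₀), odeB (a₀ - b₀), ode_isODESol hb hba hab,
    fun A' B' h' => ode_unique (ode_isODESol hb hba hab) h',
    fun t _ => ⟨odeA_mul_odeB t, odeB_le_odeA hc t⟩,
    ode_antitone hc⟩
end

section
/- Let a₀ > b₀ > 0 with a₀ b₀ = 1 and a₀ + b₀ < Λ, and let C > 0. Suppose that for each sufficiently small τ > 0 there are sequences (a_τ(k))_{k∈ℕ}, (b_τ(k))_{k∈ℕ} of positive reals with a_τ(0) = a₀, b_τ(0) = b₀, a_τ(k) b_τ(k) = 1 and a_τ(k+1) + b_τ(k+1) ≤ a_τ(k) + b_τ(k) for all k, defined by a_τ(k+1) = a_τ(k) − 2 x_τ(k) and b_τ(k+1) = b_τ(k) + 2 b_τ(k) x_τ(k)/(a_τ(k) − 2 x_τ(k)), where the increments satisfy | x_τ(k) − τ · 2(a_τ(k) − b_τ(k))/(b_τ(k)(a_τ(k) + b_τ(k))) | ≤ C τ² for all k. Define the piecewise-constant interpolations a^τ(t) := a_τ(⌊t/τ⌋)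 and b^τ(t) := b_τ(⌊t/τ⌋). Then, as τ → 0, a^τ and b^τ converge locally uniformly on [0, ∞) to the unique solution (ã, b̃) of the ODE system dã/dt = −4/b̃ + 8/(ã + b̃), db̃/dt = −4/ã + 8/(ã + b̃) with initial data ã(0) = a₀, b̃(0) = b₀. -/
open Set Filter

/-! ### Auxiliary function `hmfn` : `d ↦ (d + √(d²+4))/2` -/

noncomputable def hmfn (d : ℝ) : ℝ := (d + Real.sqrt (d^2+4))/2

lemma hm_sq (d : ℝ) : (Real.sqrt (d^2+4))^2 = d^2+4 :=
  Real.sq_sqrt (by positivity)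

lemma hm_abs_lt (d : ℝ) : |d| < Real.sqrt (d^2+4) := by
  have h := hm_sq d
  have h0 : 0 ≤ Real.sqrt (d^2+4) := Real.sqrt_nonneg _
  nlinarith [abs_nonneg d, sq_abs d]

lemma hm_pos (d : ℝ) : 0 < hmfn d := by
  have h1 := hm_abs_lt d
  have h2 : -d ≤ |d| := neg_le_abs d
  unfold hmfn; nlinarith

lemma hm_lip (d d' : ℝ) : |hmfn d - hmfn d'| ≤ |d - d'| := by
  have hu := hm_sq d
  have hv := hm_sq d'
  set u := Real.sqrt (d^2+4) with hud
  set v := Real.sqrt (d'^2+4) with hvd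
  have hu0 : 0 < u := lt_of_le_of_lt (abs_nonneg d) (hm_abs_lt d)
  have hv0 : 0 < v := lt_of_le_of_lt (abs_nonneg d') (hm_abs_lt d')
  have hprod : u*v ≥ d*d' := by
    nlinarith [neg_le_abs d, le_abs_self d, neg_le_abs d', le_abs_self d',
      hm_abs_lt d, hm_abs_lt d', mul_pos hu0 hv0, abs_nonneg d, abs_nonneg d',
      mul_le_mul (le_of_lt (hm_abs_lt d)) (le_of_lt (hm_abs_lt d')) (abs_nonneg d') (le_of_lt hu0),
      abs_mul d d', le_abs_self (d*d'), neg_le_abs (d*d')]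
  have hsq : (u-v)^2 ≤ (d-d')^2 := by nlinarith [sq_nonneg (u-v), sq_nonneg (d+d')]
  have huv : |u - v| ≤ |d - d'| := by
    rw [← sq_abs (u-v), ← sq_abs (d-d')] at hsq
    exact (pow_le_pow_iff_left₀ (abs_nonneg _) (abs_nonneg _) two_ne_zero).mp hsq
  have h1 : |hmfn d - hmfn d'| = |(d - d') + (u - v)|/2 := by
    unfold hmfn
    rw [show (d + √(d ^ 2 + 4)) / 2 - (d' + √(d' ^ 2 + 4)) / 2 = ((d - d') + (u - v))/2 by
      rw [← hud, ← hvd]; ring, abs_div]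
    simp
  rw [h1]
  have h2 := abs_add_le (d-d') (u-v)
  linarith

lemma hm_eq (a b : ℝ) (ha : 0 < a) (hb : 0 < b) (hab : a*b = 1) : hmfn (a-b) = a := by
  have : Real.sqrt ((a-b)^2+4) = a+b := by
    rw [show (a-b)^2+4 = (a+b)^2 by nlinarith]
    exact Real.sqrt_sq (by linarith)
  unfold hmfn; rw [this]; ring

lemma hm_mul (d : ℝ) : hmfn d * hmfn (-d) = 1 := by
  have := hm_sq d
  unfold hmfn
  rw [show (-d)^2 = d^2 by ring]
  nlinarith [hm_sq d]

/-! ### The explicit solution and its derivative -/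

lemma ode_value (d : ℝ) :
    -4 / hmfn (-d) + 8 / (hmfn d + hmfn (-d)) = -2*d - 2*d^2/Real.sqrt (d^2+4) := by
  have hu := hm_sq d
  set u := Real.sqrt (d^2+4) with hud
  have hu0 : 0 < u := lt_of_le_of_lt (abs_nonneg d) (hm_abs_lt d)
  have hd : |d| < u := hm_abs_lt d
  have h1 : hmfn (-d) = (-d + u)/2 := by unfold hmfn; rw [show (-d)^2 = d^2 by ring, ← hud]
  have h2 : hmfn d = (d + u)/2 := by unfold hmfn; rw [← hud]
  have hnd : 0 < -d + u := by have := le_abs_self d; linarith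
  rw [h1, h2]
  have hsum : (d+u)/2 + (-d+u)/2 = u := by ring
  rw [hsum]
  field_simp
  linear_combination (2*d) * hu

lemma ode_value2 (d : ℝ) :
    -4 / hmfn d + 8 / (hmfn d + hmfn (-d)) = 2*d - 2*d^2/Real.sqrt (d^2+4) := by
  have hu := hm_sq d
  set u := Real.sqrt (d^2+4) with hud
  have hu0 : 0 < u := lt_of_le_of_lt (abs_nonneg d) (hm_abs_lt d)
  have hd := hm_abs_lt d
  have h1 : hmfn (-d) = (-d + u)/2 := by unfold hmfn; rw [show (-d)^2 = d^2 by ring, ← hud]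
  have h2 : hmfn d = (d + u)/2 := by unfold hmfn; rw [← hud]
  have hpd : 0 < d + u := by have := neg_le_abs d; linarith
  rw [h1, h2, show (d+u)/2 + (-d+u)/2 = u by ring]
  field_simp
  linear_combination (-2*d) * hu

lemma hasDerivAt_D (d₀ t : ℝ) :
    HasDerivAt (fun t : ℝ => d₀ * Real.exp (-4*t)) (-4*(d₀ * Real.exp (-4*t))) t := by
  have h := ((hasDerivAt_id t).const_mul (-4:ℝ)).exp.const_mul d₀
  simpa [mul_comm, mul_assoc, mul_left_comm] using h

lemma hasDerivAt_sqrtD (d₀ t : ℝ) :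
    HasDerivAt (fun t => Real.sqrt ((d₀ * Real.exp (-4*t))^2+4))
      ((d₀ * Real.exp (-4*t)) * (-4*(d₀ * Real.exp (-4*t))) /
        Real.sqrt ((d₀ * Real.exp (-4*t))^2+4)) t := by
  have hD := hasDerivAt_D d₀ t
  have hD2 : HasDerivAt (fun t : ℝ => (d₀ * Real.exp (-4*t))^2 + 4)
      (2*(d₀ * Real.exp (-4*t)) * (-4*(d₀ * Real.exp (-4*t)))) t := by
    simpa using ((hD.pow 2).add_const 4)
  have hpos : ((d₀ * Real.exp (-4*t))^2 + 4) ≠ 0 := by positivity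
  have := (Real.hasDerivAt_sqrt hpos).comp t hD2
  refine this.congr_deriv ?_
  have hu0 : 0 < Real.sqrt ((d₀ * Real.exp (-4*t))^2+4) :=
    lt_of_le_of_lt (abs_nonneg _) (hm_abs_lt _)
  field_simp

lemma hasDerivAt_Aode (d₀ t : ℝ) :
    HasDerivAt (fun t => hmfn (d₀ * Real.exp (-4*t)))
      (-4 / hmfn (-(d₀ * Real.exp (-4*t))) +
        8 / (hmfn (d₀ * Real.exp (-4*t)) + hmfn (-(d₀ * Real.exp (-4*t))))) t := by
  have h1 : (fun t => hmfn (d₀ * Real.exp (-4*t))) =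
      fun t => ((d₀ * Real.exp (-4*t)) + Real.sqrt ((d₀ * Real.exp (-4*t))^2+4))/2 := by
    funext s; rfl
  rw [h1, ode_value]
  have hD := hasDerivAt_D d₀ t
  have hS := hasDerivAt_sqrtD d₀ t
  have := (hD.add hS).div_const 2
  refine this.congr_deriv ?_
  set D := d₀ * Real.exp (-4*t)
  have hu0 : 0 < Real.sqrt (D^2+4) := lt_of_le_of_lt (abs_nonneg D) (hm_abs_lt D)
  field_simp
  ring

lemma hasDerivAt_Bode (d₀ t : ℝ) :
    HasDerivAt (fun t => hmfn (-(d₀ * Real.exp (-4*t))))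
      (-4 / hmfn (d₀ * Real.exp (-4*t)) +
        8 / (hmfn (d₀ * Real.exp (-4*t)) + hmfn (-(d₀ * Real.exp (-4*t))))) t := by
  have h1 : (fun t => hmfn (-(d₀ * Real.exp (-4*t)))) =
      fun t => (-(d₀ * Real.exp (-4*t)) + Real.sqrt ((d₀ * Real.exp (-4*t))^2+4))/2 := by
    funext s; unfold hmfn
    rw [show (-(d₀ * Real.exp (-4*s)))^2 = (d₀ * Real.exp (-4*s))^2 by ring]
  rw [h1, ode_value2]
  have hD := (hasDerivAt_D d₀ t).neg
  have hS := hasDerivAt_sqrtD d₀ t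
  have := (hD.add hS).div_const 2
  refine this.congr_deriv ?_
  set D := d₀ * Real.exp (-4*t)
  have hu0 : 0 < Real.sqrt (D^2+4) := lt_of_le_of_lt (abs_nonneg D) (hm_abs_lt D)
  field_simp
  ring

/-! ### The scalar vector field -/

noncomputable def ffield (x : ℝ) : ℝ := -4*x + 8*x/(x^2+1)

lemma ffield_lip : LipschitzWith 12 ffield := by
  apply LipschitzWith.of_dist_le_mul
  intro x y
  rw [Real.dist_eq, Real.dist_eq]
  have hx : (0:ℝ) < x^2+1 := by positivity
  have hy : (0:ℝ) < y^2+1 := by positivity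
  have hfact : ffield x - ffield y = (x - y) * (-4 + 8*((1-x*y)/((x^2+1)*(y^2+1)))) := by
    unfold ffield; field_simp; ring
  rw [hfact, abs_mul, mul_comm |x-y| _]
  have hc : |(1-x*y)/((x^2+1)*(y^2+1))| ≤ 1 := by
    rw [abs_div, div_le_one (by positivity)]
    rw [abs_of_pos (by positivity : (0:ℝ) < (x^2+1)*(y^2+1))]
    cases abs_cases (1-x*y) with
    | inl h => rw [h.1]; nlinarith [sq_nonneg (x+y), sq_nonneg (x*y)]
    | inr h => rw [h.1]; nlinarith [sq_nonneg (x-y), sq_nonneg (x*y)]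
  have hg : |(-4 + 8*((1-x*y)/((x^2+1)*(y^2+1))))| ≤ 12 := by
    have := abs_le.mp hc
    rw [abs_le]; constructor <;> nlinarith
  have h12 : ((12:NNReal):ℝ) = 12 := by norm_num
  rw [h12]
  exact mul_le_mul_of_nonneg_right hg (abs_nonneg _)

lemma field_eq (a b : ℝ) (ha : 0 < a) (hb : 0 < b) (hab : a * b = 1) :
    -4 / b + 8 / (a + b) = ffield a := by
  have hb1 : b = 1/a := by field_simp; linarith [hab]
  subst hb1
  unfold ffield
  have h1 : a + 1/a = (a^2+1)/a := by field_simp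
  rw [h1]
  field_simp

/-! ### Elementary exponential estimates -/

lemma exp_lip_neg (u v : ℝ) (hu : u ≤ 0) (hv : v ≤ 0) :
    |Real.exp u - Real.exp v| ≤ |u - v| := by
  wlog h : u ≤ v generalizing u v
  · rw [abs_sub_comm, abs_sub_comm u v]; exact this v u hv hu (le_of_not_ge h)
  have h1 : Real.exp v - Real.exp u ≤ v - u := by
    have h2 := Real.add_one_le_exp (-(v-u))
    have h3 := Real.exp_pos (v-u)
    have h4 : Real.exp u * Real.exp (v-u) = Real.exp v := by
      rw [← Real.exp_add]; ring_nf
    have h5 : Real.exp u ≤ 1 := Real.exp_le_one_iff.mpr hu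
    have h6 : Real.exp v ≤ 1 := Real.exp_le_one_iff.mpr hv
    have h7 : Real.exp (-(v-u)) * Real.exp (v-u) = 1 := by rw [← Real.exp_add]; simp
    nlinarith [Real.exp_pos u, Real.exp_pos v]
  have h8 : Real.exp u ≤ Real.exp v := Real.exp_le_exp.mpr h
  rw [abs_sub_comm, abs_of_nonneg (by linarith), abs_sub_comm, abs_of_nonneg (by linarith)]
  linarith

lemma exp_q_est (τ : ℝ) (h0 : 0 ≤ τ) :
    |(1-4*τ) - Real.exp (-(4*τ))| ≤ 16*τ^2 := by
  have h1 := Real.add_one_le_exp (-(4*τ))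
  have h2 := Real.add_one_le_exp (4*τ)
  have he : Real.exp (-(4*τ)) * Real.exp (4*τ) = 1 := by rw [← Real.exp_add]; simp
  rw [abs_le]
  constructor
  · nlinarith [Real.exp_pos (-(4*τ)), Real.exp_pos (4*τ)]
  · nlinarith [Real.exp_pos (-(4*τ)), Real.exp_pos (4*τ)]

lemma pow_exp_est (τ : ℝ) (h0 : 0 ≤ τ) (h4 : τ ≤ 1/4) :
    ∀ k : ℕ, |(1-4*τ)^k - (Real.exp (-(4*τ)))^k| ≤ 16*τ^2*k := by
  intro k
  induction k with
  | zero => simp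
  | succ k ih =>
    set q := 1-4*τ with hqd
    set E := Real.exp (-(4*τ)) with hEd
    have hq0 : 0 ≤ q := by rw [hqd]; linarith
    have hq1 : q ≤ 1 := by rw [hqd]; linarith
    have hE0 : 0 ≤ E := le_of_lt (Real.exp_pos _)
    have hE1 : E ≤ 1 := Real.exp_le_one_iff.mpr (by linarith)
    have key : q^(k+1) - E^(k+1) = q*(q^k - E^k) + (q - E)*E^k := by ring
    rw [key]
    calc |q*(q^k - E^k) + (q - E)*E^k| ≤ |q*(q^k - E^k)| + |(q-E)*E^k| := abs_add_le _ _
      _ = q * |q^k - E^k| + (|q - E|) * E^k := by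
          rw [abs_mul, abs_mul, abs_of_nonneg hq0, abs_of_nonneg (pow_nonneg hE0 k)]
      _ ≤ 1*(16*τ^2*k) + (16*τ^2)*1 := by
          apply add_le_add
          · exact mul_le_mul hq1 ih (abs_nonneg _) zero_le_one
          · exact mul_le_mul (exp_q_est τ h0) (pow_le_one₀ hE0 hE1) (pow_nonneg hE0 k)
              (by positivity)
      _ = 16*τ^2*(k+1 : ℕ) := by push_cast; ring

/-! ### One step of the discrete scheme -/

set_option maxHeartbeats 2000000 in
lemma step_est (S C τ a b x a' b' x₀ : ℝ)
    (hS : 2 ≤ S) (hC : 0 < C) (hτ0 : 0 < τ) (hτ1 : τ ≤ 1)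
    (ha : 0 < a) (hb : 0 < b) (ha' : 0 < a') (hb' : 0 < b')
    (hab : a*b = 1) (hab' : a'*b' = 1)
    (haS : a ≤ S) (hbS : b ≤ S) (haS' : a' ≤ S) (hbS' : b' ≤ S)
    (hrec : a' = a - 2*x)
    (hx0 : x₀ = τ * (2*(a-b)/(b*(a+b))))
    (he : |x - x₀| ≤ C*τ^2) :
    |(a' - b') - (1-4*τ)*(a-b)| ≤ (8*S^6*(2*S^3+C) + 2*C*(1+S^2))*τ^2 := by
  have hS0 : (0:ℝ) < S := by linarith
  have hSa : 1 ≤ S*a := by nlinarith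
  have hSb : 1 ≤ S*b := by nlinarith
  have hSa' : 1 ≤ S*a' := by nlinarith
  have hbinv : b = 1/a := by field_simp; linarith [hab]
  have hbinv' : b' = 1/a' := by field_simp; linarith [hab']
  have habsum : 0 < a + b := by linarith
  have key : (a' - b') - (1-4*τ)*(a-b) =
      (-4*x₀*x*b/(a*a')) + (-2*(x-x₀)*((a'+b)/a')) := by
    subst hbinv hbinv' hrec hx0
    have h2x : a - 2*x ≠ 0 := ne_of_gt ha'
    have ha0 : a ≠ 0 := ne_of_gt ha
    have hsum : a + 1/a ≠ 0 := by positivity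
    field_simp
    ring
  rw [key]
  have habs : |a - b| ≤ S := abs_le.mpr ⟨by linarith, by linarith⟩
  have hx₀b : |x₀| ≤ 2*τ*S^3 := by
    rw [hx0, abs_mul, abs_of_pos hτ0, abs_div, abs_of_pos (by positivity : (0:ℝ) < b*(a+b))]
    have h1 : |2*(a-b)| ≤ 2*S := by rw [abs_mul, abs_of_pos (by norm_num : (0:ℝ) < 2)]; linarith
    have h2 : 1 ≤ S^2*(b*(a+b)) := by nlinarith [hab, hS, sq_nonneg (S*b), hSb, hb, habsum]
    have hq : |2*(a-b)| / (b*(a+b)) ≤ 2*S^3 := by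
      rw [div_le_iff₀ (by positivity : (0:ℝ) < b*(a+b))]
      nlinarith [mul_le_mul_of_nonneg_left h2 (by positivity : (0:ℝ) ≤ 2*S), abs_nonneg (2*(a-b))]
    calc τ * (|2*(a-b)| / (b*(a+b))) ≤ τ * (2*S^3) := mul_le_mul_of_nonneg_left hq hτ0.le
      _ = 2*τ*S^3 := by ring
  have hxb : |x| ≤ τ*(2*S^3+C) := by
    have := abs_sub_abs_le_abs_sub x x₀
    have h2 : |x| ≤ |x₀| + C*τ^2 := by linarith [he]
    have hCt : C*τ^2 ≤ C*τ := by
      have h3 := mul_le_mul_of_nonneg_left hτ1 (mul_pos hC hτ0).le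
      nlinarith [h3]
    linarith [hx₀b, h2, hCt]
  have hterm1 : |(-4*x₀*x*b/(a*a'))| ≤ 8*S^6*(2*S^3+C)*τ^2 := by
    rw [abs_div, abs_of_pos (mul_pos ha ha'), div_le_iff₀ (mul_pos ha ha')]
    have h1 : |(-4*x₀*x*b)| = 4*(abs x₀ * abs x)*b := by
      rw [show (-4*x₀*x*b) = (-4)*(x₀*x)*b by ring, abs_mul, abs_mul, abs_mul,
        abs_of_pos hb, abs_of_neg (by norm_num : (-4:ℝ) < 0)]
      ring
    rw [h1]
    have h2 : abs x₀ * abs x ≤ (2*τ*S^3)*(τ*(2*S^3+C)) :=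
      mul_le_mul hx₀b hxb (abs_nonneg _) (by positivity)
    have h3 : 4*(abs x₀ * abs x)*b ≤ 4*((2*τ*S^3)*(τ*(2*S^3+C)))*S := by
      have h3a := mul_le_mul
        (by linarith : 4*(abs x₀ * abs x) ≤ 4*((2*τ*S^3)*(τ*(2*S^3+C)))) hbS hb.le
        (by positivity)
      linarith [h3a]
    have haa : 1 ≤ S^2*(a*a') := by nlinarith
    nlinarith [mul_le_mul_of_nonneg_left haa (by positivity : (0:ℝ) ≤ 8*S^4*(2*S^3+C)*τ^2)]
  have hterm2 : |(-2*(x-x₀)*((a'+b)/a'))| ≤ 2*C*(1+S^2)*τ^2 := by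
    have h1 : |(-2*(x-x₀)*((a'+b)/a'))| = 2*(abs (x-x₀))*((a'+b)/a') := by
      rw [show (-2*(x-x₀)*((a'+b)/a')) = (-2)*((x-x₀)*((a'+b)/a')) by ring, abs_mul, abs_mul,
        abs_of_neg (by norm_num : (-2:ℝ) < 0), abs_of_pos (by positivity : (0:ℝ) < (a'+b)/a')]
      ring
    rw [h1]
    have h4 : b ≤ S^2*a' := by nlinarith
    have h5 : (a'+b)/a' ≤ 1+S^2 := by
      rw [div_le_iff₀ ha']; nlinarith
    have h6 : 2*(abs (x-x₀)) ≤ 2*C*τ^2 := by linarith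
    calc 2*(abs (x-x₀))*((a'+b)/a') ≤ (2*C*τ^2)*(1+S^2) :=
          mul_le_mul h6 h5 (by positivity) (by positivity)
      _ = 2*C*(1+S^2)*τ^2 := by ring
  calc |(-4*x₀*x*b/(a*a')) + (-2*(x-x₀)*((a'+b)/a'))|
      ≤ |(-4*x₀*x*b/(a*a'))| + |(-2*(x-x₀)*((a'+b)/a'))| := abs_add_le _ _
    _ ≤ 8*S^6*(2*S^3+C)*τ^2 + 2*C*(1+S^2)*τ^2 := add_le_add hterm1 hterm2
    _ = (8*S^6*(2*S^3+C) + 2*C*(1+S^2))*τ^2 := by ring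

/-! ### The explicit solution is a solution -/

lemma Phi_sol (a₀ b₀ : ℝ) (hb : 0 < b₀) (ha : 0 < a₀) (hab : a₀ * b₀ = 1) :
    IsODESol a₀ b₀ (fun t => hmfn ((a₀-b₀) * Real.exp (-4*t)))
      (fun t => hmfn (-((a₀-b₀) * Real.exp (-4*t)))) := by
  refine ⟨?_, ?_, fun t _ => ⟨hm_pos _, hm_pos _⟩, fun t _ =>
    ⟨(hasDerivAt_Aode (a₀-b₀) t).hasDerivWithinAt, (hasDerivAt_Bode (a₀-b₀) t).hasDerivWithinAt⟩⟩
  · show hmfn ((a₀-b₀) * Real.exp (-4*0)) = a₀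
    rw [show (-4*(0:ℝ)) = 0 by ring, Real.exp_zero, mul_one]
    exact hm_eq a₀ b₀ ha hb hab
  · show hmfn (-((a₀-b₀) * Real.exp (-4*0))) = b₀
    rw [show (-4*(0:ℝ)) = 0 by ring, Real.exp_zero, mul_one, neg_sub]
    exact hm_eq b₀ a₀ hb ha (by linarith [hab, mul_comm a₀ b₀]; )

/-! ### Uniqueness -/

lemma sol_unique (a₀ b₀ : ℝ) (hb : 0 < b₀) (ha : 0 < a₀) (hab : a₀ * b₀ = 1)
    (P Q : ℝ → ℝ) (h : IsODESol a₀ b₀ P Q) :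
    ∀ t ∈ Set.Ici (0:ℝ), P t = hmfn ((a₀-b₀) * Real.exp (-4*t)) ∧
      Q t = hmfn (-((a₀-b₀) * Real.exp (-4*t))) := by
  obtain ⟨hP0, hQ0, hpos, hder⟩ := h
  -- the product is constant
  have hprod : ∀ t ∈ Set.Ici (0:ℝ), P t * Q t = 1 := by
    intro T hT
    have hT0 : (0:ℝ) ≤ T := hT
    have hcont : ContinuousOn (fun t => P t * Q t) (Icc 0 T) := fun t ht =>
      (((hder t ht.1).1.mul (hder t ht.1).2).continuousWithinAt).mono Icc_subset_Ici_self
    have hder0 : ∀ x ∈ Ico (0:ℝ) T, HasDerivWithinAt (fun t => P t * Q t) 0 (Ici x) x := by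
      intro x hx
      have hx0 : x ∈ Set.Ici (0:ℝ) := hx.1
      have h1 := ((hder x hx0).1.mul (hder x hx0).2).mono (Ici_subset_Ici.mpr hx.1)
      refine h1.congr_deriv ?_
      have hPp := (hpos x hx0).1
      have hQp := (hpos x hx0).2
      have hs : P x + Q x > 0 := by linarith
      field_simp
      ring
    have := constant_of_has_deriv_right_zero hcont hder0 T (right_mem_Icc.mpr hT0)
    simpa [hP0, hQ0, hab] using this
  -- both components satisfy the scalar ODE
  have hPf : ∀ x ∈ Set.Ici (0:ℝ), HasDerivWithinAt P (ffield (P x)) (Ici 0) x := by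
    intro x hx
    have h1 := (hder x hx).1
    rwa [field_eq (P x) (Q x) (hpos x hx).1 (hpos x hx).2 (hprod x hx)] at h1
  have hQf : ∀ x ∈ Set.Ici (0:ℝ), HasDerivWithinAt Q (ffield (Q x)) (Ici 0) x := by
    intro x hx
    have h1 := (hder x hx).2
    rw [add_comm (P x) (Q x)] at h1
    rwa [field_eq (Q x) (P x) (hpos x hx).2 (hpos x hx).1
      (by rw [mul_comm]; exact hprod x hx)] at h1
  set d₀ := a₀ - b₀ with hd₀
  have hΦf : ∀ x : ℝ, HasDerivAt (fun t => hmfn (d₀ * Real.exp (-4*t)))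
      (ffield (hmfn (d₀ * Real.exp (-4*x)))) x := by
    intro x
    have h1 := hasDerivAt_Aode d₀ x
    rwa [field_eq (hmfn (d₀ * Real.exp (-4*x))) (hmfn (-(d₀ * Real.exp (-4*x))))
      (hm_pos _) (hm_pos _) (hm_mul _)] at h1
  have hΨf : ∀ x : ℝ, HasDerivAt (fun t => hmfn (-(d₀ * Real.exp (-4*t))))
      (ffield (hmfn (-(d₀ * Real.exp (-4*x))))) x := by
    intro x
    have h1 := hasDerivAt_Bode d₀ x
    rw [add_comm (hmfn (d₀ * Real.exp (-4*x))) (hmfn (-(d₀ * Real.exp (-4*x))))] at h1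
    rwa [field_eq (hmfn (-(d₀ * Real.exp (-4*x)))) (hmfn (d₀ * Real.exp (-4*x)))
      (hm_pos _) (hm_pos _) (by rw [mul_comm]; exact hm_mul _)] at h1
  have hΦ0 : hmfn (d₀ * Real.exp (-4*(0:ℝ))) = a₀ := by
    rw [show (-4*(0:ℝ)) = 0 by ring, Real.exp_zero, mul_one, hd₀]
    exact hm_eq a₀ b₀ ha hb hab
  have hΨ0 : hmfn (-(d₀ * Real.exp (-4*(0:ℝ)))) = b₀ := by
    rw [show (-4*(0:ℝ)) = 0 by ring, Real.exp_zero, mul_one, hd₀, neg_sub]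
    exact hm_eq b₀ a₀ hb ha (by rw [mul_comm]; exact hab)
  intro t ht
  have ht0 : (0:ℝ) ≤ t := ht
  constructor
  · have := ODE_solution_unique (v := fun _ x => ffield x) (K := 12) (fun _ => ffield_lip)
      (f := P) (g := fun t => hmfn (d₀ * Real.exp (-4*t))) (a := 0) (b := t)
      (fun x hx => ((hder x hx.1).1.continuousWithinAt).mono Icc_subset_Ici_self)
      (fun x hx => (hPf x hx.1).mono (Ici_subset_Ici.mpr hx.1))
      (fun x _ => (hΦf x).continuousAt.continuousWithinAt)
      (fun x hx => (hΦf x).hasDerivWithinAt)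
      (by rw [hP0]; exact hΦ0.symm)
    exact this (right_mem_Icc.mpr ht0)
  · have := ODE_solution_unique (v := fun _ x => ffield x) (K := 12) (fun _ => ffield_lip)
      (f := Q) (g := fun t => hmfn (-(d₀ * Real.exp (-4*t)))) (a := 0) (b := t)
      (fun x hx => ((hder x hx.1).2.continuousWithinAt).mono Icc_subset_Ici_self)
      (fun x hx => (hQf x hx.1).mono (Ici_subset_Ici.mpr hx.1))
      (fun x _ => (hΨf x).continuousAt.continuousWithinAt)
      (fun x hx => (hΨf x).hasDerivWithinAt)
      (by rw [hQ0]; exact hΨ0.symm)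
    exact this (right_mem_Icc.mpr ht0)

set_option maxHeartbeats 2000000 in
theorem statement9 (a₀ b₀ Λ C : ℝ) (hb : 0 < b₀) (hba : b₀ < a₀)
    (hab : a₀ * b₀ = 1) (hΛ : a₀ + b₀ < Λ) (hC : 0 < C)
    (τmax : ℝ) (hτmax : 0 < τmax)
    (A B X : ℝ → ℕ → ℝ)
    (hinit : ∀ τ ∈ Set.Ioo (0 : ℝ) τmax, A τ 0 = a₀ ∧ B τ 0 = b₀)
    (hpos : ∀ τ ∈ Set.Ioo (0 : ℝ) τmax, ∀ k, 0 < A τ k ∧ 0 < B τ k)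
    (harea : ∀ τ ∈ Set.Ioo (0 : ℝ) τmax, ∀ k, A τ k * B τ k = 1)
    (hmono : ∀ τ ∈ Set.Ioo (0 : ℝ) τmax, ∀ k,
      A τ (k + 1) + B τ (k + 1) ≤ A τ k + B τ k)
    (hrecA : ∀ τ ∈ Set.Ioo (0 : ℝ) τmax, ∀ k,
      A τ (k + 1) = A τ k - 2 * X τ k)
    (hrecB : ∀ τ ∈ Set.Ioo (0 : ℝ) τmax, ∀ k,
      B τ (k + 1) = B τ k + 2 * B τ k * X τ k / (A τ k - 2 * X τ k))
    (hX : ∀ τ ∈ Set.Ioo (0 : ℝ) τmax, ∀ k,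
      |X τ k - τ * (2 * (A τ k - B τ k) / (B τ k * (A τ k + B τ k)))| ≤
        C * τ ^ 2) :
    ∃ Aode Bode : ℝ → ℝ, IsODESol a₀ b₀ Aode Bode ∧
      (∀ A' B' : ℝ → ℝ, IsODESol a₀ b₀ A' B' →
        ∀ t ∈ Set.Ici (0 : ℝ), A' t = Aode t ∧ B' t = Bode t) ∧
      TendstoLocallyUniformlyOn (fun τ t => A τ ⌊t / τ⌋₊) Aode
        (nhdsWithin 0 (Set.Ioo 0 τmax)) (Set.Ici 0) ∧
      TendstoLocallyUniformlyOn (fun τ t => B τ ⌊t / τ⌋₊) Bode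
        (nhdsWithin 0 (Set.Ioo 0 τmax)) (Set.Ici 0) := by
  have ha : 0 < a₀ := lt_trans hb hba
  set d₀ : ℝ := a₀ - b₀ with hd₀def
  have hd₀ : 0 < d₀ := by rw [hd₀def]; linarith
  set S : ℝ := a₀ + b₀ with hSdef
  have hS2 : 2 ≤ S := by nlinarith [sq_nonneg (a₀-b₀)]
  have hd₀S : d₀ ≤ S := by rw [hd₀def, hSdef]; linarith
  set K : ℝ := 8*S^6*(2*S^3+C) + 2*C*(1+S^2) with hKdef
  have hK : 0 < K := by
    have h1 : (0:ℝ) < S := by linarith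
    rw [hKdef]; positivity
  have master : ∀ T : ℝ, 0 ≤ T → ∀ τ ∈ Set.Ioo (0:ℝ) τmax, τ ≤ 1/4 →
      ∀ t ∈ Set.Icc (0:ℝ) T,
        |(A τ ⌊t/τ⌋₊ - B τ ⌊t/τ⌋₊) - d₀ * Real.exp (-4*t)| ≤ (K*T + 16*S*T + 4*S)*τ := by
    intro T hT τ hτ hτ4 t htmem
    have hτ0 : 0 < τ := hτ.1
    have hτ1 : τ ≤ 1 := by linarith
    have hsum : ∀ k, A τ k + B τ k ≤ S := by
      intro k
      induction k with
      | zero => rw [(hinit τ hτ).1, (hinit τ hτ).2]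
      | succ k ih => exact (hmono τ hτ k).trans ih
    have hbd : ∀ k, A τ k ≤ S ∧ B τ k ≤ S := fun k =>
      ⟨by linarith [(hpos τ hτ k).2, hsum k], by linarith [(hpos τ hτ k).1, hsum k]⟩
    have hstep : ∀ k, |(A τ (k+1) - B τ (k+1)) - (1-4*τ)*(A τ k - B τ k)| ≤ K*τ^2 := by
      intro k
      rw [hKdef]
      exact step_est S C τ (A τ k) (B τ k) (X τ k) (A τ (k+1)) (B τ (k+1))
        (τ * (2*(A τ k - B τ k)/(B τ k*(A τ k + B τ k))))
        hS2 hC hτ0 hτ1 (hpos τ hτ k).1 (hpos τ hτ k).2 (hpos τ hτ (k+1)).1 (hpos τ hτ (k+1)).2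
        (harea τ hτ k) (harea τ hτ (k+1)) (hbd k).1 (hbd k).2 (hbd (k+1)).1 (hbd (k+1)).2
        (hrecA τ hτ k) rfl (hX τ hτ k)
    have hq0 : (0:ℝ) ≤ 1-4*τ := by linarith
    have hq1 : 1-4*τ ≤ 1 := by linarith
    have hind : ∀ k : ℕ, |(A τ k - B τ k) - d₀*(1-4*τ)^k| ≤ K*τ^2*k := by
      intro k
      induction k with
      | zero =>
        rw [(hinit τ hτ).1, (hinit τ hτ).2]
        simp [hd₀def]
      | succ k ih =>
        have h1 := hstep k
        have heq : (A τ (k+1) - B τ (k+1)) - d₀*(1-4*τ)^(k+1) =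
            ((A τ (k+1) - B τ (k+1)) - (1-4*τ)*(A τ k - B τ k)) +
            (1-4*τ)*((A τ k - B τ k) - d₀*(1-4*τ)^k) := by ring
        rw [heq]
        calc |((A τ (k+1) - B τ (k+1)) - (1-4*τ)*(A τ k - B τ k)) +
            (1-4*τ)*((A τ k - B τ k) - d₀*(1-4*τ)^k)|
            ≤ |(A τ (k+1) - B τ (k+1)) - (1-4*τ)*(A τ k - B τ k)| +
              |(1-4*τ)*((A τ k - B τ k) - d₀*(1-4*τ)^k)| := abs_add_le _ _
          _ ≤ K*τ^2 + 1*(K*τ^2*k) := by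
              apply add_le_add h1
              rw [abs_mul, abs_of_nonneg hq0]
              exact mul_le_mul hq1 ih (abs_nonneg _) zero_le_one
          _ = K*τ^2*((k:ℝ)+1) := by ring
          _ = K*τ^2*((k+1 : ℕ):ℝ) := by push_cast; ring
    have ht0 : (0:ℝ) ≤ t := htmem.1
    have htT : t ≤ T := htmem.2
    set k := ⌊t/τ⌋₊ with hkdef
    have hk1 : (k:ℝ)*τ ≤ t := by
      have h0 := Nat.floor_le (div_nonneg ht0 hτ0.le)
      rw [hkdef]
      calc ((⌊t/τ⌋₊:ℝ))*τ ≤ (t/τ)*τ := by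
            apply mul_le_mul_of_nonneg_right h0 hτ0.le
        _ = t := by field_simp
    have hk2 : t ≤ (k:ℝ)*τ + τ := by
      have h2 := Nat.lt_floor_add_one (t/τ)
      rw [hkdef]
      have h3 : t/τ < (⌊t/τ⌋₊:ℝ) + 1 := h2
      have h4 := (div_lt_iff₀ hτ0).mp h3
      nlinarith
    have hkT : (k:ℝ)*τ ≤ T := le_trans hk1 htT
    have e1 : |(A τ k - B τ k) - d₀*(1-4*τ)^k| ≤ K*τ*T := by
      refine le_trans (hind k) ?_
      have h5 : K*τ^2*(k:ℝ) = (K*τ)*((k:ℝ)*τ) := by ring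
      rw [h5]
      exact mul_le_mul_of_nonneg_left hkT (by positivity)
    have e2 : |d₀*(1-4*τ)^k - d₀*(Real.exp (-(4*τ)))^k| ≤ 16*S*τ*T := by
      have h1 : |d₀*(1-4*τ)^k - d₀*(Real.exp (-(4*τ)))^k| =
          d₀ * |(1-4*τ)^k - (Real.exp (-(4*τ)))^k| := by
        rw [show d₀*(1-4*τ)^k - d₀*(Real.exp (-(4*τ)))^k =
          d₀*((1-4*τ)^k - (Real.exp (-(4*τ)))^k) by ring, abs_mul, abs_of_pos hd₀]
      rw [h1]
      calc d₀ * |(1-4*τ)^k - (Real.exp (-(4*τ)))^k| ≤ S * (16*τ^2*k) := by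
            exact mul_le_mul hd₀S (pow_exp_est τ hτ0.le hτ4 k) (abs_nonneg _)
              (by linarith)
        _ = (16*S*τ)*((k:ℝ)*τ) := by ring
        _ ≤ (16*S*τ)*T := by
            apply mul_le_mul_of_nonneg_left hkT (by positivity)
        _ = 16*S*τ*T := by ring
    have e3 : |d₀*(Real.exp (-(4*τ)))^k - d₀*Real.exp (-4*t)| ≤ 4*S*τ := by
      have hE : (Real.exp (-(4*τ)))^k = Real.exp ((k:ℝ)*(-(4*τ))) :=
        (Real.exp_nat_mul _ k).symm
      rw [hE]
      have h1 : |d₀*Real.exp ((k:ℝ)*(-(4*τ))) - d₀*Real.exp (-4*t)| =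
          d₀ * |Real.exp ((k:ℝ)*(-(4*τ))) - Real.exp (-4*t)| := by
        rw [show d₀*Real.exp ((k:ℝ)*(-(4*τ))) - d₀*Real.exp (-4*t) =
          d₀*(Real.exp ((k:ℝ)*(-(4*τ))) - Real.exp (-4*t)) by ring, abs_mul, abs_of_pos hd₀]
      rw [h1]
      have h2 : |Real.exp ((k:ℝ)*(-(4*τ))) - Real.exp (-4*t)| ≤ 4*τ := by
        have h3 := exp_lip_neg ((k:ℝ)*(-(4*τ))) (-4*t)
          (by nlinarith [Nat.cast_nonneg (α := ℝ) k]) (by linarith)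
        refine le_trans h3 ?_
        rw [abs_le]
        constructor <;> nlinarith
      calc d₀ * |Real.exp ((k:ℝ)*(-(4*τ))) - Real.exp (-4*t)| ≤ S * (4*τ) :=
            mul_le_mul hd₀S h2 (abs_nonneg _) (by linarith)
        _ = 4*S*τ := by ring
    have heq : (A τ k - B τ k) - d₀ * Real.exp (-4*t) =
        (((A τ k - B τ k) - d₀*(1-4*τ)^k) +
        (d₀*(1-4*τ)^k - d₀*(Real.exp (-(4*τ)))^k)) +
        (d₀*(Real.exp (-(4*τ)))^k - d₀*Real.exp (-4*t)) := by ring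
    calc |(A τ k - B τ k) - d₀ * Real.exp (-4*t)|
        ≤ K*τ*T + 16*S*τ*T + 4*S*τ := by
          rw [heq]
          have h6 := abs_add_le ((A τ k - B τ k) - d₀*(1-4*τ)^k)
            (d₀*(1-4*τ)^k - d₀*(Real.exp (-(4*τ)))^k)
          have h7 := abs_add_le (((A τ k - B τ k) - d₀*(1-4*τ)^k) +
            (d₀*(1-4*τ)^k - d₀*(Real.exp (-(4*τ)))^k))
            (d₀*(Real.exp (-(4*τ)))^k - d₀*Real.exp (-4*t))
          linarith [e1, e2, e3]
      _ = (K*T + 16*S*T + 4*S)*τ := by ring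
  -- general convergence helper
  have tconv : ∀ (F : ℝ → ℕ → ℝ) (f : ℝ → ℝ),
      (∀ T : ℝ, 0 ≤ T → ∀ τ ∈ Set.Ioo (0:ℝ) τmax, τ ≤ 1/4 → ∀ t ∈ Set.Icc (0:ℝ) T,
        |F τ ⌊t/τ⌋₊ - f t| ≤ (K*T + 16*S*T + 4*S)*τ) →
      TendstoLocallyUniformlyOn (fun τ t => F τ ⌊t / τ⌋₊) f
        (nhdsWithin 0 (Set.Ioo 0 τmax)) (Set.Ici 0) := by
    intro F f hmain
    rw [Metric.tendstoLocallyUniformlyOn_iff]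
    intro ε hε x hx
    refine ⟨Set.Ico 0 (x+1), ?_, ?_⟩
    · rw [show Set.Ico (0:ℝ) (x+1) = Set.Ici 0 ∩ Set.Iio (x+1) from (Set.Ici_inter_Iio).symm]
      exact Filter.inter_mem self_mem_nhdsWithin
        (mem_nhdsWithin_of_mem_nhds (Iio_mem_nhds (by linarith [mem_Ici.mp hx])))
    · set T : ℝ := x + 1 with hTdef
      have hT0 : 0 ≤ T := by rw [hTdef]; linarith [mem_Ici.mp hx]
      set M : ℝ := K*T + 16*S*T + 4*S with hMdef
      have hM : 0 < M := by
        have h1 : (0:ℝ) < S := by linarith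
        rw [hMdef]
        nlinarith [mul_nonneg (le_of_lt hK) hT0, mul_nonneg (by linarith : (0:ℝ) ≤ 16*S) hT0]
      set δ : ℝ := min (1/4) (ε/(2*M)) with hδdef
      have hδ : 0 < δ := by
        rw [hδdef]
        exact lt_min (by norm_num) (by positivity)
      have hev : ∀ᶠ τ' in nhdsWithin 0 (Set.Ioo 0 τmax), τ' < δ :=
        Filter.Eventually.filter_mono nhdsWithin_le_nhds (eventually_lt_nhds hδ)
      filter_upwards [self_mem_nhdsWithin, hev] with τ hτmem hτδ
      intro y hy
      have hymem : y ∈ Set.Icc (0:ℝ) T := ⟨hy.1, le_of_lt hy.2⟩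
      have hτ4 : τ ≤ 1/4 := le_trans hτδ.le (by rw [hδdef]; exact min_le_left _ _)
      have hbound := hmain T hT0 τ hτmem hτ4 y hymem
      have hMτ : M * τ < ε := by
        have h1 : τ < ε/(2*M) := lt_of_lt_of_le hτδ (by rw [hδdef]; exact min_le_right _ _)
        have h2 : M * τ < M * (ε/(2*M)) := mul_lt_mul_of_pos_left h1 hM
        have h3 : M * (ε/(2*M)) = ε/2 := by
          rw [hMdef] at hM ⊢
          field_simp
        calc M * τ < M * (ε/(2*M)) := h2
          _ = ε/2 := h3
          _ < ε := by linarith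
      rw [Real.dist_eq, abs_sub_comm]
      calc |F τ ⌊y/τ⌋₊ - f y| ≤ (K*T + 16*S*T + 4*S)*τ := hbound
        _ = M * τ := by rw [hMdef]
        _ < ε := hMτ
  refine ⟨fun t => hmfn (d₀ * Real.exp (-4*t)), fun t => hmfn (-(d₀ * Real.exp (-4*t))),
    Phi_sol a₀ b₀ hb ha hab, fun P Q h => sol_unique a₀ b₀ hb ha hab P Q h, ?_, ?_⟩
  · apply tconv
    intro T hT τ hτ hτ4 t htmem
    have hAeq : A τ ⌊t/τ⌋₊ = hmfn (A τ ⌊t/τ⌋₊ - B τ ⌊t/τ⌋₊) :=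
      (hm_eq _ _ (hpos τ hτ _).1 (hpos τ hτ _).2 (harea τ hτ _)).symm
    rw [hAeq]
    exact le_trans (hm_lip _ _) (master T hT τ hτ hτ4 t htmem)
  · apply tconv
    intro T hT τ hτ hτ4 t htmem
    have hBeq : B τ ⌊t/τ⌋₊ = hmfn (-(A τ ⌊t/τ⌋₊ - B τ ⌊t/τ⌋₊)) := by
      rw [neg_sub]
      exact (hm_eq _ _ (hpos τ hτ _).2 (hpos τ hτ _).1
        (by rw [mul_comm]; exact harea τ hτ _)).symm
    rw [hBeq]
    refine le_trans (hm_lip _ _) ?_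
    rw [show (-(A τ ⌊t/τ⌋₊ - B τ ⌊t/τ⌋₊)) - (-(d₀ * Real.exp (-4*t))) =
      -((A τ ⌊t/τ⌋₊ - B τ ⌊t/τ⌋₊) - d₀ * Real.exp (-4*t)) by ring, abs_neg]
    exact master T hT τ hτ hτ4 t htmem
end

section
/- Let ã, b̃ : [0, ∞) → (0, ∞) be differentiable functions satisfying dã/dt = −4/b̃ + 8/(ã + b̃) and db̃/dt = −4/ã + 8/(ã + b̃) with ã(t) b̃(t) = 1 and ã(t) ≥ b̃(t) for all t ≥ 0. Then for all t ≥ 0, ã(t)/b̃(t) − 1 ≤ (ã(0)/b̃(0) − 1) e^{−4t}. In particular ã(t) → 1 and b̃(t) → 1 as t → ∞, i.e. the evolving rectangles converge exponentially fast to the unit square. -/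
open Set Filter

theorem statement10 (A B : ℝ → ℝ)
    (hpos : ∀ t ∈ Set.Ici (0 : ℝ), 0 < A t ∧ 0 < B t)
    (hode : ∀ t ∈ Set.Ici (0 : ℝ),
      HasDerivWithinAt A (-4 / B t + 8 / (A t + B t)) (Set.Ici 0) t ∧
      HasDerivWithinAt B (-4 / A t + 8 / (A t + B t)) (Set.Ici 0) t)
    (harea : ∀ t ∈ Set.Ici (0 : ℝ), A t * B t = 1)
    (hord : ∀ t ∈ Set.Ici (0 : ℝ), B t ≤ A t) :
    (∀ t ∈ Set.Ici (0 : ℝ),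
      A t / B t - 1 ≤ (A 0 / B 0 - 1) * Real.exp (-4 * t)) ∧
    Tendsto A atTop (nhds 1) ∧ Tendsto B atTop (nhds 1) := by
  -- basic facts
  have hBinv : ∀ t ∈ Set.Ici (0 : ℝ), B t = 1 / A t := by
    intro t ht
    have h := harea t ht
    field_simp [ne_of_gt (hpos t ht).1] at h ⊢
    linarith [h]
  have hA1 : ∀ t ∈ Set.Ici (0 : ℝ), 1 ≤ A t := by
    intro t ht
    obtain ⟨ha, hb⟩ := hpos t ht
    nlinarith [hord t ht, harea t ht]
  have hratio : ∀ t ∈ Set.Ici (0 : ℝ), A t / B t = (A t) ^ 2 := by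
    intro t ht
    rw [hBinv t ht]
    have := (hpos t ht).1.ne'
    field_simp
  -- the auxiliary function
  set F : ℝ → ℝ := fun t => ((A t) ^ 2 - 1) * Real.exp (4 * t) with hF
  set F' : ℝ → ℝ := fun t =>
    ((2 : ℕ) * A t ^ 1 * (-4 / B t + 8 / (A t + B t))) * Real.exp (4 * t)
      + ((A t) ^ 2 - 1) * (Real.exp (4 * t) * 4) with hF'
  have hder : ∀ t ∈ Set.Ici (0 : ℝ), HasDerivWithinAt F (F' t) (Set.Ici 0) t := by
    intro t ht
    have hA := (hode t ht).1
    have h1 : HasDerivWithinAt (fun s => (A s) ^ 2 - 1)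
        ((2 : ℕ) * A t ^ 1 * (-4 / B t + 8 / (A t + B t))) (Set.Ici 0) t :=
      (hA.pow 2).sub_const 1
    have h2 : HasDerivWithinAt (fun s => Real.exp (4 * s))
        (Real.exp (4 * t) * 4) (Set.Ici 0) t := by
      have : HasDerivWithinAt (fun s : ℝ => 4 * s) 4 (Set.Ici 0) t := by
        simpa using (hasDerivWithinAt_id t (Set.Ici 0)).const_mul 4
      simpa using this.exp
    exact h1.mul h2
  have hF'le : ∀ t ∈ Set.Ici (0 : ℝ), F' t ≤ 0 := by
    intro t ht
    have ha1 := hA1 t ht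
    have hb := hBinv t ht
    have ha : 0 < A t := (hpos t ht).1
    have hexp : 0 < Real.exp (4 * t) := Real.exp_pos _
    simp only [hF']
    rw [hb]
    set a := A t with hadef
    have hane : a ≠ 0 := ne_of_gt ha
    have hsum : a + 1 / a ≠ 0 := by positivity
    have key : (2 : ℕ) * a ^ 1 * (-4 / (1 / a) + 8 / (a + 1 / a))
        + (a ^ 2 - 1) * 4 = -4 * (a ^ 2 - 1) ^ 2 / (a ^ 2 + 1) := by
      field_simp
      ring
    have hineq : (2 : ℕ) * a ^ 1 * (-4 / (1 / a) + 8 / (a + 1 / a))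
        + (a ^ 2 - 1) * 4 ≤ 0 := by
      rw [key]
      apply div_nonpos_of_nonpos_of_nonneg
      · nlinarith [sq_nonneg (a ^ 2 - 1)]
      · positivity
    nlinarith [mul_le_mul_of_nonneg_right hineq hexp.le]
  have hanti : AntitoneOn F (Set.Ici 0) := by
    apply antitoneOn_of_hasDerivWithinAt_nonpos (convex_Ici 0)
      (fun t ht => (hder t ht).continuousWithinAt)
    · intro x hx
      rw [interior_Ici] at hx ⊢
      exact (hder x (Set.mem_Ici.mpr (le_of_lt hx))).mono Set.Ioi_subset_Ici_self
    · intro x hx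
      rw [interior_Ici] at hx
      exact hF'le x (Set.mem_Ici.mpr (le_of_lt hx))
  have hmain : ∀ t ∈ Set.Ici (0 : ℝ),
      A t / B t - 1 ≤ (A 0 / B 0 - 1) * Real.exp (-4 * t) := by
    intro t ht
    have h0 : (0 : ℝ) ∈ Set.Ici (0 : ℝ) := Set.self_mem_Ici
    have hFt : F t ≤ F 0 := hanti h0 ht ht
    rw [hratio t ht, hratio 0 h0]
    simp only [hF] at hFt
    have hmul : Real.exp (4 * t) * Real.exp (-4 * t) = 1 := by
      rw [← Real.exp_add]; norm_num
    have h40 : Real.exp (4 * (0 : ℝ)) = 1 := by norm_num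
    rw [h40, mul_one] at hFt
    nlinarith [Real.exp_pos (-4 * t), Real.exp_pos (4 * t)]
  refine ⟨hmain, ?_, ?_⟩
  · -- Tendsto A
    have hub : ∀ t ∈ Set.Ici (0 : ℝ),
        A t ≤ 1 + (A 0 / B 0 - 1) * Real.exp (-4 * t) := by
      intro t ht
      have h1 := hmain t ht
      rw [hratio t ht] at h1
      have h2 := hA1 t ht
      nlinarith
    have hexp0 : Tendsto (fun t : ℝ => Real.exp (-4 * t)) atTop (nhds 0) := by
      apply Real.tendsto_exp_atBot.comp
      exact Tendsto.const_mul_atTop_of_neg (by norm_num) tendsto_id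
    have hupper : Tendsto (fun t : ℝ => 1 + (A 0 / B 0 - 1) * Real.exp (-4 * t))
        atTop (nhds 1) := by
      have := (hexp0.const_mul (A 0 / B 0 - 1)).const_add 1
      simpa using this
    apply tendsto_of_tendsto_of_tendsto_of_le_of_le' tendsto_const_nhds hupper
    · filter_upwards [eventually_ge_atTop (0 : ℝ)] with t ht using hA1 t ht
    · filter_upwards [eventually_ge_atTop (0 : ℝ)] with t ht using hub t ht
  · -- Tendsto B
    have hTA : Tendsto A atTop (nhds 1) := by
      have hub : ∀ t ∈ Set.Ici (0 : ℝ),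
          A t ≤ 1 + (A 0 / B 0 - 1) * Real.exp (-4 * t) := by
        intro t ht
        have h1 := hmain t ht
        rw [hratio t ht] at h1
        have h2 := hA1 t ht
        nlinarith
      have hexp0 : Tendsto (fun t : ℝ => Real.exp (-4 * t)) atTop (nhds 0) := by
        apply Real.tendsto_exp_atBot.comp
        exact Tendsto.const_mul_atTop_of_neg (by norm_num) tendsto_id
      have hupper : Tendsto (fun t : ℝ => 1 + (A 0 / B 0 - 1) * Real.exp (-4 * t))
          atTop (nhds 1) := by
        have := (hexp0.const_mul (A 0 / B 0 - 1)).const_add 1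
        simpa using this
      apply tendsto_of_tendsto_of_tendsto_of_le_of_le' tendsto_const_nhds hupper
      · filter_upwards [eventually_ge_atTop (0 : ℝ)] with t ht using hA1 t ht
      · filter_upwards [eventually_ge_atTop (0 : ℝ)] with t ht using hub t ht
    have hinv : Tendsto (fun t => (A t)⁻¹) atTop (nhds 1) := by
      have := hTA.inv₀ (one_ne_zero)
      simpa using this
    apply hinv.congr'
    filter_upwards [eventually_ge_atTop (0 : ℝ)] with t ht
    rw [hBinv t ht, one_div]
end

section
/- Let α, Λ, C > 0 and a₀ > b₀ > 0 with a₀ b₀ = 1 and a₀ + b₀ < Λ. Suppose that for each ε ∈ (0,1) there are sequences (a_ε(k))_k, (b_ε(k))_k, (c_ε(k))_k of reals satisfying: a_ε(k) b_ε(k) + ε c_ε(k) = 1 and 0 ≤ c_ε(k) ≤ Λ for all k; a_ε(k+1) + b_ε(k+1) ≤ a_ε(k) + b_ε(k) ≤ Λ; |a_ε(k+1) − a_ε(k)| ≤ C ε and |b_ε(k+1) − b_ε(k)| ≤ C ε for all k; a_ε(k), b_ε(k) > 0; and a_ε(0) → a₀, b_ε(0) → b₀ as ε → 0. Define a^ε(t)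 := a_ε(⌊t/(αε)⌋) and b^ε(t) := b_ε(⌊t/(αε)⌋) for t ≥ 0. Then there exist a sequence ε_j → 0 and Lipschitz functions a, b : [0, ∞) → (0, ∞) with a(t) b(t) = 1 for all t ≥ 0 such that a^{ε_j} → a and b^{ε_j} → b locally uniformly on [0, ∞). -/
open Set Filter

private lemma tele15 (f : ℕ → ℝ) (c : ℝ) (h : ∀ k, |f (k+1) - f k| ≤ c) :
    ∀ k m : ℕ, |f k - f m| ≤ c * |(k:ℝ) - (m:ℝ)| := by
  have key : ∀ m d : ℕ, |f (m+d) - f m| ≤ c * d := by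
    intro m d
    induction d with
    | zero => simp
    | succ n ih =>
      have h2 : |f (m+n+1) - f m| ≤ c + c*n := by
        calc |f (m+n+1) - f m| ≤ |f (m+n+1) - f (m+n)| + |f (m+n) - f m| := abs_sub_le _ _ _
        _ ≤ c + c*n := add_le_add (h (m+n)) ih
      push_cast
      calc |f (m+(n+1)) - f m| = |f (m+n+1) - f m| := by ring_nf
      _ ≤ c + c*n := h2
      _ = c * (n+1) := by ring
  intro k m
  rcases le_total m k with hmk | hkm
  · obtain ⟨d, rfl⟩ := Nat.exists_eq_add_of_le hmk
    have h2 : |(↑(m+d):ℝ) - (m:ℝ)| = (d:ℝ) := by push_cast; simp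
    rw [h2]; exact key m d
  · obtain ⟨d, rfl⟩ := Nat.exists_eq_add_of_le hkm
    rw [abs_sub_comm]
    have h2 : |(↑(k+d):ℝ) - (k:ℝ)| = (d:ℝ) := by push_cast; simp
    rw [abs_sub_comm ((k:ℝ)) _, h2]; exact key k d

private lemma floorest15 (c t s : ℝ) (hc : 0 < c) (ht : 0 ≤ t) (hs : 0 ≤ s) :
    |(⌊t/c⌋₊ : ℝ) - (⌊s/c⌋₊ : ℝ)| ≤ |t - s|/c + 1 := by
  wlog hst : s ≤ t generalizing s t
  · rw [abs_sub_comm, abs_sub_comm t s]; exact this s t hs ht (le_of_not_ge hst)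
  have h1 : ((⌊t/c⌋₊ : ℕ) : ℝ) ≤ t/c := Nat.floor_le (div_nonneg ht hc.le)
  have h2 : s/c < (⌊s/c⌋₊ : ℕ) + 1 := Nat.lt_floor_add_one _
  have h3 : ((⌊s/c⌋₊ : ℕ):ℝ) ≤ ((⌊t/c⌋₊ : ℕ):ℝ) := by
    exact_mod_cast Nat.floor_le_floor (by gcongr)
  have h4 : (t-s)/c = t/c - s/c := sub_div t s c
  rw [abs_of_nonneg (by linarith), abs_of_nonneg (by linarith)]
  linarith

private lemma buildLimit15 (L C : ℝ) (hL : 0 < L) (hC : 0 < C)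
    (F : ℕ → ℝ → ℝ) (εs : ℕ → ℝ) (hεs : ∀ j, 0 < εs j)
    (hε0 : Tendsto εs atTop (nhds 0))
    (hosc : ∀ j, ∀ t s : ℝ, 0 ≤ t → 0 ≤ s → |F j t - F j s| ≤ L * |t - s| + C * εs j)
    (hbd : ∀ j t, 0 ≤ t → 0 ≤ F j t)
    (hq : ∀ q : ℚ, ∃ l : ℝ, Tendsto (fun j => F j |(q:ℝ)|) atTop (nhds l)) :
    ∃ f : ℝ → ℝ, (∀ t, 0 ≤ t → Tendsto (fun j => F j t) atTop (nhds (f t))) ∧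
      (∀ t ∈ Ici (0:ℝ), ∀ s ∈ Ici (0:ℝ), |f t - f s| ≤ L * |t - s|) ∧
      (∀ t, 0 ≤ t → 0 ≤ f t) ∧
      TendstoLocallyUniformlyOn F f atTop (Ici 0) := by
  classical
  have hCε0 : Tendsto (fun j => C * εs j) atTop (nhds 0) := by
    simpa using tendsto_const_nhds.mul hε0
  -- Cauchy at each point
  have cauchy : ∀ t : ℝ, 0 ≤ t → CauchySeq (fun j => F j t) := by
    intro t ht
    rw [Metric.cauchySeq_iff]
    intro δ hδ
    have hr : 0 < δ / (8 * (L + 1)) := by positivity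
    obtain ⟨q, hq1, hq2⟩ := exists_rat_btwn (show t < t + δ / (8*(L+1)) by linarith)
    set r : ℝ := |(q:ℝ)| with hrdef
    have hqpos : (0:ℝ) < q := lt_of_le_of_lt ht hq1
    have hrq : r = (q:ℝ) := abs_of_pos hqpos
    have htr : |t - r| ≤ δ / (8*(L+1)) := by
      rw [hrq, abs_of_nonpos (by linarith)]; linarith
    obtain ⟨l, hl⟩ := hq q
    have h1 : ∀ᶠ j in atTop, dist (F j r) l < δ/4 :=
      Metric.tendsto_nhds.mp hl (δ/4) (by linarith)
    have h2 : ∀ᶠ j in atTop, C * εs j < δ/8 :=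
      hCε0.eventually (gt_mem_nhds (show (0:ℝ) < δ/8 by linarith))
    obtain ⟨N, hN⟩ := (h1.and h2).exists_forall_of_atTop
    refine ⟨N, fun n hn m hm => ?_⟩
    have hn1 := (hN n hn).1; have hn2 := (hN n hn).2
    have hm1 := (hN m hm).1; have hm2 := (hN m hm).2
    have hrnn : 0 ≤ r := abs_nonneg _
    have on_ := hosc n t r ht hrnn
    have om_ := hosc m t r ht hrnn
    have hLr : L * |t - r| ≤ δ/8 := by
      have : L * |t - r| ≤ L * (δ / (8*(L+1))) := by
        exact mul_le_mul_of_nonneg_left htr hL.le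
      have h9 : L * δ / (8*(L+1)) ≤ δ/8 := by
        rw [div_le_div_iff₀ (by positivity) (by norm_num)]
        nlinarith
      rw [mul_div_assoc] at h9
      linarith
    have e1 : dist (F n t) (F m t) ≤ |F n t - F n r| + dist (F n r) l + dist l (F m r) + |F m r - F m t| := by
      rw [Real.dist_eq, Real.dist_eq, Real.dist_eq]
      have := abs_sub_le (F n t) (F n r) (F m t)
      have := abs_sub_le (F n r) l (F m r)
      have h7 := abs_sub_le (F n t) (F n r) (F m t)
      have h8 := abs_sub_le (F n r) l (F m r)
      calc |F n t - F m t| ≤ |F n t - F n r| + |F n r - F m t| := abs_sub_le _ _ _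
        _ ≤ |F n t - F n r| + (|F n r - F m r| + |F m r - F m t|) := by
            have := abs_sub_le (F n r) (F m r) (F m t); linarith
        _ ≤ |F n t - F n r| + ((|F n r - l| + |l - F m r|) + |F m r - F m t|) := by
            have := abs_sub_le (F n r) l (F m r); linarith
        _ = |F n t - F n r| + |F n r - l| + |l - F m r| + |F m r - F m t| := by ring
    have hdl : dist l (F m r) = dist (F m r) l := dist_comm _ _
    rw [Real.dist_eq] at hn1 hm1 e1 ⊢
    rw [abs_sub_comm (F m r) l] at hm1
    have om2 : |F m r - F m t| ≤ L * |t - r| + C * εs m := by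
      rw [abs_sub_comm]; exact om_
    calc |F n t - F m t| ≤ |F n t - F n r| + |F n r - l| + |l - F m r| + |F m r - F m t| := e1
      _ < (δ/8 + δ/8) + δ/4 + δ/4 + (δ/8 + δ/8) := by
          have := lt_of_le_of_lt on_ (by linarith : L * |t - r| + C * εs n < δ/8 + δ/8)
          have := lt_of_le_of_lt om2 (by linarith : L * |t - r| + C * εs m < δ/8 + δ/8)
          linarith
      _ = δ := by ring
  have hex : ∀ t : ℝ, 0 ≤ t → ∃ l : ℝ, Tendsto (fun j => F j t) atTop (nhds l) :=
    fun t ht => cauchySeq_tendsto_of_complete (cauchy t ht)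
  set f : ℝ → ℝ := fun t => if ht : 0 ≤ t then (hex t ht).choose else 1 with hf
  have hfa : ∀ t, 0 ≤ t → Tendsto (fun j => F j t) atTop (nhds (f t)) := by
    intro t ht; simp only [hf, dif_pos ht]; exact (hex t ht).choose_spec
  have hlip : ∀ t ∈ Ici (0:ℝ), ∀ s ∈ Ici (0:ℝ), |f t - f s| ≤ L * |t - s| := by
    intro t ht s hs
    have lim2 : Tendsto (fun j => L * |t - s| + C * εs j) atTop (nhds (L * |t - s|)) := by
      simpa using tendsto_const_nhds.add hCε0
    exact le_of_tendsto_of_tendsto' (((hfa t ht).sub (hfa s hs)).abs) lim2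
      (fun j => hosc j t s ht hs)
  refine ⟨f, hfa, hlip, fun t ht => ge_of_tendsto' (hfa t ht) (fun j => hbd j t ht), ?_⟩
  rw [Metric.tendstoLocallyUniformlyOn_iff]
  intro δ hδ x hx
  have hr : 0 < δ / (8 * (L + 1)) := by positivity
  refine ⟨Ici 0 ∩ Metric.ball x (δ / (8*(L+1))),
    inter_mem_nhdsWithin _ (Metric.ball_mem_nhds x hr), ?_⟩
  have h1 : ∀ᶠ j in atTop, dist (F j x) (f x) < δ/4 :=
    Metric.tendsto_nhds.mp (hfa x hx) (δ/4) (by linarith)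
  have h2 : ∀ᶠ j in atTop, C * εs j < δ/8 :=
    hCε0.eventually (gt_mem_nhds (show (0:ℝ) < δ/8 by linarith))
  have h9 : ∀ z : ℝ, |z| ≤ δ / (8*(L+1)) → L * |z| ≤ δ/8 := by
    intro z hz
    have h91 : L * |z| ≤ L * (δ / (8*(L+1))) := mul_le_mul_of_nonneg_left hz hL.le
    have h92 : L * δ / (8*(L+1)) ≤ δ/8 := by
      rw [div_le_div_iff₀ (by positivity) (by norm_num)]
      nlinarith
    rw [mul_div_assoc] at h92
    linarith
  filter_upwards [h1, h2] with j hj1 hj2 y hy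
  obtain ⟨hy2, hy1⟩ := hy
  have hyx : |y - x| ≤ δ / (8*(L+1)) := by
    have := Metric.mem_ball.mp hy1
    rw [Real.dist_eq] at this
    linarith
  have b1 : |f y - f x| ≤ δ/8 := le_trans (hlip y hy2 x hx) (h9 _ hyx)
  have b2 : |F j x - F j y| ≤ δ/8 + δ/8 := by
    have := hosc j x y hx hy2
    have hxy : |x - y| ≤ δ / (8*(L+1)) := by rw [abs_sub_comm]; exact hyx
    have := h9 _ hxy
    linarith
  rw [Real.dist_eq] at hj1 ⊢
  calc |f y - F j y| ≤ |f y - f x| + |f x - F j y| := abs_sub_le _ _ _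
    _ ≤ |f y - f x| + (|f x - F j x| + |F j x - F j y|) := by
        have := abs_sub_le (f x) (F j x) (F j y); linarith
    _ < δ/8 + (δ/4 + (δ/8 + δ/8)) := by
        have : |f x - F j x| < δ/4 := by rw [abs_sub_comm]; exact hj1
        linarith
    _ ≤ δ := by linarith

theorem statement15 (α Λ C a₀ b₀ : ℝ) (hα : 0 < α) (hΛ : 0 < Λ) (hC : 0 < C)
    (hb : 0 < b₀) (hba : b₀ < a₀) (hab : a₀ * b₀ = 1) (hsum : a₀ + b₀ < Λ)
    (A B Cs : ℝ → ℕ → ℝ)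
    (hpos : ∀ ε ∈ Set.Ioo (0 : ℝ) 1, ∀ k, 0 < A ε k ∧ 0 < B ε k)
    (harea : ∀ ε ∈ Set.Ioo (0 : ℝ) 1, ∀ k, A ε k * B ε k + ε * Cs ε k = 1)
    (hcs : ∀ ε ∈ Set.Ioo (0 : ℝ) 1, ∀ k, 0 ≤ Cs ε k ∧ Cs ε k ≤ Λ)
    (hmono : ∀ ε ∈ Set.Ioo (0 : ℝ) 1, ∀ k,
      A ε (k + 1) + B ε (k + 1) ≤ A ε k + B ε k ∧ A ε k + B ε k ≤ Λ)
    (hlipA : ∀ ε ∈ Set.Ioo (0 : ℝ) 1, ∀ k, |A ε (k + 1) - A ε k| ≤ C * ε)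
    (hlipB : ∀ ε ∈ Set.Ioo (0 : ℝ) 1, ∀ k, |B ε (k + 1) - B ε k| ≤ C * ε)
    (hinitA : Tendsto (fun ε => A ε 0) (nhdsWithin 0 (Set.Ioo 0 1)) (nhds a₀))
    (hinitB : Tendsto (fun ε => B ε 0) (nhdsWithin 0 (Set.Ioo 0 1)) (nhds b₀)) :
    ∃ (εj : ℕ → ℝ) (fa fb : ℝ → ℝ) (K : NNReal),
      (∀ j, εj j ∈ Set.Ioo (0 : ℝ) 1) ∧
      Tendsto εj atTop (nhds 0) ∧
      LipschitzOnWith K fa (Set.Ici 0) ∧ LipschitzOnWith K fb (Set.Ici 0) ∧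
      (∀ t ∈ Set.Ici (0 : ℝ), 0 < fa t ∧ 0 < fb t ∧ fa t * fb t = 1) ∧
      TendstoLocallyUniformlyOn
        (fun j t => A (εj j) ⌊t / (α * εj j)⌋₊) fa atTop (Set.Ici 0) ∧
      TendstoLocallyUniformlyOn
        (fun j t => B (εj j) ⌊t / (α * εj j)⌋₊) fb atTop (Set.Ici 0) := by
  classical
  set L : ℝ := C / α with hLdef
  have hL : 0 < L := div_pos hC hα
  set e : ℕ → ℝ := fun j => ((j:ℝ)+2)⁻¹ with he
  have heIoo : ∀ j, e j ∈ Ioo (0:ℝ) 1 := by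
    intro j
    constructor
    · positivity
    · rw [he]
      have h2 : (1:ℝ) < (j:ℝ) + 2 := by
        have := (Nat.cast_nonneg j : (0:ℝ) ≤ j); linarith
      simpa using inv_lt_one_of_one_lt₀ h2
  have he0 : Tendsto e atTop (nhds 0) := by
    apply tendsto_inv_atTop_zero.comp
    exact tendsto_atTop_add_const_right atTop 2 tendsto_natCast_atTop_atTop
  -- bounds
  have hAb : ∀ ε ∈ Ioo (0:ℝ) 1, ∀ k, A ε k ∈ Icc (0:ℝ) Λ := by
    intro ε hε k
    exact ⟨(hpos ε hε k).1.le, by linarith [(hmono ε hε k).2, (hpos ε hε k).2]⟩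
  have hBb : ∀ ε ∈ Ioo (0:ℝ) 1, ∀ k, B ε k ∈ Icc (0:ℝ) Λ := by
    intro ε hε k
    exact ⟨(hpos ε hε k).2.le, by linarith [(hmono ε hε k).2, (hpos ε hε k).1]⟩
  -- oscillation estimate
  have osc : ∀ (F : ℝ → ℕ → ℝ), (∀ ε ∈ Ioo (0:ℝ) 1, ∀ k, |F ε (k+1) - F ε k| ≤ C * ε) →
      ∀ ε ∈ Ioo (0:ℝ) 1, ∀ t s : ℝ, 0 ≤ t → 0 ≤ s →
      |F ε ⌊t/(α*ε)⌋₊ - F ε ⌊s/(α*ε)⌋₊| ≤ L * |t-s| + C*ε := by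
    intro F hlip ε hε t s ht hs
    have hεp : 0 < ε := hε.1
    have hcp : 0 < α * ε := mul_pos hα hεp
    have h1 := tele15 (F ε) (C*ε) (hlip ε hε) ⌊t/(α*ε)⌋₊ ⌊s/(α*ε)⌋₊
    have h2 := floorest15 (α*ε) t s hcp ht hs
    calc |F ε ⌊t/(α*ε)⌋₊ - F ε ⌊s/(α*ε)⌋₊|
        ≤ C*ε * |(⌊t/(α*ε)⌋₊:ℝ) - (⌊s/(α*ε)⌋₊:ℝ)| := h1
      _ ≤ C*ε * (|t-s|/(α*ε) + 1) :=
          mul_le_mul_of_nonneg_left h2 (by positivity)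
      _ = L * |t-s| + C*ε := by
          rw [hLdef]; field_simp
  -- compactness extraction
  set Φ : ℕ → (ℚ → ℝ × ℝ) := fun j q =>
    (A (e j) ⌊|(q:ℝ)| / (α * e j)⌋₊, B (e j) ⌊|(q:ℝ)| / (α * e j)⌋₊) with hΦ
  have hScomp : IsCompact (Set.pi (univ : Set ℚ) fun _ => (Icc (0:ℝ) Λ) ×ˢ (Icc (0:ℝ) Λ)) :=
    isCompact_univ_pi fun _ => isCompact_Icc.prod isCompact_Icc
  have hmem : ∀ j, Φ j ∈ Set.pi (univ : Set ℚ) fun _ => (Icc (0:ℝ) Λ) ×ˢ (Icc (0:ℝ) Λ) := by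
    intro j q _
    exact ⟨hAb _ (heIoo j) _, hBb _ (heIoo j) _⟩
  obtain ⟨g, -, φ, hφ, hconv⟩ := hScomp.tendsto_subseq hmem
  set εj : ℕ → ℝ := fun j => e (φ j) with hεjdef
  have hεjIoo : ∀ j, εj j ∈ Ioo (0:ℝ) 1 := fun j => heIoo (φ j)
  have hεj0 : Tendsto εj atTop (nhds 0) := he0.comp hφ.tendsto_atTop
  have hconvq : ∀ q : ℚ, Tendsto (fun j => Φ (φ j) q) atTop (nhds (g q)) := by
    intro q
    exact (tendsto_pi_nhds.mp hconv) q
  -- apply buildLimit to A and B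
  have hexA : ∀ q : ℚ, ∃ l : ℝ,
      Tendsto (fun j => A (εj j) ⌊|(q:ℝ)| / (α * εj j)⌋₊) atTop (nhds l) := by
    intro q
    exact ⟨(g q).1, ((continuous_fst.tendsto _).comp (hconvq q))⟩
  have hexB : ∀ q : ℚ, ∃ l : ℝ,
      Tendsto (fun j => B (εj j) ⌊|(q:ℝ)| / (α * εj j)⌋₊) atTop (nhds l) := by
    intro q
    exact ⟨(g q).2, ((continuous_snd.tendsto _).comp (hconvq q))⟩
  obtain ⟨fa, hfa, hfaLip, hfaNN, hfaLU⟩ := buildLimit15 L C hL hC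
    (fun j t => A (εj j) ⌊t / (α * εj j)⌋₊) εj (fun j => (hεjIoo j).1) hεj0
    (fun j t s ht hs => by
      simpa [div_eq_mul_inv] using osc A hlipA (εj j) (hεjIoo j) t s ht hs)
    (fun j t _ => (hpos _ (hεjIoo j) _).1.le)
    hexA
  obtain ⟨fb, hfb, hfbLip, hfbNN, hfbLU⟩ := buildLimit15 L C hL hC
    (fun j t => B (εj j) ⌊t / (α * εj j)⌋₊) εj (fun j => (hεjIoo j).1) hεj0
    (fun j t s ht hs => by
      simpa [div_eq_mul_inv] using osc B hlipB (εj j) (hεjIoo j) t s ht hs)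
    (fun j t _ => (hpos _ (hεjIoo j) _).2.le)
    hexB
  -- product = 1
  have hprod : ∀ t ∈ Ici (0:ℝ), fa t * fb t = 1 := by
    intro t ht
    have h1 : Tendsto (fun j => A (εj j) ⌊t / (α * εj j)⌋₊ * B (εj j) ⌊t / (α * εj j)⌋₊)
        atTop (nhds (fa t * fb t)) := (hfa t ht).mul (hfb t ht)
    have h2 : Tendsto (fun j => A (εj j) ⌊t / (α * εj j)⌋₊ * B (εj j) ⌊t / (α * εj j)⌋₊)
        atTop (nhds 1) := by
      have key : Tendsto (fun j => A (εj j) ⌊t / (α * εj j)⌋₊ * B (εj j) ⌊t / (α * εj j)⌋₊ - 1)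
          atTop (nhds 0) := by
        have hnorm : ∀ j, ‖A (εj j) ⌊t / (α * εj j)⌋₊ * B (εj j) ⌊t / (α * εj j)⌋₊ - 1‖
            ≤ εj j * Λ := by
          intro j
          have ha := harea (εj j) (hεjIoo j) ⌊t / (α * εj j)⌋₊
          have hc := hcs (εj j) (hεjIoo j) ⌊t / (α * εj j)⌋₊
          have heq : A (εj j) ⌊t / (α * εj j)⌋₊ * B (εj j) ⌊t / (α * εj j)⌋₊ - 1
              = -(εj j * Cs (εj j) ⌊t / (α * εj j)⌋₊) := by linarith
          rw [Real.norm_eq_abs, heq, abs_neg,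
            abs_of_nonneg (mul_nonneg (hεjIoo j).1.le hc.1)]
          exact mul_le_mul_of_nonneg_left hc.2 (hεjIoo j).1.le
        have hgl : Tendsto (fun j => εj j * Λ) atTop (nhds 0) := by
          simpa using hεj0.mul tendsto_const_nhds
        exact squeeze_zero_norm hnorm hgl
      have := key.add (tendsto_const_nhds (x := (1:ℝ)))
      simpa using this
    exact tendsto_nhds_unique h1 h2
  have hposlim : ∀ t ∈ Ici (0:ℝ), 0 < fa t ∧ 0 < fb t ∧ fa t * fb t = 1 := by
    intro t ht
    have hp := hprod t ht
    have ha := hfaNN t ht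
    have hbnn := hfbNN t ht
    have hane : fa t ≠ 0 := by
      intro h0; rw [h0, zero_mul] at hp; norm_num at hp
    have hbne : fb t ≠ 0 := by
      intro h0; rw [h0, mul_zero] at hp; norm_num at hp
    exact ⟨lt_of_le_of_ne ha (Ne.symm hane), lt_of_le_of_ne hbnn (Ne.symm hbne), hp⟩
  refine ⟨εj, fa, fb, Real.toNNReal L, hεjIoo, hεj0, ?_, ?_, hposlim, hfaLU, hfbLU⟩
  · apply LipschitzOnWith.of_dist_le_mul
    intro x hx y hy
    rw [Real.dist_eq, Real.dist_eq, Real.coe_toNNReal L hL.le]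
    exact hfaLip x hx y hy
  · apply LipschitzOnWith.of_dist_le_mul
    intro x hx y hy
    rw [Real.dist_eq, Real.dist_eq, Real.coe_toNNReal L hL.le]
    exact hfbLip x hx y hy
end

section
/- Let α > 0 and a₀ > b₀ > 0 with a₀ b₀ = 1. For each ε > 0 let (a_ε(k))_k, (b_ε(k))_k be positive sequences defined by a_ε(k+1) = a_ε(k) − 2ε X_ε(k) and b_ε(k+1) = b_ε(k) + 2ε Y_ε(k), where X_ε(k) ∈ { ⌊x_ε(k)⌋, ⌈x_ε(k)⌉ } with x_ε(k) := 2α(a_ε(k) − b_ε(k))/(b_ε(k)(a_ε(k) + b_ε(k))) − a_ε(k)/(a_ε(k) + b_ε(k)), and Y_ε(k) := ⌊ 2 b_ε(k) X_ε(k) / (2 a_ε(k) − 4ε X_ε(k)) ⌋. Suppose the interpolations a^ε(t) := a_ε(⌊t/(αε)⌋), b^ε(t) := b_ε(⌊t/(αε)⌋) converge locally uniformly on [0, ∞), as ε → 0, to Lipschitz functions a, b : [0, ∞) → (0, ∞) with a(t) b(t) = 1 and b(t) ≤ a(t) for all t. Then for almost every t ≥ 0, setting x(t) := 2α/b(t)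 − (4α + a(t))/(a(t) + b(t)): if x(t) is not a natural number, then da/dt(t) ∈ [ −(2/α)⌈x(t)⌉, −(2/α)⌊x(t)⌋ ] and db/dt(t) ∈ [ (2b(t)/(α a(t)))⌊x(t)⌋, (2b(t)/(α a(t)))⌈x(t)⌉ ]; if x(t) is a natural number, then da/dt(t) ∈ [ −(2/α)(x(t)+1), −(2/α)(x(t)−1) ] and db/dt(t) ∈ [ (2b(t)/(α a(t)))(x(t)−1), (2b(t)/(α a(t)))(x(t)+1) ]. -/
open Set Filter MeasureTheory

private noncomputable def Fxy (α p q : ℝ) : ℝ := 2*α*(p-q)/(q*(p+q)) - p/(p+q)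

private lemma stepBound (ε : ℝ) (A : ℕ → ℝ) (X : ℕ → ℤ)
    (hrec : ∀ k, A (k+1) = A k - 2*ε*(X k : ℝ)) (c C : ℝ) (k₀ : ℕ) :
    ∀ n, 0 < ε → (∀ k, k₀ ≤ k → k < k₀ + n → c ≤ (X k : ℝ) ∧ (X k : ℝ) ≤ C) →
      A k₀ - 2*ε*n*C ≤ A (k₀+n) ∧ A (k₀+n) ≤ A k₀ - 2*ε*n*c := by
  intro n
  induction n with
  | zero => intro _ _; simp
  | succ n ih =>
    intro hε hk
    have h1 := ih hε (fun k hk1 hk2 => hk k hk1 (by omega))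
    have h2 := hk (k₀+n) (by omega) (by omega)
    have h3 := hrec (k₀+n)
    push_cast
    constructor
    · rw [show k₀ + (n+1) = (k₀+n)+1 from rfl, h3]
      nlinarith [h1.1, h2.2]
    · rw [show k₀ + (n+1) = (k₀+n)+1 from rfl, h3]
      nlinarith [h1.2, h2.1]

set_option maxHeartbeats 2000000 in
theorem statement16 (α a₀ b₀ : ℝ) (hα : 0 < α) (hb : 0 < b₀) (hba : b₀ < a₀)
    (hab : a₀ * b₀ = 1)
    (A B : ℝ → ℕ → ℝ) (X : ℝ → ℕ → ℤ)
    (hpos : ∀ ε > (0 : ℝ), ∀ k, 0 < A ε k ∧ 0 < B ε k)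
    (hinit : ∀ ε > (0 : ℝ), A ε 0 = a₀ ∧ B ε 0 = b₀)
    (hX : ∀ ε > (0 : ℝ), ∀ k,
      X ε k = ⌊2 * α * (A ε k - B ε k) / (B ε k * (A ε k + B ε k)) -
          A ε k / (A ε k + B ε k)⌋ ∨
      X ε k = ⌈2 * α * (A ε k - B ε k) / (B ε k * (A ε k + B ε k)) -
          A ε k / (A ε k + B ε k)⌉)
    (hrecA : ∀ ε > (0 : ℝ), ∀ k, A ε (k + 1) = A ε k - 2 * ε * (X ε k : ℝ))
    (hrecB : ∀ ε > (0 : ℝ), ∀ k, B ε (k + 1) = B ε k +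
        2 * ε * (⌊2 * B ε k * (X ε k : ℝ) / (2 * A ε k - 4 * ε * (X ε k : ℝ))⌋ : ℝ))
    (a b : ℝ → ℝ) (Ka Kb : NNReal)
    (hLa : LipschitzOnWith Ka a (Set.Ici 0))
    (hLb : LipschitzOnWith Kb b (Set.Ici 0))
    (hprops : ∀ t ∈ Set.Ici (0 : ℝ), 0 < b t ∧ b t ≤ a t ∧ a t * b t = 1)
    (hconvA : TendstoLocallyUniformlyOn (fun ε t => A ε ⌊t / (α * ε)⌋₊) a
      (nhdsWithin 0 (Set.Ioi 0)) (Set.Ici 0))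
    (hconvB : TendstoLocallyUniformlyOn (fun ε t => B ε ⌊t / (α * ε)⌋₊) b
      (nhdsWithin 0 (Set.Ioi 0)) (Set.Ici 0)) :
    ∀ᵐ t ∂(volume.restrict (Set.Ici (0 : ℝ))),
      ∃ da db : ℝ, HasDerivAt a da t ∧ HasDerivAt b db t ∧
        ((¬ ∃ nn : ℕ,
            2 * α / b t - (4 * α + a t) / (a t + b t) = (nn : ℝ)) →
          da ∈ Set.Icc
              (-(2 / α) * (⌈2 * α / b t - (4 * α + a t) / (a t + b t)⌉ : ℝ))
              (-(2 / α) * (⌊2 * α / b t - (4 * α + a t) / (a t + b t)⌋ : ℝ)) ∧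
          db ∈ Set.Icc
              ((2 * b t / (α * a t)) *
                (⌊2 * α / b t - (4 * α + a t) / (a t + b t)⌋ : ℝ))
              ((2 * b t / (α * a t)) *
                (⌈2 * α / b t - (4 * α + a t) / (a t + b t)⌉ : ℝ))) ∧
        ((∃ nn : ℕ,
            2 * α / b t - (4 * α + a t) / (a t + b t) = (nn : ℝ)) →
          da ∈ Set.Icc
              (-(2 / α) * (2 * α / b t - (4 * α + a t) / (a t + b t) + 1))
              (-(2 / α) * (2 * α / b t - (4 * α + a t) / (a t + b t) - 1)) ∧
          db ∈ Set.Icc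
              ((2 * b t / (α * a t)) *
                (2 * α / b t - (4 * α + a t) / (a t + b t) - 1))
              ((2 * b t / (α * a t)) *
                (2 * α / b t - (4 * α + a t) / (a t + b t) + 1))) := by
  obtain ⟨ag, hagl, hage⟩ := hLa.extend_real
  have hdiffae : ∀ᵐ (t : ℝ), DifferentiableAt ℝ ag t := hagl.ae_differentiableAt
  have hne0 : ∀ᵐ (t : ℝ), t ≠ 0 := by
    rw [ae_iff]
    simp
  rw [ae_restrict_iff' measurableSet_Ici]
  filter_upwards [hdiffae, hne0] with t hdt hnt htmem
  have ht : 0 < t := lt_of_le_of_ne htmem (Ne.symm hnt)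
  have hIci : Set.Ici (0:ℝ) ∈ nhds t := Ici_mem_nhds ht
  have haeq : a =ᶠ[nhds t] ag := eventually_of_mem hIci (fun s hs => hage hs)
  have hda : HasDerivAt a (deriv ag t) t := hdt.hasDerivAt.congr_of_eventuallyEq haeq
  set da := deriv ag t with hda_def
  obtain ⟨hbpos, hble, habt⟩ := hprops t htmem
  have hapos : 0 < a t := lt_of_lt_of_le hbpos hble
  have hbinv : ∀ s ∈ Set.Ici (0:ℝ), b s = (a s)⁻¹ := by
    intro s hs
    obtain ⟨h1, h2, h3⟩ := hprops s hs
    exact eq_inv_of_mul_eq_one_right (by linarith [mul_comm (a s) (b s)] )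
  have hbt_inv : b t = (a t)⁻¹ := hbinv t htmem
  have hdb : HasDerivAt b (-da / (a t)^2) t := by
    have h1 : HasDerivAt (fun s => (a s)⁻¹) (-da / (a t)^2) t := hda.inv (ne_of_gt hapos)
    exact h1.congr_of_eventuallyEq (eventually_of_mem hIci (fun s hs => hbinv s hs))
  set db := -da / (a t)^2 with hdb_def
  clear_value db
  set xv := 2 * α / b t - (4 * α + a t) / (a t + b t) with hxv
  clear_value xv
  -- basic nonvanishing
  have habpos : 0 < a t + b t := by linarith
  have hbab : b t * (a t + b t) ≠ 0 := by positivity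
  have hx_eq : Fxy α (a t) (b t) = xv := by
    rw [Fxy, hxv]
    field_simp
    ring
  have hxgt : -1 < xv := by
    have h3 : xv + 1 = (2*α*(a t - b t) + (b t)^2)/((b t)*(a t + b t)) := by
      rw [hxv]; field_simp; ring
    have h4 : 0 < (2*α*(a t - b t) + (b t)^2)/((b t)*(a t + b t)) := by
      apply div_pos (by nlinarith) (by positivity)
    linarith [h3 ▸ h4]
  -- continuity of Fxy at (a t, b t)
  have hcont : ContinuousAt (fun z : ℝ × ℝ => Fxy α z.1 z.2) (a t, b t) := by
    apply ContinuousAt.sub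
    · exact (ContinuousAt.div (by fun_prop) (by fun_prop) hbab)
    · exact (ContinuousAt.div (by fun_prop) (by fun_prop) (ne_of_gt habpos))
  -- quotient limit
  have hquot : Tendsto (fun h => (a (t+h) - a t)/h) (nhdsWithin 0 (Set.Ioi 0)) (nhds da) := by
    have h1 : Tendsto (fun h : ℝ => t + h) (nhdsWithin 0 (Set.Ioi 0)) (nhdsWithin t {t}ᶜ) := by
      apply tendsto_nhdsWithin_of_tendsto_nhds_of_eventually_within
      · exact ((continuous_const.add continuous_id).tendsto' 0 t (by simp)).mono_left
          nhdsWithin_le_nhds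
      · filter_upwards [self_mem_nhdsWithin] with h hh
        simp only [mem_compl_iff, mem_singleton_iff]
        have : (0:ℝ) < h := hh
        intro hc; linarith [hc ▸ (by linarith : t < t + h)]
    have h2 := (hasDerivAt_iff_tendsto_slope.1 hda).comp h1
    refine h2.congr' ?_
    filter_upwards [self_mem_nhdsWithin] with h hh
    have hh0 : (0:ℝ) < h := hh
    simp only [Function.comp_apply, slope_def_field]
    rw [add_sub_cancel_left]
  -- core analytic bound
  have slope_bound : ∀ c C : ℤ, ∀ ρ : ℝ, 0 < ρ →
      (∀ p q : ℝ, |p - a t| < ρ → |q - b t| < ρ → (c:ℝ) ≤ Fxy α p q ∧ Fxy α p q ≤ C) →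
      ∃ h₀ : ℝ, 0 < h₀ ∧ ∀ h : ℝ, 0 < h → h < h₀ →
        -(2/α)*C ≤ (a (t+h) - a t)/h ∧ (a (t+h) - a t)/h ≤ -(2/α)*c := by
    intro c C ρ hρ hF
    refine ⟨min (t/2) (ρ/(2*((Ka:ℝ)+(Kb:ℝ)+1))), lt_min (by linarith) (by positivity), ?_⟩
    intro h hh0 hh1
    have hht : h < t/2 := lt_of_lt_of_le hh1 (min_le_left _ _)
    have hhρ : h < ρ/(2*((Ka:ℝ)+(Kb:ℝ)+1)) := lt_of_lt_of_le hh1 (min_le_right _ _)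
    have hden : (0:ℝ) < 2*((Ka:ℝ)+(Kb:ℝ)+1) := by positivity
    have hhρ' : h * (2*((Ka:ℝ)+(Kb:ℝ)+1)) < ρ := (lt_div_iff₀ hden).1 hhρ
    have hKah : (Ka:ℝ)*h < ρ/2 := by nlinarith [Ka.coe_nonneg, Kb.coe_nonneg, hh0.le]
    have hKbh : (Kb:ℝ)*h < ρ/2 := by nlinarith [Ka.coe_nonneg, Kb.coe_nonneg, hh0.le]
    have hJO : Set.Icc (t/2) (t+h) ⊆ Set.Ioi (0:ℝ) :=
      fun s hs => lt_of_lt_of_le (by linarith : (0:ℝ) < t/2) hs.1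
    have hAu : TendstoUniformlyOn (fun ε s => A ε ⌊s/(α*ε)⌋₊) a
        (nhdsWithin 0 (Set.Ioi 0)) (Set.Icc (t/2) (t+h)) :=
      (tendstoLocallyUniformlyOn_iff_forall_isCompact isOpen_Ioi).1
        (hconvA.mono Ioi_subset_Ici_self) _ hJO isCompact_Icc
    have hBu : TendstoUniformlyOn (fun ε s => B ε ⌊s/(α*ε)⌋₊) b
        (nhdsWithin 0 (Set.Ioi 0)) (Set.Icc (t/2) (t+h)) :=
      (tendstoLocallyUniformlyOn_iff_forall_isCompact isOpen_Ioi).1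
        (hconvB.mono Ioi_subset_Ici_self) _ hJO isCompact_Icc
    have hA2 := Metric.tendstoUniformlyOn_iff.1 hAu (ρ/2) (by positivity)
    have hB2 := Metric.tendstoUniformlyOn_iff.1 hBu (ρ/2) (by positivity)
    have hαtend : Tendsto (fun ε:ℝ => α*ε) (nhdsWithin 0 (Set.Ioi 0)) (nhds 0) := by
      have h1 : Tendsto (fun ε:ℝ => α*ε) (nhds 0) (nhds (α*0)) :=
        (continuous_const.mul continuous_id).tendsto 0
      rw [mul_zero] at h1
      exact h1.mono_left nhdsWithin_le_nhds
    have hεsmall : ∀ᶠ ε in nhdsWithin (0:ℝ) (Set.Ioi 0), α*ε < h :=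
      hαtend.eventually_lt_const hh0
    have hmain : ∀ᶠ ε in nhdsWithin (0:ℝ) (Set.Ioi 0),
        A ε ⌊t/(α*ε)⌋₊ - 2*ε*(((⌊(t+h)/(α*ε)⌋₊ - ⌊t/(α*ε)⌋₊ : ℕ)):ℝ)*(C:ℝ) ≤ A ε ⌊(t+h)/(α*ε)⌋₊ ∧
        A ε ⌊(t+h)/(α*ε)⌋₊ ≤ A ε ⌊t/(α*ε)⌋₊ - 2*ε*(((⌊(t+h)/(α*ε)⌋₊ - ⌊t/(α*ε)⌋₊ : ℕ)):ℝ)*(c:ℝ) := by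
      filter_upwards [hA2, hB2, hεsmall, eventually_mem_nhdsWithin] with ε hA3 hB3 hεh hεmem
      have hε : (0:ℝ) < ε := hεmem
      have hαε : 0 < α*ε := by positivity
      have hk01 : ⌊t/(α*ε)⌋₊ ≤ ⌊(t+h)/(α*ε)⌋₊ := Nat.floor_le_floor (by gcongr <;> linarith)
      have hXb : ∀ k, ⌊t/(α*ε)⌋₊ ≤ k →
          k < ⌊t/(α*ε)⌋₊ + (⌊(t+h)/(α*ε)⌋₊ - ⌊t/(α*ε)⌋₊) →
          (c:ℝ) ≤ (X ε k:ℝ) ∧ (X ε k:ℝ) ≤ (C:ℝ) := by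
        intro k hk1 hk2
        have hk2' : k < ⌊(t+h)/(α*ε)⌋₊ := by omega
        have hs1 : t - α*ε < α*ε*k := by
          have h1 : t/(α*ε) - 1 < ((⌊t/(α*ε)⌋₊:ℕ):ℝ) := Nat.sub_one_lt_floor _
          have h2 : ((⌊t/(α*ε)⌋₊:ℕ):ℝ) ≤ (k:ℝ) := by exact_mod_cast hk1
          have h3 : (t/(α*ε) - 1) * (α*ε) < (k:ℝ)*(α*ε) :=
            mul_lt_mul_of_pos_right (lt_of_lt_of_le h1 h2) hαε
          calc t - α*ε = (t/(α*ε) - 1) * (α*ε) := by field_simp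
            _ < (k:ℝ)*(α*ε) := h3
            _ = α*ε*k := by ring
        have hs2 : α*ε*k ≤ t + h := by
          have h2 : (k:ℝ) ≤ ((⌊(t+h)/(α*ε)⌋₊:ℕ):ℝ) := by exact_mod_cast hk2'.le
          have h3 : ((⌊(t+h)/(α*ε)⌋₊:ℕ):ℝ) ≤ (t+h)/(α*ε) := Nat.floor_le (by positivity)
          calc α*ε*k = (k:ℝ)*(α*ε) := by ring
            _ ≤ ((t+h)/(α*ε))*(α*ε) := mul_le_mul_of_nonneg_right (h2.trans h3) hαε.le
            _ = t+h := by field_simp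
        have hsJ : α*ε*k ∈ Set.Icc (t/2) (t+h) := ⟨by linarith, hs2⟩
        have hfl2 : ⌊(α*ε*k)/(α*ε)⌋₊ = k := by
          rw [show (α*ε*k)/(α*ε) = ((k:ℕ):ℝ) by field_simp]
          exact Nat.floor_natCast k
        have hA4 := hA3 _ hsJ
        have hB4 := hB3 _ hsJ
        rw [hfl2] at hA4 hB4
        have hsmem : α*ε*k ∈ Set.Ici (0:ℝ) := by
          simp only [Set.mem_Ici]; positivity
        have h7 : |α*ε*k - t| ≤ h := by
          rw [abs_le]; constructor <;> linarith
        have hdista : |A ε k - a t| < ρ := by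
          have h5 : |a (α*ε*k) - A ε k| < ρ/2 := by
            rw [← Real.dist_eq]; exact hA4
          have h6 : |a (α*ε*k) - a t| ≤ (Ka:ℝ) * |α*ε*k - t| := by
            have := hLa.dist_le_mul _ hsmem _ htmem
            simpa [Real.dist_eq] using this
          have h8 : (Ka:ℝ)*|α*ε*k - t| ≤ (Ka:ℝ)*h := mul_le_mul_of_nonneg_left h7 Ka.coe_nonneg
          calc |A ε k - a t| ≤ |A ε k - a (α*ε*k)| + |a (α*ε*k) - a t| := abs_sub_le _ _ _
            _ = |a (α*ε*k) - A ε k| + |a (α*ε*k) - a t| := by rw [abs_sub_comm]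
            _ < ρ/2 + ρ/2 := by linarith
            _ = ρ := by ring
        have hdistb : |B ε k - b t| < ρ := by
          have h5 : |b (α*ε*k) - B ε k| < ρ/2 := by
            rw [← Real.dist_eq]; exact hB4
          have h6 : |b (α*ε*k) - b t| ≤ (Kb:ℝ) * |α*ε*k - t| := by
            have := hLb.dist_le_mul _ hsmem _ htmem
            simpa [Real.dist_eq] using this
          have h8 : (Kb:ℝ)*|α*ε*k - t| ≤ (Kb:ℝ)*h := mul_le_mul_of_nonneg_left h7 Kb.coe_nonneg
          calc |B ε k - b t| ≤ |B ε k - b (α*ε*k)| + |b (α*ε*k) - b t| := abs_sub_le _ _ _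
            _ = |b (α*ε*k) - B ε k| + |b (α*ε*k) - b t| := by rw [abs_sub_comm]
            _ < ρ/2 + ρ/2 := by linarith
            _ = ρ := by ring
        have hFb := hF _ _ hdista hdistb
        rw [Fxy] at hFb
        rcases hX ε hε k with hXe | hXe
        · rw [hXe]
          constructor
          · exact_mod_cast Int.le_floor.2 hFb.1
          · calc ((⌊_⌋:ℤ):ℝ) ≤ _ := Int.floor_le _
              _ ≤ (C:ℝ) := hFb.2
        · rw [hXe]
          constructor
          · calc (c:ℝ) ≤ _ := hFb.1
              _ ≤ ((⌈_⌉:ℤ):ℝ) := Int.le_ceil _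
          · exact_mod_cast Int.ceil_le.2 hFb.2
      have hsb := stepBound ε (A ε) (X ε) (hrecA ε hε) (c:ℝ) (C:ℝ) ⌊t/(α*ε)⌋₊
        (⌊(t+h)/(α*ε)⌋₊ - ⌊t/(α*ε)⌋₊) hε hXb
      rw [Nat.add_sub_cancel' hk01] at hsb
      exact hsb
    have hΔ : Tendsto (fun ε => A ε ⌊(t+h)/(α*ε)⌋₊ - A ε ⌊t/(α*ε)⌋₊)
        (nhdsWithin 0 (Set.Ioi 0)) (nhds (a (t+h) - a t)) :=
      (hconvA.tendsto_at (show t+h ∈ Set.Ici (0:ℝ) by simp only [Set.mem_Ici]; linarith)).sub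
        (hconvA.tendsto_at htmem)
    have hN : Tendsto (fun ε => 2*ε*(((⌊(t+h)/(α*ε)⌋₊ - ⌊t/(α*ε)⌋₊ : ℕ)):ℝ))
        (nhdsWithin 0 (Set.Ioi 0)) (nhds (2*h/α)) := by
      have hlo : Tendsto (fun ε:ℝ => 2*h/α - 2*ε) (nhdsWithin 0 (Set.Ioi 0)) (nhds (2*h/α)) := by
        have h1 : Tendsto (fun ε:ℝ => 2*h/α - 2*ε) (nhds 0) (nhds (2*h/α - 2*0)) :=
          (continuous_const.sub (continuous_const.mul continuous_id)).tendsto 0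
        norm_num at h1
        exact h1.mono_left nhdsWithin_le_nhds
      have hhi : Tendsto (fun ε:ℝ => 2*h/α + 2*ε) (nhdsWithin 0 (Set.Ioi 0)) (nhds (2*h/α)) := by
        have h1 : Tendsto (fun ε:ℝ => 2*h/α + 2*ε) (nhds 0) (nhds (2*h/α + 2*0)) :=
          (continuous_const.add (continuous_const.mul continuous_id)).tendsto 0
        norm_num at h1
        exact h1.mono_left nhdsWithin_le_nhds
      apply tendsto_of_tendsto_of_tendsto_of_le_of_le' hlo hhi
      · filter_upwards [hεsmall, eventually_mem_nhdsWithin] with ε hεh hεmem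
        have hε : (0:ℝ) < ε := hεmem
        have hαε : 0 < α*ε := by positivity
        have hk01 : ⌊t/(α*ε)⌋₊ ≤ ⌊(t+h)/(α*ε)⌋₊ := Nat.floor_le_floor (by gcongr <;> linarith)
        have hcast : (((⌊(t+h)/(α*ε)⌋₊ - ⌊t/(α*ε)⌋₊ : ℕ)):ℝ)
            = ((⌊(t+h)/(α*ε)⌋₊:ℕ):ℝ) - ((⌊t/(α*ε)⌋₊:ℕ):ℝ) := by
          exact Nat.cast_sub hk01
        have hb1 : (t+h)/(α*ε) - 1 < ((⌊(t+h)/(α*ε)⌋₊:ℕ):ℝ) := Nat.sub_one_lt_floor _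
        have hb2 : ((⌊t/(α*ε)⌋₊:ℕ):ℝ) ≤ t/(α*ε) := Nat.floor_le (by positivity)
        have heq1 : 2*ε*((t+h)/(α*ε) - 1 - t/(α*ε)) = 2*h/α - 2*ε := by
          field_simp
          ring
        rw [hcast]
        nlinarith [hb1, hb2, heq1, hε.le]
      · filter_upwards [hεsmall, eventually_mem_nhdsWithin] with ε hεh hεmem
        have hε : (0:ℝ) < ε := hεmem
        have hαε : 0 < α*ε := by positivity
        have hk01 : ⌊t/(α*ε)⌋₊ ≤ ⌊(t+h)/(α*ε)⌋₊ := Nat.floor_le_floor (by gcongr <;> linarith)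
        have hcast : (((⌊(t+h)/(α*ε)⌋₊ - ⌊t/(α*ε)⌋₊ : ℕ)):ℝ)
            = ((⌊(t+h)/(α*ε)⌋₊:ℕ):ℝ) - ((⌊t/(α*ε)⌋₊:ℕ):ℝ) := by
          exact Nat.cast_sub hk01
        have hb1 : ((⌊(t+h)/(α*ε)⌋₊:ℕ):ℝ) ≤ (t+h)/(α*ε) := Nat.floor_le (by positivity)
        have hb2 : t/(α*ε) - 1 < ((⌊t/(α*ε)⌋₊:ℕ):ℝ) := Nat.sub_one_lt_floor _
        have heq1 : 2*ε*((t+h)/(α*ε) - (t/(α*ε) - 1)) = 2*h/α + 2*ε := by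
          field_simp
          ring
        rw [hcast]
        nlinarith [hb1, hb2, heq1, hε.le]
    have hup : a (t+h) - a t ≤ -(2*h/α)*(c:ℝ) := by
      refine le_of_tendsto_of_tendsto hΔ ((hN.neg).mul_const (c:ℝ)) ?_
      filter_upwards [hmain] with ε hm
      have := hm.2
      nlinarith [this]
    have hlow : -(2*h/α)*(C:ℝ) ≤ a (t+h) - a t := by
      refine le_of_tendsto_of_tendsto ((hN.neg).mul_const (C:ℝ)) hΔ ?_
      filter_upwards [hmain] with ε hm
      have := hm.1
      nlinarith [this]
    constructor
    · rw [le_div_iff₀ hh0]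
      have hring : -(2*h/α)*(C:ℝ) = -(2/α)*(C:ℝ)*h := by ring
      linarith
    · rw [div_le_iff₀ hh0]
      have hring : -(2*h/α)*(c:ℝ) = -(2/α)*(c:ℝ)*h := by ring
      linarith
  have main_bound : ∀ c C : ℤ, ∀ ρ : ℝ, 0 < ρ →
      (∀ p q : ℝ, |p - a t| < ρ → |q - b t| < ρ → (c:ℝ) ≤ Fxy α p q ∧ Fxy α p q ≤ C) →
      -(2/α)*C ≤ da ∧ da ≤ -(2/α)*c := by
    intro c C ρ hρ hF
    obtain ⟨h₀, hh₀, hbnd⟩ := slope_bound c C ρ hρ hF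
    have hmem : Set.Ioo (0:ℝ) h₀ ∈ nhdsWithin 0 (Set.Ioi (0:ℝ)) :=
      Ioo_mem_nhdsGT_of_mem ⟨le_refl 0, hh₀⟩
    constructor
    · exact ge_of_tendsto hquot (eventually_of_mem hmem (fun h hh => (hbnd h hh.1 hh.2).1))
    · exact le_of_tendsto hquot (eventually_of_mem hmem (fun h hh => (hbnd h hh.1 hh.2).2))
  -- δ-ρ from continuity
  have hδρ : ∀ δ : ℝ, 0 < δ → ∃ ρ : ℝ, 0 < ρ ∧
      ∀ p q : ℝ, |p - a t| < ρ → |q - b t| < ρ → |Fxy α p q - xv| < δ := by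
    intro δ hδ
    obtain ⟨ρ, hρ, hball⟩ := Metric.continuousAt_iff.1 hcont δ hδ
    refine ⟨ρ, hρ, fun p q hp hq => ?_⟩
    have hd : dist ((p, q) : ℝ × ℝ) (a t, b t) < ρ := by
      rw [Prod.dist_eq]
      exact max_lt (by simpa [Real.dist_eq] using hp) (by simpa [Real.dist_eq] using hq)
    have := hball hd
    rw [Real.dist_eq, hx_eq] at this
    exact this
  -- db identity helper
  have hid : ∀ r : ℝ, (2 * b t / (α * a t)) * r = ((2/α) * r) / (a t)^2 := by
    intro r
    rw [hbt_inv]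
    field_simp
  have hat2 : (0:ℝ) < (a t)^2 := by positivity
  by_cases hnat : ∃ nn : ℕ, xv = (nn : ℝ)
  · obtain ⟨nn, hnn⟩ := hnat
    obtain ⟨ρ, hρ, hF⟩ := hδρ (1/2) (by norm_num)
    have hFF : ∀ p q : ℝ, |p - a t| < ρ → |q - b t| < ρ →
        (((nn:ℤ) - 1 : ℤ) : ℝ) ≤ Fxy α p q ∧ Fxy α p q ≤ (((nn:ℤ) + 1 : ℤ) : ℝ) := by
      intro p q hp hq
      have h1 := hF p q hp hq
      rw [abs_lt, hnn] at h1
      push_cast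
      constructor <;> linarith [h1.1, h1.2]
    obtain ⟨h1, h2⟩ := main_bound ((nn:ℤ) - 1) ((nn:ℤ) + 1) ρ hρ hFF
    push_cast at h1 h2
    refine ⟨da, db, hda, hdb, fun hcon => absurd ⟨nn, hnn⟩ hcon, fun _ => ?_⟩
    constructor
    · rw [Set.mem_Icc, hnn]
      constructor <;> linarith
    · rw [Set.mem_Icc, hnn]
      constructor
      · rw [hid, hdb_def, div_le_div_iff₀ hat2 hat2]
        nlinarith
      · rw [hid, hdb_def, div_le_div_iff₀ hat2 hat2]
        nlinarith
  · have hxnotint : ∀ m : ℤ, xv ≠ (m : ℝ) := by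
      intro m hm
      have hm0 : (0:ℤ) ≤ m := by
        by_contra hcon
        push_neg at hcon
        have : (m:ℝ) ≤ -1 := by exact_mod_cast Int.le_sub_one_of_lt hcon
        rw [hm] at hxgt; linarith
      exact hnat ⟨m.toNat, by rw [hm]; exact_mod_cast (Int.toNat_of_nonneg hm0).symm⟩
    have hfl : (⌊xv⌋ : ℝ) < xv := (Int.floor_le xv).lt_of_ne (fun h => hxnotint ⌊xv⌋ h.symm)
    have hcl : xv < (⌈xv⌉ : ℝ) := (Int.le_ceil xv).lt_of_ne (hxnotint ⌈xv⌉)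
    have hδpos : 0 < min (xv - (⌊xv⌋:ℝ)) ((⌈xv⌉:ℝ) - xv) / 2 := by
      apply div_pos (lt_min (by linarith) (by linarith)) (by norm_num)
    obtain ⟨ρ, hρ, hF⟩ := hδρ _ hδpos
    have hFF : ∀ p q : ℝ, |p - a t| < ρ → |q - b t| < ρ →
        ((⌊xv⌋:ℤ) : ℝ) ≤ Fxy α p q ∧ Fxy α p q ≤ ((⌈xv⌉:ℤ) : ℝ) := by
      intro p q hp hq
      have h1 := hF p q hp hq
      rw [abs_lt] at h1
      have hm1 := min_le_left (xv - (⌊xv⌋:ℝ)) ((⌈xv⌉:ℝ) - xv)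
      have hm2 := min_le_right (xv - (⌊xv⌋:ℝ)) ((⌈xv⌉:ℝ) - xv)
      exact ⟨by linarith [h1.1, hm1, hfl], by linarith [h1.2, hm2, hcl]⟩
    obtain ⟨h1, h2⟩ := main_bound ⌊xv⌋ ⌈xv⌉ ρ hρ hFF
    refine ⟨da, db, hda, hdb, fun _ => ?_, fun hcon => absurd hcon hnat⟩
    constructor
    · exact ⟨h1, h2⟩
    · rw [Set.mem_Icc]
      constructor
      · rw [hid, hdb_def, div_le_div_iff₀ hat2 hat2]
        nlinarith
      · rw [hid, hdb_def, div_le_div_iff₀ hat2 hat2]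
        nlinarith
end
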